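/- arXiv:0906.3413 — 8 statements merged into one kernel-verified Lean document; each statement's English description precedes it below -/
import Mathlib

section
/- For a prime p > 3 and integers m ≥ 0, r ≥ 1, the central binomial coefficient satisfies C(2mp^r, mp^r) ≡ C(2mp^{r-1}, mp^{r-1}) (mod p^{3r}). -/
open Finset

/-- Expansion of a product `∏ (aᵢ + c)` when `c² = 0`. -/
lemma jac_prod_add_sq_zero {R : Type*} [CommRing R] (s : Finset ℕ) (a : ℕ → R) (c : R)
    (hc : c * c = 0) :
    ∏ i ∈ s, (a i + c) = (∏ i ∈ s, a i) + c * ∑ i ∈ s, ∏ j ∈ s.erase i, a j := by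
  classical
  induction s using Finset.induction_on with
  | empty => simp
  | @insert k s hks ih =>
    rw [prod_insert hks, prod_insert hks, sum_insert hks, ih, Finset.erase_insert hks]
    have h1 : ∀ i ∈ s, ∏ j ∈ (insert k s).erase i, a j = a k * ∏ j ∈ s.erase i, a j := by
      intro i hi
      rw [Finset.erase_insert_of_ne (fun h => hks (by rw [h]; exact hi)),
        prod_insert (fun h => hks (Finset.mem_of_mem_erase h))]
    rw [Finset.sum_congr rfl h1, ← Finset.mul_sum]
    linear_combination (∑ i ∈ s, ∏ j ∈ s.erase i, a j) * hc

/-- Sum of inverse squares of units of `ZMod n` vanishes when 2 and 3 are units. -/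
lemma jac_sum_unit_invsq (n : ℕ) [NeZero n] (h2 : IsUnit (2 : ZMod n))
    (h3 : IsUnit (3 : ZMod n)) :
    ∑ x : ZMod n, (if IsUnit x then (x⁻¹) ^ 2 else 0) = 0 := by
  classical
  set F : ZMod n → ZMod n := fun x => if IsUnit x then (x⁻¹) ^ 2 else 0 with hF
  have h2' : (2 : ZMod n) * 2⁻¹ = 1 := ZMod.mul_inv_of_unit _ h2
  have hbij : Function.Bijective (fun x : ZMod n => 2 * x) := by
    rw [Function.bijective_iff_has_inverse]
    refine ⟨fun y => 2⁻¹ * y, fun x => ?_, fun y => ?_⟩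
    · show 2⁻¹ * (2 * x) = x
      rw [← mul_assoc, mul_comm (2⁻¹ : ZMod n) 2, h2', one_mul]
    · show 2 * (2⁻¹ * y) = y
      rw [← mul_assoc, h2', one_mul]
  have hsum : ∑ x : ZMod n, F (2 * x) = ∑ x : ZMod n, F x :=
    Fintype.sum_bijective _ hbij _ _ (fun x => rfl)
  have hkey : ∀ x : ZMod n, F (2 * x) = (2⁻¹ : ZMod n) ^ 2 * F x := by
    intro x
    by_cases hx : IsUnit x
    · have hux : IsUnit ((2 : ZMod n) * x) := h2.mul hx
      have hx' := ZMod.mul_inv_of_unit _ hx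
      have hinv : ((2 : ZMod n) * x)⁻¹ = 2⁻¹ * x⁻¹ := by
        apply ZMod.inv_eq_of_mul_eq_one
        calc (2 * x) * (2⁻¹ * x⁻¹) = (2 * 2⁻¹) * (x * x⁻¹) := by ring
        _ = 1 := by rw [h2', hx', one_mul]
      simp only [hF, if_pos hx, if_pos hux, hinv]
      ring
    · have hux : ¬ IsUnit ((2 : ZMod n) * x) := fun h => hx (isUnit_of_mul_isUnit_right h)
      simp only [hF, if_neg hx, if_neg hux, mul_zero]
  have hS : ∑ x : ZMod n, F x = (2⁻¹ : ZMod n) ^ 2 * ∑ x : ZMod n, F x := by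
    conv_lhs => rw [← hsum]
    rw [Finset.sum_congr rfl (fun x _ => hkey x), ← Finset.mul_sum]
  have h3S : (3 : ZMod n) * ∑ x : ZMod n, F x = 0 := by
    have h4 : (4 : ZMod n) * ∑ x : ZMod n, F x = ∑ x : ZMod n, F x := by
      conv_lhs => rw [hS]
      calc (4 : ZMod n) * ((2⁻¹ : ZMod n) ^ 2 * ∑ x : ZMod n, F x)
          = (2 * 2⁻¹) ^ 2 * ∑ x : ZMod n, F x := by ring
      _ = ∑ x : ZMod n, F x := by rw [h2']; ring
    linear_combination h4
  have h3' : (3 : ZMod n)⁻¹ * 3 = 1 := ZMod.inv_mul_of_unit _ h3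
  calc ∑ x : ZMod n, F x = ((3 : ZMod n)⁻¹ * 3) * ∑ x : ZMod n, F x := by rw [h3', one_mul]
  _ = (3 : ZMod n)⁻¹ * ((3 : ZMod n) * ∑ x : ZMod n, F x) := by ring
  _ = 0 := by rw [h3S, mul_zero]

/-- Factorial factorization: `(t*p)! = p^t * t! * ∏ (k ≤ t*p, p ∤ k) k`. -/
lemma jac_factorial_split (p : ℕ) (hp : 0 < p) (t : ℕ) :
    Nat.factorial (t * p) =
      p ^ t * Nat.factorial t * ∏ k ∈ (Finset.Icc 1 (t * p)).filter (fun k => ¬ p ∣ k), k := by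
  classical
  have h0 : ∏ k ∈ Icc 1 (t * p), k = Nat.factorial (t * p) := by
    rw [← Finset.Ico_add_one_right_eq_Icc, Finset.prod_Ico_id_eq_factorial]
  rw [← h0, ← Finset.prod_filter_mul_prod_filter_not (Icc 1 (t * p)) (fun k => p ∣ k)
    (fun k => k)]
  congr 1
  have h1 : ∏ k ∈ (Icc 1 (t * p)).filter (fun k => p ∣ k), k = ∏ j ∈ Icc 1 t, p * j := by
    apply Finset.prod_nbij' (fun k => k / p) (fun j => p * j)
    · intro k hk
      obtain ⟨hk1, hkd⟩ := Finset.mem_filter.mp hk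
      obtain ⟨hk2, hk3⟩ := Finset.mem_Icc.mp hk1
      obtain ⟨d, rfl⟩ := hkd
      rw [Nat.mul_div_cancel_left d hp]
      refine Finset.mem_Icc.mpr ⟨?_, ?_⟩
      · exact Nat.pos_of_ne_zero (by rintro rfl; simp at hk2)
      · exact Nat.le_of_mul_le_mul_left (by rw [mul_comm t p] at hk3; exact hk3) hp
    · intro j hj
      obtain ⟨hj1, hj2⟩ := Finset.mem_Icc.mp hj
      refine Finset.mem_filter.mpr ⟨Finset.mem_Icc.mpr ⟨?_, ?_⟩, Dvd.intro j rfl⟩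
      · exact Nat.one_le_iff_ne_zero.mpr (by positivity)
      · calc p * j ≤ p * t := Nat.mul_le_mul_left p hj2
        _ = t * p := mul_comm p t
    · intro k hk
      exact Nat.mul_div_cancel' (Finset.mem_filter.mp hk).2
    · intro j _
      exact Nat.mul_div_cancel_left j hp
    · intro k hk
      exact (Nat.mul_div_cancel' (Finset.mem_filter.mp hk).2).symm
  rw [h1, Finset.prod_mul_distrib, Finset.prod_const, Nat.card_Icc]
  have h2 : ∏ j ∈ Icc 1 t, j = Nat.factorial t := by
    rw [← Finset.Ico_add_one_right_eq_Icc, Finset.prod_Ico_id_eq_factorial]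
  rw [h2]
  norm_num

/-- Pairing `k ↔ N - k` on the set of `k ≤ N` coprime to `p`. -/
@[to_additive]
lemma jac_pair_prod {M : Type*} [CommMonoid M] {p N : ℕ} (hp : p.Prime) (hp2 : 2 < p)
    (hpN : p ∣ N) (f : ℕ → M) :
    ∏ k ∈ (Icc 1 N).filter (fun k => ¬ p ∣ k), f k
      = ∏ k ∈ ((Icc 1 N).filter (fun k => ¬ p ∣ k)).filter (fun k => 2 * k < N),
          (f k * f (N - k)) := by
  classical
  rw [← Finset.prod_filter_mul_prod_filter_not ((Icc 1 N).filter (fun k => ¬ p ∣ k))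
    (fun k => 2 * k < N) f, Finset.prod_mul_distrib]
  congr 1
  apply Finset.prod_nbij' (fun k => N - k) (fun k => N - k)
  · intro a ha
    obtain ⟨ha1, ha2⟩ := Finset.mem_filter.mp ha
    obtain ⟨ha3, ha4⟩ := Finset.mem_filter.mp ha1
    obtain ⟨ha5, ha6⟩ := Finset.mem_Icc.mp ha3
    have haN : a ≠ N := fun h => ha4 (h ▸ hpN)
    have h2a : 2 * a ≠ N := by
      intro h
      rcases (Nat.Prime.dvd_mul hp).mp (h ▸ hpN) with h' | h'
      · have := Nat.le_of_dvd (by omega) h'; omega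
      · exact ha4 h'
    refine Finset.mem_filter.mpr ⟨Finset.mem_filter.mpr ⟨Finset.mem_Icc.mpr ⟨by omega, by omega⟩, ?_⟩, by omega⟩
    intro h
    have := Nat.dvd_sub hpN h
    rw [Nat.sub_sub_self ha6] at this
    exact ha4 this
  · intro a ha
    obtain ⟨ha1, ha2⟩ := Finset.mem_filter.mp ha
    obtain ⟨ha3, ha4⟩ := Finset.mem_filter.mp ha1
    obtain ⟨ha5, ha6⟩ := Finset.mem_Icc.mp ha3
    refine Finset.mem_filter.mpr ⟨Finset.mem_filter.mpr ⟨Finset.mem_Icc.mpr ⟨by omega, by omega⟩, ?_⟩, by omega⟩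
    intro h
    have := Nat.dvd_sub hpN h
    rw [Nat.sub_sub_self ha6] at this
    exact ha4 this
  · intro a ha
    obtain ⟨ha1, _⟩ := Finset.mem_filter.mp ha
    obtain ⟨ha3, _⟩ := Finset.mem_filter.mp ha1
    obtain ⟨_, ha6⟩ := Finset.mem_Icc.mp ha3
    omega
  · intro a ha
    obtain ⟨ha1, _⟩ := Finset.mem_filter.mp ha
    obtain ⟨ha3, _⟩ := Finset.mem_filter.mp ha1
    obtain ⟨_, ha6⟩ := Finset.mem_Icc.mp ha3
    omega
  · intro a ha
    obtain ⟨ha1, _⟩ := Finset.mem_filter.mp ha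
    obtain ⟨ha3, _⟩ := Finset.mem_filter.mp ha1
    obtain ⟨_, ha6⟩ := Finset.mem_Icc.mp ha3
    rw [Nat.sub_sub_self ha6]

/-- The sum of inverse squares over `k ≤ m p^r` coprime to `p` vanishes mod `p^r`. -/
lemma jac_sum_invsq_zero (p r m : ℕ) (hp : p.Prime) (hp3 : 3 < p) (hr : 1 ≤ r) :
    ∑ k ∈ (Icc 1 (m * p ^ r)).filter (fun k => ¬ p ∣ k),
      (((k : ZMod (p ^ r)))⁻¹) ^ 2 = 0 := by
  classical
  haveI : NeZero (p ^ r) := ⟨pow_ne_zero _ (by omega : p ≠ 0)⟩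
  set G : ℕ → ZMod (p ^ r) := fun k => if p ∣ k then 0 else (((k : ZMod (p ^ r)))⁻¹) ^ 2
    with hG
  have h1 : (∑ k ∈ (Icc 1 (m * p ^ r)).filter (fun k => ¬ p ∣ k),
      (((k : ZMod (p ^ r)))⁻¹) ^ 2) = ∑ k ∈ Icc 1 (m * p ^ r), G k := by
    rw [Finset.sum_filter]
    refine Finset.sum_congr rfl fun k _ => ?_
    by_cases hk : p ∣ k <;> simp [hG, hk]
  rw [h1]
  have h2 : ∑ k ∈ Icc 1 (m * p ^ r), G k = ∑ k ∈ range (m * p ^ r), G k := by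
    have e1 : ∑ k ∈ range (m * p ^ r + 1), G k = ∑ k ∈ Icc 1 (m * p ^ r), G k := by
      rw [Finset.range_eq_Ico, ← Finset.Ico_add_one_right_eq_Icc,
        ← Finset.sum_Ico_consecutive G (by omega : (0:ℕ) ≤ 1) (by omega : 1 ≤ m * p ^ r + 1)]
      have h0 : ∑ k ∈ Ico 0 1, G k = 0 := by simp [hG]
      rw [h0, zero_add]
    have e2 : ∑ k ∈ range (m * p ^ r + 1), G k = ∑ k ∈ range (m * p ^ r), G k := by
      rw [Finset.sum_range_succ]
      have hdN : p ∣ m * p ^ r := Dvd.dvd.mul_left (dvd_pow_self p (by omega)) m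
      have h0 : G (m * p ^ r) = 0 := by simp [hG, hdN]
      rw [h0, add_zero]
    rw [← e1, e2]
  rw [h2]
  have hGper : ∀ a k, G (a * p ^ r + k) = G k := by
    intro a k
    have hd : p ∣ a * p ^ r := Dvd.dvd.mul_left (dvd_pow_self p (by omega)) a
    by_cases hk : p ∣ k
    · simp [hG, hk, hd.add hk]
    · have hnd : ¬ p ∣ (a * p ^ r + k) := fun h => hk ((Nat.dvd_add_right hd).mp h)
      have hcast : ((a * p ^ r + k : ℕ) : ZMod (p ^ r)) = (k : ZMod (p ^ r)) := by
        have hz : ((p ^ r : ℕ) : ZMod (p ^ r)) = 0 := ZMod.natCast_self _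
        push_cast
        push_cast at hz
        rw [hz]
        ring
      simp [hG, hk, hnd, hcast]
  have h5 : ∀ j : ℕ, ∑ k ∈ range (j * p ^ r), G k = j * ∑ k ∈ range (p ^ r), G k := by
    intro j
    induction j with
    | zero => simp
    | succ i ih =>
      have e : (i + 1) * p ^ r = i * p ^ r + p ^ r := by ring
      rw [e, Finset.sum_range_add, ih, Finset.sum_congr rfl (fun k _ => hGper i k)]
      push_cast
      ring
  rw [h5 m]
  have hT : ∑ k ∈ range (p ^ r), G k = 0 := by
    have hGF : ∀ k : ℕ, G k
        = (fun x : ZMod (p ^ r) => if IsUnit x then (x⁻¹) ^ 2 else 0) ((k : ZMod (p ^ r))) := by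
      intro k
      have hiu : IsUnit ((k : ZMod (p ^ r))) ↔ ¬ p ∣ k := by
        rw [ZMod.isUnit_iff_coprime, Nat.coprime_pow_right_iff (by omega : 0 < r),
          Nat.coprime_comm]
        exact hp.coprime_iff_not_dvd
      by_cases hk : p ∣ k
      · simp only [hG]
        rw [if_pos hk, if_neg (fun h => (hiu.mp h) hk)]
      · simp only [hG]
        rw [if_neg hk, if_pos (hiu.mpr hk)]
    rw [Finset.sum_congr rfl (fun k _ => hGF k)]
    have hbr : ∑ k ∈ range (p ^ r),
        (fun x : ZMod (p ^ r) => if IsUnit x then (x⁻¹) ^ 2 else 0) ((k : ZMod (p ^ r)))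
        = ∑ x : ZMod (p ^ r), (if IsUnit x then (x⁻¹) ^ 2 else 0) := by
      apply Finset.sum_nbij' (fun k => ((k : ℕ) : ZMod (p ^ r))) (fun x => x.val)
      · intro k _; exact Finset.mem_univ _
      · intro x _; exact Finset.mem_range.mpr (ZMod.val_lt x)
      · intro k hk; exact ZMod.val_cast_of_lt (Finset.mem_range.mp hk)
      · intro x _; exact ZMod.natCast_rightInverse x
      · intro k _; rfl
    rw [hbr]
    have hd2 : ¬ p ∣ 2 := fun h => by have := Nat.le_of_dvd (by omega) h; omega
    have hd3 : ¬ p ∣ 3 := fun h => by have := Nat.le_of_dvd (by omega) h; omega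
    have h2u : IsUnit (2 : ZMod (p ^ r)) := by
      have h' : IsUnit ((2 : ℕ) : ZMod (p ^ r)) := (ZMod.isUnit_iff_coprime 2 (p ^ r)).mpr
        (Nat.Coprime.pow_right _ (Nat.coprime_comm.mp (hp.coprime_iff_not_dvd.mpr hd2)))
      simpa using h'
    have h3u : IsUnit (3 : ZMod (p ^ r)) := by
      have h' : IsUnit ((3 : ℕ) : ZMod (p ^ r)) := (ZMod.isUnit_iff_coprime 3 (p ^ r)).mpr
        (Nat.Coprime.pow_right _ (Nat.coprime_comm.mp (hp.coprime_iff_not_dvd.mpr hd3)))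
      simpa using h'
    exact jac_sum_unit_invsq (p ^ r) h2u h3u
  rw [hT, mul_zero]

/-- Half-set version. -/
lemma jac_sum_invsq_half (p r m : ℕ) (hp : p.Prime) (hp3 : 3 < p) (hr : 1 ≤ r) :
    ∑ k ∈ ((Icc 1 (m * p ^ r)).filter (fun k => ¬ p ∣ k)).filter
        (fun k => 2 * k < m * p ^ r),
      (((k : ZMod (p ^ r)))⁻¹) ^ 2 = 0 := by
  classical
  haveI : NeZero (p ^ r) := ⟨pow_ne_zero _ (by omega : p ≠ 0)⟩
  have hpN : p ∣ m * p ^ r := Dvd.dvd.mul_left (dvd_pow_self p (by omega)) m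
  have hNQ : ((m * p ^ r : ℕ) : ZMod (p ^ r)) = 0 := by
    rw [ZMod.natCast_eq_zero_iff]
    exact dvd_mul_left (p ^ r) m
  set f : ℕ → ZMod (p ^ r) := fun k => (((k : ZMod (p ^ r)))⁻¹) ^ 2 with hf
  have hpair := jac_pair_sum (M := ZMod (p ^ r)) hp (by omega) hpN f
  have hmem : ∀ j ∈ ((Icc 1 (m * p ^ r)).filter (fun k => ¬ p ∣ k)).filter
      (fun k => 2 * k < m * p ^ r), (1 ≤ j ∧ j ≤ m * p ^ r) ∧ ¬ p ∣ j := by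
    intro j hj
    have h1 := Finset.mem_filter.mp hj
    have h2 := Finset.mem_filter.mp h1.1
    exact ⟨Finset.mem_Icc.mp h2.1, h2.2⟩
  have hjunit : ∀ j : ℕ, ¬ p ∣ j → IsUnit ((j : ZMod (p ^ r))) := by
    intro j hj
    exact (ZMod.isUnit_iff_coprime j (p ^ r)).mpr
      (Nat.Coprime.pow_right _ (Nat.coprime_comm.mp (hp.coprime_iff_not_dvd.mpr hj)))
  have hfNk : ∀ k ∈ ((Icc 1 (m * p ^ r)).filter (fun k => ¬ p ∣ k)).filter
      (fun k => 2 * k < m * p ^ r), f (m * p ^ r - k) = f k := by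
    intro k hk
    obtain ⟨⟨hk1, hkN⟩, hkp⟩ := hmem k hk
    have hcast : ((m * p ^ r - k : ℕ) : ZMod (p ^ r)) = -(k : ZMod (p ^ r)) := by
      rw [Nat.cast_sub hkN, hNQ, zero_sub]
    have hinv : (-(k : ZMod (p ^ r)))⁻¹ = -((k : ZMod (p ^ r))⁻¹) := by
      apply ZMod.inv_eq_of_mul_eq_one
      have h1 := ZMod.mul_inv_of_unit _ (hjunit k hkp)
      calc (-(k : ZMod (p ^ r))) * (-((k : ZMod (p ^ r))⁻¹))
          = (k : ZMod (p ^ r)) * (k : ZMod (p ^ r))⁻¹ := by ring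
      _ = 1 := h1
    simp only [hf]
    rw [hcast, hinv]
    ring
  have h2sum : ∑ k ∈ (Icc 1 (m * p ^ r)).filter (fun k => ¬ p ∣ k), f k
      = 2 * ∑ k ∈ ((Icc 1 (m * p ^ r)).filter (fun k => ¬ p ∣ k)).filter
          (fun k => 2 * k < m * p ^ r), f k := by
    have hcg : ∀ k ∈ ((Icc 1 (m * p ^ r)).filter (fun k => ¬ p ∣ k)).filter
        (fun k => 2 * k < m * p ^ r), f k + f (m * p ^ r - k) = f k + f k :=
      fun k hk => by rw [hfNk k hk]
    rw [hpair, Finset.sum_congr rfl hcg, Finset.sum_add_distrib, ← two_mul]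
  have hz' : ∑ k ∈ (Icc 1 (m * p ^ r)).filter (fun k => ¬ p ∣ k), f k = 0 :=
    jac_sum_invsq_zero p r m hp hp3 hr
  have h2u : IsUnit (2 : ZMod (p ^ r)) := by
    have hd2 : ¬ p ∣ 2 := fun h => by have := Nat.le_of_dvd (by omega) h; omega
    have h' : IsUnit ((2 : ℕ) : ZMod (p ^ r)) := (ZMod.isUnit_iff_coprime 2 (p ^ r)).mpr
      (Nat.Coprime.pow_right _ (Nat.coprime_comm.mp (hp.coprime_iff_not_dvd.mpr hd2)))
    simpa using h'
  have h2Q : (2 : ZMod (p ^ r))⁻¹ * 2 = 1 := ZMod.inv_mul_of_unit _ h2u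
  have key : (2 : ZMod (p ^ r)) * ∑ k ∈ ((Icc 1 (m * p ^ r)).filter (fun k => ¬ p ∣ k)).filter
      (fun k => 2 * k < m * p ^ r), f k = 0 := by
    rw [← h2sum]
    exact hz'
  have h1 := congrArg (fun x => (2 : ZMod (p ^ r))⁻¹ * x) key
  simp only [mul_zero] at h1
  rwa [← mul_assoc, h2Q, one_mul] at h1

/-- The key congruence between the two filtered products mod `p^(3r)`. -/
lemma jac_BW (p r m : ℕ) (hp : p.Prime) (hp3 : 3 < p) (hr : 1 ≤ r) :
    ((∏ k ∈ (Icc 1 (m * p ^ r)).filter (fun k => ¬ p ∣ k), (m * p ^ r + k) : ℕ)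
        : ZMod (p ^ (3 * r)))
      = ((∏ k ∈ (Icc 1 (m * p ^ r)).filter (fun k => ¬ p ∣ k), k : ℕ)
        : ZMod (p ^ (3 * r))) := by
  classical
  haveI : NeZero (p ^ (3 * r)) := ⟨pow_ne_zero _ (by omega : p ≠ 0)⟩
  haveI : NeZero (p ^ r) := ⟨pow_ne_zero _ (by omega : p ≠ 0)⟩
  have hpN : p ∣ m * p ^ r := Dvd.dvd.mul_left (dvd_pow_self p (by omega)) m
  set N := m * p ^ r with hN
  set s1 := ((Icc 1 N).filter (fun k => ¬ p ∣ k)).filter (fun k => 2 * k < N) with hs1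
  have hmem : ∀ j ∈ s1, (1 ≤ j ∧ j ≤ N) ∧ ¬ p ∣ j := by
    intro j hj
    have h1 := Finset.mem_filter.mp hj
    have h2 := Finset.mem_filter.mp h1.1
    exact ⟨Finset.mem_Icc.mp h2.1, h2.2⟩
  have hpairB : ∏ k ∈ (Icc 1 N).filter (fun k => ¬ p ∣ k), (N + k)
      = ∏ k ∈ s1, ((N + k) * (N + (N - k))) :=
    jac_pair_prod hp (by omega) hpN (fun k => N + k)
  have hpairW : ∏ k ∈ (Icc 1 N).filter (fun k => ¬ p ∣ k), k
      = ∏ k ∈ s1, (k * (N - k)) :=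
    jac_pair_prod hp (by omega) hpN (fun k => k)
  have hterm : ∀ k ∈ s1, (N + k) * (N + (N - k)) = k * (N - k) + 2 * N ^ 2 := by
    intro k hk
    obtain ⟨⟨hk1, hkN⟩, _⟩ := hmem k hk
    obtain ⟨d, hd⟩ := Nat.exists_eq_add_of_le hkN
    rw [hd, Nat.add_sub_cancel_left]
    ring
  rw [hpairB, hpairW, Nat.cast_prod, Nat.cast_prod]
  have hBcast : ∏ k ∈ s1, (((N + k) * (N + (N - k)) : ℕ) : ZMod (p ^ (3 * r)))
      = ∏ k ∈ s1, ((((k * (N - k) : ℕ)) : ZMod (p ^ (3 * r)))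
          + ((2 * N ^ 2 : ℕ) : ZMod (p ^ (3 * r)))) := by
    refine Finset.prod_congr rfl fun k hk => ?_
    rw [hterm k hk]
    push_cast
    ring
  rw [hBcast]
  have h3r : p ^ (3 * r) = (p ^ r) ^ 3 := by rw [← pow_mul, mul_comm]
  have hc2 : ((2 * N ^ 2 : ℕ) : ZMod (p ^ (3 * r))) * ((2 * N ^ 2 : ℕ) : ZMod (p ^ (3 * r)))
      = 0 := by
    rw [← Nat.cast_mul, ZMod.natCast_eq_zero_iff]
    refine dvd_trans (pow_dvd_pow p (by omega : 3 * r ≤ 4 * r)) ⟨4 * m ^ 4, ?_⟩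
    have h4r : p ^ (4 * r) = (p ^ r) ^ 4 := by rw [← pow_mul, mul_comm]
    rw [hN, h4r]
    ring
  rw [jac_prod_add_sq_zero s1 _ _ hc2]
  have hjunit : ∀ j : ℕ, ¬ p ∣ j → IsUnit ((j : ZMod (p ^ r))) := by
    intro j hj
    exact (ZMod.isUnit_iff_coprime j (p ^ r)).mpr
      (Nat.Coprime.pow_right _ (Nat.coprime_comm.mp (hp.coprime_iff_not_dvd.mpr hj)))
  have hcS : ((2 * N ^ 2 : ℕ) : ZMod (p ^ (3 * r)))
      * (∑ k ∈ s1, ∏ j ∈ s1.erase k, (((j * (N - j) : ℕ)) : ZMod (p ^ (3 * r)))) = 0 := by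
    set S := ∑ k ∈ s1, ∏ j ∈ s1.erase k, (((j * (N - j) : ℕ)) : ZMod (p ^ (3 * r))) with hS
    set φ := ZMod.castHom (pow_dvd_pow p (by omega : r ≤ 3 * r)) (ZMod (p ^ r)) with hφ
    have hNQ : ((N : ℕ) : ZMod (p ^ r)) = 0 := by
      rw [ZMod.natCast_eq_zero_iff, hN]
      exact dvd_mul_left _ _
    have hb : ∀ j ∈ s1, ((j * (N - j) : ℕ) : ZMod (p ^ r)) = -((j : ZMod (p ^ r))) ^ 2 := by
      intro j hj
      obtain ⟨⟨hj1, hjN⟩, hjp⟩ := hmem j hj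
      rw [Nat.cast_mul, Nat.cast_sub hjN, hNQ]
      ring
    have hbinv : ∀ j ∈ s1, (-((j : ZMod (p ^ r))) ^ 2)⁻¹ = -(((j : ZMod (p ^ r))⁻¹) ^ 2) := by
      intro j hj
      apply ZMod.inv_eq_of_mul_eq_one
      have h1 := ZMod.mul_inv_of_unit _ (hjunit j (hmem j hj).2)
      calc (-((j : ZMod (p ^ r))) ^ 2) * (-(((j : ZMod (p ^ r))⁻¹) ^ 2))
          = ((j : ZMod (p ^ r)) * (j : ZMod (p ^ r))⁻¹) ^ 2 := by ring
      _ = 1 := by rw [h1, one_pow]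
    have hφS : φ S = 0 := by
      rw [hS, map_sum]
      have hterm2 : ∀ k ∈ s1, φ (∏ j ∈ s1.erase k, (((j * (N - j) : ℕ)) : ZMod (p ^ (3 * r))))
          = (∏ j ∈ s1, (-((j : ZMod (p ^ r))) ^ 2)) * (-(((k : ZMod (p ^ r))⁻¹) ^ 2)) := by
        intro k hk
        rw [map_prod]
        have e : ∀ j ∈ s1.erase k,
            φ (((j * (N - j) : ℕ)) : ZMod (p ^ (3 * r))) = -((j : ZMod (p ^ r))) ^ 2 :=
          fun j hj => by rw [map_natCast, hb j (Finset.mem_of_mem_erase hj)]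
        rw [Finset.prod_congr rfl e]
        have hpe := Finset.prod_erase_mul s1 (fun j => -((j : ZMod (p ^ r))) ^ 2) hk
        have hbk : IsUnit (-((k : ZMod (p ^ r))) ^ 2) := ((hjunit k (hmem k hk).2).pow 2).neg
        calc ∏ j ∈ s1.erase k, -((j : ZMod (p ^ r))) ^ 2
            = (∏ j ∈ s1.erase k, -((j : ZMod (p ^ r))) ^ 2)
              * ((-((k : ZMod (p ^ r))) ^ 2) * (-((k : ZMod (p ^ r))) ^ 2)⁻¹) := by
              rw [ZMod.mul_inv_of_unit _ hbk, mul_one]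
        _ = ((∏ j ∈ s1.erase k, -((j : ZMod (p ^ r))) ^ 2) * (-((k : ZMod (p ^ r))) ^ 2))
              * (-((k : ZMod (p ^ r))) ^ 2)⁻¹ := by ring
        _ = (∏ j ∈ s1, -((j : ZMod (p ^ r))) ^ 2) * (-((k : ZMod (p ^ r))) ^ 2)⁻¹ := by
              rw [hpe]
        _ = (∏ j ∈ s1, -((j : ZMod (p ^ r))) ^ 2) * (-(((k : ZMod (p ^ r))⁻¹) ^ 2)) := by
              rw [hbinv k hk]
      rw [Finset.sum_congr rfl hterm2, ← Finset.mul_sum]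
      have hzz : ∑ k ∈ s1, (-(((k : ZMod (p ^ r))⁻¹) ^ 2)) = 0 := by
        rw [Finset.sum_neg_distrib, hs1, hN, jac_sum_invsq_half p r m hp hp3 hr, neg_zero]
      rw [hzz, mul_zero]
    have hSval : p ^ r ∣ S.val := by
      have h2 : ((S.val : ℕ) : ZMod (p ^ (3 * r))) = S := ZMod.natCast_rightInverse S
      have h1 : ((S.val : ℕ) : ZMod (p ^ r)) = 0 := by
        calc ((S.val : ℕ) : ZMod (p ^ r))
            = φ (((S.val : ℕ)) : ZMod (p ^ (3 * r))) := (map_natCast φ _).symm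
        _ = φ S := by rw [h2]
        _ = 0 := hφS
      rwa [ZMod.natCast_eq_zero_iff] at h1
    obtain ⟨t, ht⟩ := hSval
    have hSe : S = ((p ^ r * t : ℕ) : ZMod (p ^ (3 * r))) := by
      rw [← ht]
      exact (ZMod.natCast_rightInverse S).symm
    rw [hSe, ← Nat.cast_mul, ZMod.natCast_eq_zero_iff]
    exact ⟨2 * m ^ 2 * t, by rw [hN, h3r]; ring⟩
  rw [hcS, add_zero]

theorem central_binom_supercongruence (p : ℕ) (hp : p.Prime) (hp3 : 3 < p)
    (m r : ℕ) (hr : 1 ≤ r) :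
    Nat.choose (2 * m * p ^ r) (m * p ^ r) ≡
      Nat.choose (2 * m * p ^ (r - 1)) (m * p ^ (r - 1)) [MOD p ^ (3 * r)] := by
  classical
  have hp0 : 0 < p := hp.pos
  obtain ⟨n, hn⟩ : ∃ n, n = m * p ^ (r - 1) := ⟨_, rfl⟩
  have hrr : p ^ r = p ^ (r - 1) * p := by
    rw [← pow_succ]
    congr 1
    omega
  have e0 : 2 * m * p ^ r = 2 * n * p := by rw [hn, hrr]; ring
  have e1 : m * p ^ r = n * p := by rw [hn, hrr]; ring
  have e2 : 2 * m * p ^ (r - 1) = 2 * n := by rw [hn]; ring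
  have e3 : m * p ^ (r - 1) = n := hn.symm
  rw [e0, e1, e2, e3]
  set N := n * p with hN
  have e4 : 2 * n * p = 2 * N := by rw [hN]; ring
  rw [e4]
  set W := ∏ k ∈ (Icc 1 N).filter (fun k => ¬ p ∣ k), k with hW
  set B := ∏ k ∈ (Icc 1 N).filter (fun k => ¬ p ∣ k), (N + k) with hB
  have hpN : p ∣ N := by rw [hN]; exact dvd_mul_left p n
  have hfacN : Nat.factorial N = p ^ n * Nat.factorial n * W := by
    rw [hW, hN]
    exact jac_factorial_split p hp0 n
  have hfac2N : Nat.factorial (2 * N) = p ^ (2 * n) * Nat.factorial (2 * n)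
      * ∏ k ∈ (Icc 1 (2 * N)).filter (fun k => ¬ p ∣ k), k := by
    have h := jac_factorial_split p hp0 (2 * n)
    rw [e4] at h
    exact h
  have hW2 : (∏ k ∈ (Icc 1 (2 * N)).filter (fun k => ¬ p ∣ k), k) = W * B := by
    rw [hW, hB]
    have hu : Icc 1 (2 * N) = Icc 1 N ∪ Icc (N + 1) (2 * N) := by
      apply Finset.ext
      intro x
      simp only [Finset.mem_Icc, Finset.mem_union]
      omega
    have hdisj : Disjoint ((Icc 1 N).filter (fun k => ¬ p ∣ k))
        ((Icc (N + 1) (2 * N)).filter (fun k => ¬ p ∣ k)) := by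
      apply Finset.disjoint_filter_filter
      rw [Finset.disjoint_left]
      intro a ha hb
      have h1 := Finset.mem_Icc.mp ha
      have h2 := Finset.mem_Icc.mp hb
      omega
    rw [hu, Finset.filter_union, Finset.prod_union hdisj]
    congr 1
    apply Finset.prod_nbij' (fun k => k - N) (fun k => N + k)
    · intro k hk
      obtain ⟨hk1, hk2⟩ := Finset.mem_filter.mp hk
      obtain ⟨hk3, hk4⟩ := Finset.mem_Icc.mp hk1
      refine Finset.mem_filter.mpr ⟨Finset.mem_Icc.mpr ⟨by omega, by omega⟩, ?_⟩
      intro h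
      apply hk2
      have h' := h.add hpN
      rwa [Nat.sub_add_cancel (by omega : N ≤ k)] at h'
    · intro k hk
      obtain ⟨hk1, hk2⟩ := Finset.mem_filter.mp hk
      obtain ⟨hk3, hk4⟩ := Finset.mem_Icc.mp hk1
      refine Finset.mem_filter.mpr ⟨Finset.mem_Icc.mpr ⟨by omega, by omega⟩, ?_⟩
      exact fun h => hk2 ((Nat.dvd_add_right hpN).mp h)
    · intro k hk
      have := Finset.mem_Icc.mp (Finset.mem_filter.mp hk).1
      omega
    · intro k hk
      have := Finset.mem_Icc.mp (Finset.mem_filter.mp hk).1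
      omega
    · intro k hk
      have := Finset.mem_Icc.mp (Finset.mem_filter.mp hk).1
      omega
  have hchoose1 : Nat.choose (2 * N) N * (Nat.factorial N * Nat.factorial N)
      = Nat.factorial (2 * N) := by
    have h := Nat.choose_mul_factorial_mul_factorial (show N ≤ 2 * N by omega)
    rw [show 2 * N - N = N from by omega] at h
    rw [← h]
    ring
  have hchoose2 : Nat.choose (2 * n) n * (Nat.factorial n * Nat.factorial n)
      = Nat.factorial (2 * n) := by
    have h := Nat.choose_mul_factorial_mul_factorial (show n ≤ 2 * n by omega)
    rw [show 2 * n - n = n from by omega] at h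
    rw [← h]
    ring
  have hWpos : 0 < W := by
    rw [hW]
    apply Finset.prod_pos
    intro k hk
    have := Finset.mem_Icc.mp (Finset.mem_filter.mp hk).1
    omega
  have key : (Nat.choose (2 * N) N * W) * (p ^ (2 * n) * (Nat.factorial n * Nat.factorial n) * W)
      = (Nat.choose (2 * n) n * B)
        * (p ^ (2 * n) * (Nat.factorial n * Nat.factorial n) * W) := by
    calc (Nat.choose (2 * N) N * W) * (p ^ (2 * n) * (Nat.factorial n * Nat.factorial n) * W)
        = Nat.choose (2 * N) N
          * ((p ^ n * Nat.factorial n * W) * (p ^ n * Nat.factorial n * W)) := by ring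
    _ = Nat.choose (2 * N) N * (Nat.factorial N * Nat.factorial N) := by rw [← hfacN]
    _ = Nat.factorial (2 * N) := hchoose1
    _ = p ^ (2 * n) * Nat.factorial (2 * n) * (W * B) := by rw [hfac2N, hW2]
    _ = p ^ (2 * n) * (Nat.choose (2 * n) n * (Nat.factorial n * Nat.factorial n))
          * (W * B) := by rw [hchoose2]
    _ = (Nat.choose (2 * n) n * B)
          * (p ^ (2 * n) * (Nat.factorial n * Nat.factorial n) * W) := by ring
  have hkey : Nat.choose (2 * N) N * W = Nat.choose (2 * n) n * B :=
    Nat.eq_of_mul_eq_mul_right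
      (Nat.mul_pos (Nat.mul_pos (pow_pos hp0 _)
        (Nat.mul_pos (Nat.factorial_pos n) (Nat.factorial_pos n))) hWpos) key
  haveI : NeZero (p ^ (3 * r)) := ⟨pow_ne_zero _ (by omega : p ≠ 0)⟩
  have hBW : ((B : ℕ) : ZMod (p ^ (3 * r))) = ((W : ℕ) : ZMod (p ^ (3 * r))) := by
    rw [hB, hW, ← e1]
    exact jac_BW p r m hp hp3 hr
  have hWunit : IsUnit ((W : ℕ) : ZMod (p ^ (3 * r))) := by
    rw [ZMod.isUnit_iff_coprime]
    apply Nat.Coprime.pow_right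
    rw [hW]
    apply Nat.Coprime.prod_left
    intro k hk
    exact Nat.coprime_comm.mp (hp.coprime_iff_not_dvd.mpr (Finset.mem_filter.mp hk).2)
  have hcast : ((Nat.choose (2 * N) N : ℕ) : ZMod (p ^ (3 * r)))
      = ((Nat.choose (2 * n) n : ℕ) : ZMod (p ^ (3 * r))) := by
    have h := congrArg (fun x : ℕ => ((x : ℕ) : ZMod (p ^ (3 * r)))) hkey
    push_cast at h
    rw [hBW] at h
    exact hWunit.mul_right_cancel h
  exact (ZMod.natCast_eq_natCast_iff _ _ _).mp hcast
end

section
/- Let p > 3 be prime and j a positive integer with j not congruent to 0 mod (p-1). Then for any positive integers m, r, the sum S_j(mp^r) = Σ_{1 ≤ i ≤ mp^r, p ∤ i} 1/i^j, viewed as a p-adic number (or p-integral rational), satisfies S_j(mp^r) ≡ 0 (mod p^r). -/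
open Finset

private lemma eq_of_two_mul_eq_one {M : Type*} [CommMonoid M] {b c x : M}
    (hb : b * x = 1) (hc : c * x = 1) : b = c := by
  calc b = b * (c * x) := by rw [hc, mul_one]
    _ = c * (b * x) := by rw [mul_left_comm]
    _ = c := by rw [hb, mul_one]

private lemma isUnit_zmod_iff {p r : ℕ} (hp : p.Prime) (hr : 1 ≤ r) (i : ℕ) :
    IsUnit ((i : ℕ) : ZMod (p ^ r)) ↔ ¬ p ∣ i := by
  rw [ZMod.isUnit_iff_coprime, Nat.coprime_pow_right_iff (by omega),
    Nat.coprime_comm, hp.coprime_iff_not_dvd]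

private lemma isUnit_of_pi_ne_zero {p r : ℕ} (hp : p.Prime) (hr : 1 ≤ r)
    (hpr : p ∣ p ^ r) (z : ZMod (p ^ r))
    (h : ZMod.castHom hpr (ZMod p) z ≠ 0) : IsUnit z := by
  haveI : NeZero (p ^ r) := ⟨pow_ne_zero r hp.pos.ne'⟩
  have hz : ((z.val : ℕ) : ZMod (p ^ r)) = z := ZMod.natCast_zmod_val z
  have h2 : ((z.val : ℕ) : ZMod p) ≠ 0 := by
    rwa [← map_natCast (ZMod.castHom hpr (ZMod p)), hz]
  have h3 : ¬ p ∣ z.val := fun hd => h2 ((ZMod.natCast_eq_zero_iff _ _).mpr hd)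
  rw [← hz]
  exact (isUnit_zmod_iff hp hr _).mpr h3

private lemma units_sum_zero {p : ℕ} (r j : ℕ) (hp : p.Prime) (hr : 1 ≤ r)
    (hjmod : ¬ (p - 1) ∣ j) [NeZero (p ^ r)] :
    ∑ u : (ZMod (p ^ r))ˣ, (((u⁻¹ : (ZMod (p ^ r))ˣ) : ZMod (p ^ r))) ^ j = 0 := by
  haveI : Fact p.Prime := ⟨hp⟩
  obtain ⟨g, hg⟩ := IsCyclic.exists_generator (α := (ZMod p)ˣ)
  have hog : orderOf g = p - 1 := by
    rw [orderOf_eq_card_of_forall_mem_zpowers hg, Nat.card_eq_fintype_card, ZMod.card_units]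
  have hpr : p ∣ p ^ r := dvd_pow_self p (by omega)
  obtain ⟨c, hc⟩ := ZMod.unitsMap_surjective hpr g
  set S := ∑ u : (ZMod (p ^ r))ˣ, (((u⁻¹ : (ZMod (p ^ r))ˣ) : ZMod (p ^ r))) ^ j with hS
  set d : ZMod (p ^ r) := ((c⁻¹ : (ZMod (p ^ r))ˣ) : ZMod (p ^ r)) ^ j with hd
  have key : d * S = S := by
    rw [hS, Finset.mul_sum]
    refine Fintype.sum_equiv (Equiv.mulLeft c) _ _ ?_
    intro u
    simp only [Equiv.coe_mulLeft, mul_inv_rev, Units.val_mul, mul_pow, hd]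
    ring
  have hzero : (1 - d) * S = 0 := by
    rw [sub_mul, one_mul, key, sub_self]
  have hπc : (ZMod.castHom hpr (ZMod p)) ((c⁻¹ : (ZMod (p ^ r))ˣ) : ZMod (p ^ r))
      = ((g⁻¹ : (ZMod p)ˣ) : ZMod p) := by
    have : ZMod.unitsMap hpr c⁻¹ = g⁻¹ := by rw [map_inv, hc]
    have := congrArg (Units.val) this
    rwa [ZMod.unitsMap_def, Units.coe_map] at this
  have hne : (1 : ZMod p) - ((g⁻¹ : (ZMod p)ˣ) : ZMod p) ^ j ≠ 0 := by
    intro h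
    rw [sub_eq_zero] at h
    have hu : (g⁻¹) ^ j = 1 := by
      ext
      rw [Units.val_pow_eq_pow_val, ← h, Units.val_one]
    have := orderOf_dvd_of_pow_eq_one hu
    rw [orderOf_inv, hog] at this
    exact hjmod this
  have hunit : IsUnit (1 - d) := by
    apply isUnit_of_pi_ne_zero hp hr hpr
    rw [map_sub, map_one, hd, map_pow, hπc]
    exact hne
  have := hunit.mul_right_eq_zero.mp hzero
  exact this

private lemma sum_range_add' {M : Type*} [AddCommMonoid M] (f : ℕ → M) (a b : ℕ) :
    ∑ i ∈ range (a + b), f i = (∑ i ∈ range a, f i) + ∑ i ∈ range b, f (a + i) := by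
  induction b with
  | zero => simp
  | succ b ih =>
    rw [← Nat.add_assoc, Finset.sum_range_succ, ih, Finset.sum_range_succ, add_assoc]

private lemma sum_range_mul_periodic {M : Type*} [AddCommMonoid M] (f : ℕ → M) (n : ℕ)
    (hf : ∀ i, f (i + n) = f i) (m : ℕ) :
    ∑ i ∈ range (m * n), f i = m • ∑ i ∈ range n, f i := by
  have haux : ∀ t i, f (i + t * n) = f i := by
    intro t
    induction t with
    | zero => simp
    | succ t ih => intro i; rw [Nat.succ_mul, ← Nat.add_assoc, hf, ih]
  induction m with
  | zero => simp
  | succ m ih =>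
    rw [Nat.succ_mul, sum_range_add' f (m * n) n, ih, succ_nsmul]
    congr 1
    exact Finset.sum_congr rfl fun i _ => by rw [Nat.add_comm (m * n) i, haux]

private lemma sum_range_cast_zmod {M : Type*} [AddCommMonoid M] (n : ℕ) [NeZero n]
    (f : ZMod n → M) : ∑ i ∈ range n, f ((i : ℕ) : ZMod n) = ∑ z : ZMod n, f z := by
  apply Finset.sum_nbij' (i := fun i => ((i : ℕ) : ZMod n)) (j := fun z => z.val)
  · intro a _; exact Finset.mem_univ _
  · intro z _; exact Finset.mem_range.mpr z.val_lt
  · intro a ha; exact ZMod.val_cast_of_lt (Finset.mem_range.mp ha)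
  · intro z _; exact ZMod.natCast_zmod_val z
  · intro a _; rfl

private lemma sum_univ_isUnit {n : ℕ} [NeZero n] (f : ZMod n → ZMod n) :
    ∑ z : ZMod n, (if IsUnit z then f z else 0) = ∑ u : (ZMod n)ˣ, f u := by
  rw [← Finset.sum_filter]
  symm
  apply Finset.sum_nbij' (i := fun (u : (ZMod n)ˣ) => (u : ZMod n))
    (j := fun z => if h : IsUnit z then h.unit else 1)
  · intro u _
    simp only [Finset.mem_filter, Finset.mem_univ, true_and]
    exact u.isUnit
  · intro z _; exact Finset.mem_univ _
  · intro u _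
    simp only [Units.isUnit, dif_pos]
    exact Units.ext (IsUnit.unit_spec _)
  · intro z hz
    have h : IsUnit z := (Finset.mem_filter.mp hz).2
    simp only [h, dif_pos]
    exact h.unit_spec
  · intro u _; rfl

theorem S_j_padic_congruence (p : ℕ) (hp : p.Prime) (hp3 : 3 < p)
    (j m r : ℕ) (hj : 1 ≤ j) (hjmod : ¬ (p - 1) ∣ j) (hm : 1 ≤ m) (hr : 1 ≤ r) :
    padicNorm p (∑ i ∈ (Finset.Icc 1 (m * p ^ r)).filter (fun i => ¬ p ∣ i),
        (1 : ℚ) / (i : ℚ) ^ j) ≤ (p : ℚ) ^ (-(r : ℤ)) := by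
  haveI : Fact p.Prime := ⟨hp⟩
  haveI : NeZero (p ^ r) := ⟨pow_ne_zero r hp.pos.ne'⟩
  set N := m * p ^ r with hN
  set T := (Finset.Icc 1 N).filter (fun i => ¬ p ∣ i) with hT
  have hmem : ∀ i ∈ T, (1 ≤ i ∧ i ≤ N) ∧ ¬ p ∣ i := by
    intro i hi
    simpa [hT, Finset.mem_filter, Finset.mem_Icc] using hi
  have hnorm : ∀ i ∈ T, ‖(1 / ((i : ℕ) : ℚ_[p]) ^ j)‖ ≤ 1 := by
    intro i hi
    obtain ⟨⟨hi1, _⟩, hip⟩ := hmem i hi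
    have h1 : ‖(((i : ℕ) : ℤ) : ℚ_[p])‖ = 1 := by
      refine le_antisymm (Padic.norm_int_le_one _) ?_
      by_contra hlt
      push_neg at hlt
      have hd := (Padic.norm_intCast_lt_one_iff).mp hlt
      exact hip (Int.natCast_dvd_natCast.mp (by exact_mod_cast hd))
    rw [Int.cast_natCast] at h1
    simp [norm_div, norm_pow, h1]
  set y : ℕ → ℤ_[p] := fun i =>
    if h : ‖(1 / ((i : ℕ) : ℚ_[p]) ^ j)‖ ≤ 1 then (⟨_, h⟩ : ℤ_[p]) else 0 with hy
  set x : ℤ_[p] := ∑ i ∈ T, y i with hxdef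
  have hycast : ∀ i ∈ T, ((y i : ℤ_[p]) : ℚ_[p]) = 1 / ((i : ℕ) : ℚ_[p]) ^ j := by
    intro i hi
    have e : y i = (⟨1 / ((i : ℕ) : ℚ_[p]) ^ j, hnorm i hi⟩ : ℤ_[p]) := dif_pos (hnorm i hi)
    rw [e]
  have h1 : ((x : ℤ_[p]) : ℚ_[p]) = ∑ i ∈ T, (1 / ((i : ℕ) : ℚ_[p]) ^ j) := by
    rw [hxdef]
    rw [show ((((∑ i ∈ T, y i) : ℤ_[p])) : ℚ_[p]) = ∑ i ∈ T, ((y i : ℤ_[p]) : ℚ_[p])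
      from map_sum (PadicInt.Coe.ringHom) _ _]
    exact Finset.sum_congr rfl hycast
  have h2 : (((∑ i ∈ T, (1 : ℚ) / (i : ℚ) ^ j : ℚ)) : ℚ_[p])
      = ∑ i ∈ T, (1 / ((i : ℕ) : ℚ_[p]) ^ j) := by
    push_cast
    rfl
  -- the ZMod computation
  have hkey : PadicInt.toZModPow r x = 0 := by
    rw [hxdef, map_sum]
    have hyz : ∀ i ∈ T, PadicInt.toZModPow r (y i) = (((i : ℕ) : ZMod (p ^ r))⁻¹) ^ j := by
      intro i hi
      obtain ⟨⟨hi1, _⟩, hip⟩ := hmem i hi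
      have hiu : IsUnit ((i : ℕ) : ZMod (p ^ r)) := (isUnit_zmod_iff hp hr i).mpr hip
      have hine : ((i : ℕ) : ℚ_[p]) ≠ 0 := Nat.cast_ne_zero.mpr (by omega)
      have hmul : y i * ((i : ℕ) : ℤ_[p]) ^ j = 1 := by
        have hcoe : ((y i * ((i : ℕ) : ℤ_[p]) ^ j : ℤ_[p]) : ℚ_[p]) = ((1 : ℤ_[p]) : ℚ_[p]) := by
          push_cast
          rw [hycast i hi]
          field_simp
        exact Subtype.coe_injective hcoe
      have h4 := congrArg (PadicInt.toZModPow (p := p) r) hmul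
      rw [map_mul, map_pow, map_natCast, map_one] at h4
      have h5 : (((i : ℕ) : ZMod (p ^ r))⁻¹) ^ j * ((i : ℕ) : ZMod (p ^ r)) ^ j = 1 := by
        rw [← mul_pow, ZMod.inv_mul_of_unit _ hiu, one_pow]
      exact eq_of_two_mul_eq_one h4 h5
    rw [Finset.sum_congr rfl hyz]
    set G : ZMod (p ^ r) → ZMod (p ^ r) := fun z => if IsUnit z then z⁻¹ ^ j else 0 with hG
    have hTG : ∑ i ∈ T, (((i : ℕ) : ZMod (p ^ r))⁻¹) ^ j
        = ∑ i ∈ Finset.Icc 1 N, G ((i : ℕ) : ZMod (p ^ r)) := by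
      rw [hT, Finset.sum_filter]
      refine Finset.sum_congr rfl fun i _ => ?_
      by_cases hdvd : p ∣ i
      · rw [if_neg (not_not_intro hdvd)]
        simp only [hG]
        rw [if_neg fun hu => (isUnit_zmod_iff hp hr i).mp hu hdvd]
      · rw [if_pos hdvd]
        simp only [hG]
        rw [if_pos ((isUnit_zmod_iff hp hr i).mpr hdvd)]
    set F : ℕ → ZMod (p ^ r) := fun i => G ((i : ℕ) : ZMod (p ^ r)) with hF
    have hper : ∀ i, F (i + p ^ r) = F i := by
      intro i
      simp only [hF]
      congr 1
      rw [Nat.cast_add, ZMod.natCast_self, add_zero]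
    have hF0 : F 0 = 0 := by
      simp only [hF, hG]
      rw [if_neg fun h => (isUnit_zmod_iff hp hr 0).mp h (dvd_zero p)]
    have hFN : F N = 0 := by
      simp only [hF, hG]
      rw [if_neg fun h => (isUnit_zmod_iff hp hr N).mp h
        ((dvd_pow_self p (by omega : r ≠ 0)).mul_left m)]
    have hIcc : ∑ i ∈ Finset.Icc 1 N, F i = ∑ i ∈ Finset.range N, F i := by
      have hsub : Finset.Icc 1 N ⊆ Finset.range (N + 1) := by
        intro i hi
        rw [Finset.mem_range]
        have := (Finset.mem_Icc.mp hi).2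
        omega
      have hzero : ∀ i ∈ Finset.range (N + 1), i ∉ Finset.Icc 1 N → F i = 0 := by
        intro i hi hni
        have : i = 0 := by
          rw [Finset.mem_range] at hi
          rw [Finset.mem_Icc] at hni
          omega
        rw [this, hF0]
      rw [Finset.sum_subset hsub hzero, Finset.sum_range_succ, hFN, add_zero]
    rw [hTG]
    calc ∑ i ∈ Finset.Icc 1 N, F i = ∑ i ∈ Finset.range N, F i := hIcc
      _ = m • ∑ i ∈ Finset.range (p ^ r), F i := by
          rw [hN]; exact sum_range_mul_periodic F (p ^ r) hper m
      _ = m • ∑ z : ZMod (p ^ r), G z := by rw [sum_range_cast_zmod (p ^ r) G]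
      _ = m • ∑ u : (ZMod (p ^ r))ˣ, (((u⁻¹ : (ZMod (p ^ r))ˣ)) : ZMod (p ^ r)) ^ j := by
          rw [hG, sum_univ_isUnit (fun z => z⁻¹ ^ j)]
          congr 1
          exact Finset.sum_congr rfl fun u _ => by rw [ZMod.inv_coe_unit]
      _ = 0 := by rw [units_sum_zero r j hp hr hjmod, smul_zero]
  have hxnorm : ‖x‖ ≤ (p : ℝ) ^ (-(r : ℤ)) := by
    rw [PadicInt.norm_le_pow_iff_mem_span_pow, ← PadicInt.ker_toZModPow, RingHom.mem_ker]
    exact hkey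
  have hfinal : ((padicNorm p (∑ i ∈ T, (1 : ℚ) / (i : ℚ) ^ j) : ℚ) : ℝ)
      ≤ (p : ℝ) ^ (-(r : ℤ)) := by
    rw [← Padic.eq_padicNorm, h2, ← h1, ← PadicInt.norm_def]
    exact hxnorm
  have hRHS : ((p : ℝ) ^ (-(r : ℤ))) = (((p : ℚ) ^ (-(r : ℤ)) : ℚ) : ℝ) := by
    push_cast
    ring
  exact Rat.cast_le.mp (le_of_le_of_eq hfinal hRHS)
end

section
/- Let p > 3 be prime and m, r positive integers. Then S_1(mp^r) = Σ_{1 ≤ i ≤ mp^r, p ∤ i} 1/i has p-adic valuation at least r. -/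
theorem S_one_padic (p : ℕ) (hp : p.Prime) (hp3 : 3 < p) (m r : ℕ)
    (hm : 1 ≤ m) (hr : 1 ≤ r) :
    padicNorm p (∑ i ∈ (Finset.Icc 1 (m * p ^ r)).filter (fun i => ¬ p ∣ i),
        (1 : ℚ) / (i : ℚ)) ≤ (p : ℚ) ^ (-(r : ℤ)) := by
  haveI : Fact p.Prime := ⟨hp⟩
  set N := m * p ^ r with hN
  have hpR : p ∣ N := dvd_mul_of_dvd_right (dvd_pow_self p (by omega)) m
  have hNpos : 0 < N := Nat.mul_pos hm (pow_pos hp.pos r)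
  set s := (Finset.Icc 1 N).filter (fun i => ¬ p ∣ i) with hs
  have hmem : ∀ i ∈ s, 1 ≤ i ∧ i ≤ N ∧ ¬ p ∣ i := by
    intro i hi
    simp only [hs, Finset.mem_filter, Finset.mem_Icc] at hi
    tauto
  have hmap : ∀ i ∈ s, N - i ∈ s := by
    intro i hi
    obtain ⟨h1, h2, h3⟩ := hmem i hi
    have hiN : i < N := lt_of_le_of_ne h2 (by rintro rfl; exact h3 hpR)
    simp only [hs, Finset.mem_filter, Finset.mem_Icc]
    refine ⟨⟨by omega, by omega⟩, fun hd => h3 ?_⟩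
    have : p ∣ N - (N - i) := (Nat.dvd_sub hpR hd)
    rwa [Nat.sub_sub_self h2] at this
  -- reindex
  have hS' : ∑ i ∈ s, (1:ℚ)/(i:ℚ) = ∑ i ∈ s, (1:ℚ)/((N - i : ℕ):ℚ) := by
    refine Finset.sum_nbij' (fun i => N - i) (fun i => N - i) hmap hmap ?_ ?_ ?_
    · intro a ha; exact Nat.sub_sub_self (hmem a ha).2.1
    · intro a ha; exact Nat.sub_sub_self (hmem a ha).2.1
    · intro a ha
      rw [Nat.sub_sub_self (hmem a ha).2.1]
  have key : (2:ℚ) * ∑ i ∈ s, (1:ℚ)/(i:ℚ)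
      = ∑ i ∈ s, (N:ℚ)/((i:ℚ) * ((N:ℚ) - (i:ℚ))) := by
    rw [two_mul]
    nth_rewrite 2 [hS']
    rw [← Finset.sum_add_distrib]
    refine Finset.sum_congr rfl fun i hi => ?_
    obtain ⟨h1, h2, h3⟩ := hmem i hi
    have hiN : i < N := lt_of_le_of_ne h2 (by rintro rfl; exact h3 hpR)
    have hi0 : (i:ℚ) ≠ 0 := Nat.cast_ne_zero.mpr (by omega)
    have hNi0 : (N:ℚ) - (i:ℚ) ≠ 0 := by
      have : (i:ℚ) < (N:ℚ) := by exact_mod_cast hiN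
      linarith
    rw [Nat.cast_sub h2]
    field_simp
    ring
  -- norms
  have hp2 : padicNorm p 2 = 1 := by
    rw [show ((2:ℚ)) = ((2:ℕ):ℚ) by norm_num, padicNorm.nat_eq_one_iff]
    intro h
    have := Nat.le_of_dvd (by norm_num) h
    omega
  have hbound : ∀ i ∈ s, padicNorm p ((N:ℚ)/((i:ℚ) * ((N:ℚ) - (i:ℚ)))) ≤ (p:ℚ) ^ (-(r:ℤ)) := by
    intro i hi
    obtain ⟨h1, h2, h3⟩ := hmem i hi
    have hiN : i < N := lt_of_le_of_ne h2 (by rintro rfl; exact h3 hpR)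
    have hNi := hmap i hi
    have h3' : ¬ p ∣ (N - i) := (hmem _ hNi).2.2
    have hni : padicNorm p ((i:ℚ)) = 1 := (padicNorm.nat_eq_one_iff _).mpr h3
    have hnNi : padicNorm p (((N - i : ℕ)):ℚ) = 1 := (padicNorm.nat_eq_one_iff _).mpr h3'
    have hcast : ((N:ℚ) - (i:ℚ)) = ((N - i : ℕ):ℚ) := by
      rw [Nat.cast_sub h2]
    have hnN : padicNorm p ((N:ℚ)) ≤ (p:ℚ) ^ (-(r:ℤ)) := by
      have : padicNorm p ((N:ℚ)) = padicNorm p ((m:ℚ)) * padicNorm p (((p^r : ℕ)):ℚ) := by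
        rw [hN]; push_cast; exact padicNorm.mul _ _
      rw [this]
      have hppow : padicNorm p (((p^r : ℕ)):ℚ) = (p:ℚ) ^ (-(r:ℤ)) := by
        push_cast
        have hgen : ∀ n : ℕ, padicNorm p ((p:ℚ)^n) = ((p:ℚ)⁻¹)^n := by
          intro n
          induction n with
          | zero => simp
          | succ k ih => rw [pow_succ, padicNorm.mul, ih, padicNorm.padicNorm_p hp.one_lt, pow_succ]
        rw [hgen, zpow_neg, zpow_natCast, inv_pow]
      rw [hppow]
      have h1le : padicNorm p ((m:ℚ)) ≤ 1 := padicNorm.of_nat m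
      have hpos : (0:ℚ) < (p:ℚ) ^ (-(r:ℤ)) := by
        apply zpow_pos
        exact_mod_cast hp.pos
      nlinarith
    have hb : padicNorm p ((i:ℚ) * ((N:ℚ) - (i:ℚ))) = 1 := by
      rw [hcast] at *
      rw [padicNorm.mul, hni, hnNi, mul_one]
    have hbne : ((i:ℚ) * ((N:ℚ) - (i:ℚ))) ≠ 0 := by
      apply mul_ne_zero
      · exact Nat.cast_ne_zero.mpr (by omega)
      · have : (i:ℚ) < (N:ℚ) := by exact_mod_cast hiN
        intro h; linarith [sub_eq_zero.mp h]
    have heq : padicNorm p ((N:ℚ)/((i:ℚ) * ((N:ℚ) - (i:ℚ)))) * 1 = padicNorm p ((N:ℚ)) := by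
      rw [← hb, ← padicNorm.mul, div_mul_cancel₀ _ hbne]
    rw [mul_one] at heq
    rw [heq]; exact hnN
  have hnonempty : s.Nonempty := by
    refine ⟨1, ?_⟩
    simp only [hs, Finset.mem_filter, Finset.mem_Icc]
    refine ⟨⟨le_refl 1, hNpos⟩, fun h => ?_⟩
    have := Nat.le_of_dvd one_pos h
    omega
  have hsum : padicNorm p (∑ i ∈ s, (N:ℚ)/((i:ℚ) * ((N:ℚ) - (i:ℚ)))) ≤ (p:ℚ) ^ (-(r:ℤ)) :=
    padicNorm.sum_le hnonempty hbound
  have h2S : padicNorm p ((2:ℚ) * ∑ i ∈ s, (1:ℚ)/(i:ℚ))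
      = padicNorm p (∑ i ∈ s, (1:ℚ)/(i:ℚ)) := by
    rw [padicNorm.mul, hp2, one_mul]
  rw [← h2S, key]
  exact hsum
end

section
/- Let p > 3 be prime and m, r positive integers. Then S_2(mp^r) = Σ_{1 ≤ i ≤ mp^r, p ∤ i} 1/i^2 has p-adic valuation at least r. -/
/-- Map `i` to the element of the same block `[k*q+1, (k+1)*q]` congruent to `a*i` mod `q`. -/
def blockMul (q a i : ℕ) : ℕ := q * ((i - 1) / q) + (a * i - 1) % q + 1

lemma blockMul_modEq (q a i : ℕ) (h1 : 1 ≤ a * i) :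
    blockMul q a i ≡ a * i [MOD q] := by
  unfold blockMul
  have h : q * ((i - 1) / q) + (a * i - 1) % q + 1
      = q * ((i - 1) / q) + ((a * i - 1) % q + 1) := by ring
  rw [h]
  calc q * ((i - 1) / q) + ((a * i - 1) % q + 1)
      ≡ (a * i - 1) % q + 1 [MOD q] := Nat.mul_add_mod q _ _
    _ ≡ (a * i - 1) + 1 [MOD q] := (Nat.mod_modEq _ q).add_right 1
    _ = a * i := Nat.sub_add_cancel h1

lemma blockMul_ge_one (q a i : ℕ) : 1 ≤ blockMul q a i :=
  Nat.le_add_left 1 _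

lemma blockMul_div (q a i : ℕ) (hq : 0 < q) :
    (blockMul q a i - 1) / q = (i - 1) / q := by
  unfold blockMul
  rw [Nat.add_sub_cancel, Nat.mul_add_div hq,
    Nat.div_eq_of_lt (Nat.mod_lt _ hq), Nat.add_zero]

lemma blockMul_left_inv {q a b i : ℕ} (hq : 1 < q) (hab : a * b ≡ 1 [MOD q])
    (ha : 1 ≤ a) (hb : 1 ≤ b) (hi : 1 ≤ i) :
    blockMul q b (blockMul q a i) = i := by
  have hq0 : 0 < q := lt_trans one_pos hq
  have h1 : 1 ≤ a * i := Nat.one_le_iff_ne_zero.2 (by positivity)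
  have hmu1 : 1 ≤ blockMul q a i := blockMul_ge_one q a i
  have h2 : 1 ≤ b * blockMul q a i := Nat.one_le_iff_ne_zero.2 (by positivity)
  have key : b * blockMul q a i ≡ i [MOD q] := by
    calc b * blockMul q a i ≡ b * (a * i) [MOD q] := (blockMul_modEq q a i h1).mul_left b
      _ = (a * b) * i := by ring
      _ ≡ 1 * i [MOD q] := hab.mul_right i
      _ = i := one_mul i
  have key' : (b * blockMul q a i - 1) % q = (i - 1) % q := by
    have h3 : b * blockMul q a i - 1 ≡ i - 1 [MOD q] := by
      apply Nat.ModEq.add_right_cancel' 1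
      rwa [Nat.sub_add_cancel h2, Nat.sub_add_cancel hi]
    exact h3
  show q * ((blockMul q a i - 1) / q) + (b * blockMul q a i - 1) % q + 1 = i
  rw [blockMul_div q a i hq0, key', Nat.div_add_mod, Nat.sub_add_cancel hi]

lemma blockMul_mem {p r m a i : ℕ} (hp : p.Prime) (hr : 1 ≤ r) (hpa : ¬ p ∣ a)
    (ha : 1 ≤ a)
    (hi : i ∈ (Finset.Icc 1 (m * p ^ r)).filter (fun i => ¬ p ∣ i)) :
    blockMul (p ^ r) a i ∈ (Finset.Icc 1 (m * p ^ r)).filter (fun i => ¬ p ∣ i) := by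
  simp only [Finset.mem_filter, Finset.mem_Icc] at hi ⊢
  obtain ⟨⟨hi1, hi2⟩, hpi⟩ := hi
  have hq : 0 < p ^ r := pow_pos hp.pos r
  have h1 : 1 ≤ a * i := Nat.one_le_iff_ne_zero.2 (by positivity)
  refine ⟨⟨blockMul_ge_one _ _ _, ?_⟩, ?_⟩
  · have hk : (i - 1) / p ^ r < m := by
      rw [Nat.div_lt_iff_lt_mul hq]; omega
    have hrem : (a * i - 1) % p ^ r < p ^ r := Nat.mod_lt _ hq
    calc blockMul (p ^ r) a i
        ≤ p ^ r * ((i - 1) / p ^ r) + p ^ r := by unfold blockMul; omega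
      _ = p ^ r * ((i - 1) / p ^ r + 1) := by ring
      _ ≤ p ^ r * m := Nat.mul_le_mul_left _ (by omega)
      _ = m * p ^ r := mul_comm _ _
  · intro hdvd
    have hmodp : blockMul (p ^ r) a i ≡ a * i [MOD p] :=
      (blockMul_modEq _ a i h1).of_dvd (dvd_pow_self p (by omega))
    have hdvd' : p ∣ a * i :=
      (Nat.modEq_zero_iff_dvd).1 (hmodp.symm.trans ((Nat.modEq_zero_iff_dvd).2 hdvd))
    rcases (Nat.Prime.dvd_mul hp).1 hdvd' with h | h
    exacts [hpa h, hpi h]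

lemma zmod_mul_inv {n : ℕ} {x y : ZMod n} (hx : IsUnit x) (hy : IsUnit y) :
    (x * y)⁻¹ = x⁻¹ * y⁻¹ := by
  apply ZMod.inv_eq_of_mul_eq_one
  calc x * y * (x⁻¹ * y⁻¹) = (x * x⁻¹) * (y * y⁻¹) := by ring
    _ = 1 := by rw [ZMod.mul_inv_of_unit x hx, ZMod.mul_inv_of_unit y hy, one_mul]

lemma key_sum (p : ℕ) (hp : p.Prime) (hp3 : 3 < p) (m r : ℕ) (hr : 1 ≤ r) :
    ∑ i ∈ (Finset.Icc 1 (m * p ^ r)).filter (fun i => ¬ p ∣ i),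
      (((i : ZMod (p ^ r)))⁻¹) ^ 2 = 0 := by
  set q := p ^ r with hqdef
  have hq0 : 0 < q := pow_pos hp.pos r
  have hq1 : 1 < q := Nat.one_lt_pow (by omega) (by omega)
  haveI : NeZero q := ⟨by omega⟩
  set s := (Finset.Icc 1 (m * q)).filter (fun i => ¬ p ∣ i) with hsdef
  -- units
  have hIunit : ∀ i ∈ s, IsUnit ((i : ℕ) : ZMod q) := by
    intro i hi
    rw [ZMod.isUnit_iff_coprime]
    simp only [hsdef, Finset.mem_filter] at hi
    exact ((Nat.Prime.coprime_iff_not_dvd hp).2 hi.2).symm.pow_right r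
  have hpd2 : ¬ p ∣ 2 := fun h => by have := Nat.le_of_dvd (by norm_num) h; omega
  have h2cop : Nat.Coprime 2 q :=
    (((Nat.Prime.coprime_iff_not_dvd hp).2 hpd2).symm.pow_right r)
  have h2unit : IsUnit ((2 : ℕ) : ZMod q) := (ZMod.isUnit_iff_coprime 2 q).2 h2cop
  set c : ℕ := (((2 : ℕ) : ZMod q)⁻¹).val with hcdef
  have hc : 2 * c ≡ 1 [MOD q] := by
    have h : ((2 * c : ℕ) : ZMod q) = ((1 : ℕ) : ZMod q) := by
      push_cast [hcdef, ZMod.natCast_val, ZMod.cast_id]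
      exact ZMod.mul_inv_of_unit _ h2unit
    exact (ZMod.natCast_eq_natCast_iff _ _ _).1 h
  have hc1 : 1 ≤ c := by
    rcases Nat.eq_zero_or_pos c with h0 | h; swap; · exact h
    exfalso
    have := hc
    rw [h0, Nat.mul_zero, Nat.ModEq, Nat.zero_mod, Nat.mod_eq_of_lt hq1] at this
    exact one_ne_zero this.symm
  have hpc : ¬ p ∣ c := by
    intro hd
    have : p ∣ 1 := by
      have h2 : 2 * c ≡ 1 [MOD p] := hc.of_dvd (dvd_pow_self p (by omega))
      have hdp : p ∣ 2 * c := Dvd.dvd.mul_left hd 2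
      exact (Nat.modEq_zero_iff_dvd).1
        (((Nat.modEq_zero_iff_dvd).2 hdp).symm.trans h2).symm
    have hp1 : p ≤ 1 := Nat.le_of_dvd one_pos this
    have := hp.two_le
    omega
  -- cast equality for 2*c
  have h2c : (2 : ZMod q) * (c : ZMod q) = 1 := by
    have h := (ZMod.natCast_eq_natCast_iff _ _ _).2 hc
    push_cast at h
    exact h
  -- the reindexing step
  set S := ∑ i ∈ s, (((i : ZMod q))⁻¹) ^ 2 with hSdef
  have hstep : S = ∑ i ∈ s, (((2 : ZMod q) * (i : ZMod q))⁻¹) ^ 2 := by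
    rw [hSdef]
    refine Finset.sum_nbij' (blockMul q c) (blockMul q 2) ?_ ?_ ?_ ?_ ?_
    · intro a haa; exact blockMul_mem hp hr hpc hc1 haa
    · intro a haa; exact blockMul_mem hp hr hpd2 (by omega) haa
    · intro a haa
      have ha1 : 1 ≤ a := by
        simp only [hsdef, Finset.mem_filter, Finset.mem_Icc] at haa; omega
      exact blockMul_left_inv hq1 (by rwa [Nat.mul_comm] at hc) hc1 (by omega) ha1
    · intro a haa
      have ha1 : 1 ≤ a := by
        simp only [hsdef, Finset.mem_filter, Finset.mem_Icc] at haa; omega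
      exact blockMul_left_inv hq1 hc (by omega) hc1 ha1
    · intro a haa
      have ha1 : 1 ≤ a := by
        simp only [hsdef, Finset.mem_filter, Finset.mem_Icc] at haa; omega
      have hcast : ((blockMul q c a : ℕ) : ZMod q) = (c : ZMod q) * (a : ZMod q) := by
        have := (ZMod.natCast_eq_natCast_iff _ _ _).2
          (blockMul_modEq q c a (Nat.one_le_iff_ne_zero.2 (by positivity)))
        push_cast at this
        exact this
      rw [hcast, ← mul_assoc, h2c, one_mul]
  have h2u : IsUnit (2 : ZMod q) := by
    have := h2unit; push_cast at this; exact this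
  have hfour : S = ((2 : ZMod q)⁻¹) ^ 2 * S := by
    calc S = ∑ i ∈ s, (((2 : ZMod q) * (i : ZMod q))⁻¹) ^ 2 := hstep
      _ = ∑ i ∈ s, ((2 : ZMod q)⁻¹) ^ 2 * (((i : ZMod q))⁻¹) ^ 2 :=
          Finset.sum_congr rfl fun i hi => by
            rw [zmod_mul_inv h2u (hIunit i hi), mul_pow]
      _ = ((2 : ZMod q)⁻¹) ^ 2 * S := by rw [hSdef, Finset.mul_sum]
  have h4S : (4 : ZMod q) * S = S := by
    calc (4 : ZMod q) * S = (4 : ZMod q) * (((2 : ZMod q)⁻¹) ^ 2 * S) := by rw [← hfour]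
      _ = ((2 : ZMod q) * (2 : ZMod q)⁻¹) ^ 2 * S := by ring
      _ = S := by rw [ZMod.mul_inv_of_unit _ h2u, one_pow, one_mul]
  have h3S : (3 : ZMod q) * S = 0 := by
    have : (3 : ZMod q) = 4 - 1 := by norm_num
    rw [this, sub_mul, h4S, one_mul, sub_self]
  have hpd3 : ¬ p ∣ 3 := fun h => by have := Nat.le_of_dvd (by norm_num) h; omega
  have h3cop : Nat.Coprime 3 q :=
    (((Nat.Prime.coprime_iff_not_dvd hp).2 hpd3).symm.pow_right r)
  have h3unit : IsUnit (3 : ZMod q) := by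
    have := (ZMod.isUnit_iff_coprime 3 q).2 h3cop; push_cast at this; exact this
  calc S = ((3 : ZMod q)⁻¹ * 3) * S := by
        rw [ZMod.inv_mul_of_unit _ h3unit, one_mul]
    _ = (3 : ZMod q)⁻¹ * ((3 : ZMod q) * S) := by ring
    _ = 0 := by rw [h3S, mul_zero]

theorem S_two_padic (p : ℕ) (hp : p.Prime) (hp3 : 3 < p) (m r : ℕ)
    (hm : 1 ≤ m) (hr : 1 ≤ r) :
    padicNorm p (∑ i ∈ (Finset.Icc 1 (m * p ^ r)).filter (fun i => ¬ p ∣ i),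
        (1 : ℚ) / (i : ℚ) ^ 2) ≤ (p : ℚ) ^ (-(r : ℤ)) := by
  haveI : Fact p.Prime := ⟨hp⟩
  set q := p ^ r with hqdef
  have hq0 : 0 < q := pow_pos hp.pos r
  haveI : NeZero q := ⟨by omega⟩
  set s := (Finset.Icc 1 (m * q)).filter (fun i => ¬ p ∣ i) with hsdef
  set P : ℕ := ∏ i ∈ s, i with hPdef
  set N : ℕ := ∑ i ∈ s, (P / i) ^ 2 with hNdef
  have hs_pos : ∀ i ∈ s, 0 < i := by
    intro i hi
    simp only [hsdef, Finset.mem_filter, Finset.mem_Icc] at hi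
    omega
  have hs_ndvd : ∀ i ∈ s, ¬ p ∣ i := by
    intro i hi
    simp only [hsdef, Finset.mem_filter] at hi
    exact hi.2
  have hP0 : 0 < P := Finset.prod_pos hs_pos
  have hpP : ¬ p ∣ P := by
    have hcop : Nat.Coprime p P :=
      Nat.Coprime.prod_right fun i hi => (Nat.Prime.coprime_iff_not_dvd hp).2 (hs_ndvd i hi)
    exact (Nat.Prime.coprime_iff_not_dvd hp).1 hcop
  have hIunit : ∀ i ∈ s, IsUnit ((i : ℕ) : ZMod q) := by
    intro i hi
    rw [ZMod.isUnit_iff_coprime]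
    exact ((Nat.Prime.coprime_iff_not_dvd hp).2 (hs_ndvd i hi)).symm.pow_right r
  -- the rational sum equals N / P^2
  have hsum : ∑ i ∈ s, (1 : ℚ) / (i : ℚ) ^ 2 = (N : ℚ) / (P : ℚ) ^ 2 := by
    rw [eq_div_iff (by positivity : ((P : ℚ) ^ 2) ≠ 0), Finset.sum_mul, hNdef]
    push_cast
    apply Finset.sum_congr rfl
    intro i hi
    have hiP : i ∣ P := Finset.dvd_prod_of_mem _ hi
    have hi0 : (i : ℕ) ≠ 0 := (hs_pos i hi).ne'
    rw [Nat.cast_div hiP (by exact_mod_cast hi0), div_pow]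
    field_simp
  -- p^r divides N
  have hNdvd : q ∣ N := by
    rw [← ZMod.natCast_eq_zero_iff]
    rw [hNdef]
    push_cast
    have hterm : ∀ i ∈ s, (((P / i : ℕ)) : ZMod q) ^ 2
        = ((P : ZMod q)) ^ 2 * (((i : ZMod q))⁻¹) ^ 2 := by
      intro i hi
      have hiP : i ∣ P := Finset.dvd_prod_of_mem _ hi
      have hu := hIunit i hi
      have hcast : ((P / i : ℕ) : ZMod q) * (i : ZMod q) = (P : ZMod q) := by
        rw [← Nat.cast_mul, Nat.div_mul_cancel hiP]
      have hPi : ((P / i : ℕ) : ZMod q) = (P : ZMod q) * ((i : ZMod q))⁻¹ := by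
        calc ((P / i : ℕ) : ZMod q)
            = ((P / i : ℕ) : ZMod q) * ((i : ZMod q) * ((i : ZMod q))⁻¹) := by
              rw [ZMod.mul_inv_of_unit _ hu, mul_one]
          _ = (((P / i : ℕ) : ZMod q) * (i : ZMod q)) * ((i : ZMod q))⁻¹ := by ring
          _ = (P : ZMod q) * ((i : ZMod q))⁻¹ := by rw [hcast]
      rw [hPi, mul_pow]
    rw [Finset.sum_congr rfl hterm, ← Finset.mul_sum]
    rw [hqdef] at *
    rw [key_sum p hp hp3 m r hr, mul_zero]
  -- conclude
  rw [hsum, padicNorm.div]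
  have hPnorm : padicNorm p ((P : ℚ) ^ 2) = 1 := by
    rw [show ((P : ℚ) ^ 2) = ((P ^ 2 : ℕ) : ℚ) by push_cast; ring]
    rw [padicNorm.nat_eq_one_iff]
    intro h
    exact hpP (hp.dvd_of_dvd_pow h)
  rw [hPnorm, div_one]
  have hdvd' : ((p ^ r : ℕ) : ℤ) ∣ (N : ℤ) := Int.natCast_dvd_natCast.2 hNdvd
  have := (padicNorm.dvd_iff_norm_le (p := p) (n := r) (z := (N : ℤ))).1 hdvd'
  simpa using this
end

section
/- For a prime p > 3 and positive integers m, r, the p-adic valuation of g*_{10}(2mp^r, mp^r) - 1 is at least 3r, where g*_{10}(X, k) = Π_{1 ≤ i ≤ k, p ∤ i} (1 - X/i). -/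
section GStarAuxSection

open Finset
open scoped Classical

namespace GStarAux

lemma inv_unique {n : ℕ} {a b : ZMod n} (h : a * b = 1) : a⁻¹ = b := by
  have ha : IsUnit a := IsUnit.of_mul_eq_one _ h
  have h1 : a⁻¹ * a = 1 := by rw [mul_comm]; exact ZMod.mul_inv_of_unit a ha
  calc a⁻¹ = a⁻¹ * (a * b) := by rw [h, mul_one]
    _ = (a⁻¹ * a) * b := by ring
    _ = b := by rw [h1, one_mul]

lemma sum_sq_inv_units (n : ℕ) [NeZero n] (h2 : IsUnit (2 : ZMod n)) (h3 : IsUnit (3 : ZMod n)) :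
    ∑ x ∈ univ.filter (fun x : ZMod n => IsUnit x), x⁻¹ ^ 2 = 0 := by
  have h2i : (2 : ZMod n) * 2⁻¹ = 1 := ZMod.mul_inv_of_unit _ h2
  have h2i' : (2 : ZMod n)⁻¹ * 2 = 1 := by rw [mul_comm]; exact h2i
  have h2iu : IsUnit ((2 : ZMod n)⁻¹) := IsUnit.of_mul_eq_one _ h2i'
  set T := ∑ x ∈ univ.filter (fun x : ZMod n => IsUnit x), x⁻¹ ^ 2 with hT
  have key : T = 2⁻¹ ^ 2 * T := by
    rw [hT, Finset.mul_sum]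
    refine Finset.sum_nbij' (fun x => 2⁻¹ * x) (fun x => 2 * x) ?_ ?_ ?_ ?_ ?_
    · intro a ha
      simp only [mem_filter, mem_univ, true_and] at ha ⊢
      exact h2iu.mul ha
    · intro a ha
      simp only [mem_filter, mem_univ, true_and] at ha ⊢
      exact h2.mul ha
    · intro a _
      show (2 : ZMod n) * (2⁻¹ * a) = a
      rw [← mul_assoc, h2i, one_mul]
    · intro a _
      show (2 : ZMod n)⁻¹ * (2 * a) = a
      rw [← mul_assoc, h2i', one_mul]
    · intro a ha
      simp only [mem_filter, mem_univ, true_and] at ha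
      show a⁻¹ ^ 2 = 2⁻¹ ^ 2 * ((2:ZMod n)⁻¹ * a)⁻¹ ^ 2
      have hinv : ((2:ZMod n)⁻¹ * a)⁻¹ = 2 * a⁻¹ := by
        apply inv_unique
        have haa := ZMod.mul_inv_of_unit a ha
        calc (2:ZMod n)⁻¹ * a * (2 * a⁻¹) = (2⁻¹ * 2) * (a * a⁻¹) := by ring
          _ = 1 := by rw [h2i', haa, mul_one]
      rw [hinv]
      calc a⁻¹ ^ 2 = ((2⁻¹*2) * a⁻¹)^2 := by rw [h2i', one_mul]
        _ = 2⁻¹^2 * (2*a⁻¹)^2 := by ring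
  have key2 : (3 : ZMod n) * T = 0 := by
    have h4 : (4 : ZMod n) * T = T := by
      nth_rewrite 1 [key]
      calc (4:ZMod n) * (2⁻¹^2 * T) = ((2:ZMod n)*2⁻¹)^2 * T := by ring
        _ = T := by rw [h2i, one_pow, one_mul]
    have h5 : ((4:ZMod n) - 1) * T = 0 := by rw [sub_mul, h4, one_mul, sub_self]
    calc (3:ZMod n) * T = ((4:ZMod n) - 1) * T := by norm_num
      _ = 0 := h5
  have h3i' : (3 : ZMod n)⁻¹ * 3 = 1 := by
    rw [mul_comm]; exact ZMod.mul_inv_of_unit _ h3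
  calc T = (3⁻¹ * 3) * T := by rw [h3i', one_mul]
    _ = 3⁻¹ * (3 * T) := by ring
    _ = 0 := by rw [key2, mul_zero]

end GStarAux
open Finset
open scoped Classical

namespace GStarAux2

lemma isUnit_cast {p s j : ℕ} (hp : p.Prime) (h : ¬ p ∣ j) :
    IsUnit (j : ZMod (p ^ s)) := by
  rw [ZMod.isUnit_iff_coprime]
  exact Nat.Coprime.pow_right _ ((Nat.coprime_comm).mp ((Nat.Prime.coprime_iff_not_dvd hp).mpr h))

lemma sum_nat_units (p r : ℕ) [NeZero (p^r)] (hp : p.Prime) (hr : 1 ≤ r)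
    (g : ZMod (p^r) → ZMod (p^r)) :
    ∑ j ∈ (range (p^r)).filter (fun j => ¬ p ∣ j), g (j : ZMod (p^r)) =
    ∑ x ∈ univ.filter (fun x : ZMod (p^r) => IsUnit x), g x := by
  refine Finset.sum_nbij' (fun j => (j : ZMod (p^r))) (fun x => x.val) ?_ ?_ ?_ ?_ ?_
  · intro j hj
    simp only [mem_filter, mem_range] at hj
    simp only [mem_filter, mem_univ, true_and]
    exact isUnit_cast hp hj.2
  · intro x hx
    simp only [mem_filter, mem_univ, true_and] at hx
    simp only [mem_filter, mem_range]
    refine ⟨ZMod.val_lt x, ?_⟩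
    have hcast : ((x.val : ℕ) : ZMod (p^r)) = x := by
      rw [ZMod.natCast_val, ZMod.cast_id]
    rw [← hcast, ZMod.isUnit_iff_coprime] at hx
    intro hdvd
    have hpp : p ∣ p ^ r := dvd_pow_self p (by omega)
    have : p ∣ 1 := hx ▸ Nat.dvd_gcd hdvd hpp
    exact hp.one_lt.ne' (Nat.dvd_one.mp this)
  · intro j hj
    simp only [mem_filter, mem_range] at hj
    exact ZMod.val_cast_of_lt hj.1
  · intro x _
    show ((x.val : ℕ) : ZMod (p^r)) = x
    rw [ZMod.natCast_val, ZMod.cast_id]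
  · intro j _
    rfl

lemma sum_core (p r : ℕ) (hp : p.Prime) (hp3 : 3 < p) (hr : 1 ≤ r) :
    ∑ j ∈ (range (p^r)).filter (fun j => ¬ p ∣ j), ((j : ZMod (p^r))⁻¹) ^ 2 = 0 := by
  haveI : NeZero (p^r) := ⟨pow_ne_zero _ hp.pos.ne'⟩
  rw [sum_nat_units p r hp hr (fun x => x⁻¹ ^ 2)]
  apply GStarAux.sum_sq_inv_units
  · have h2 : ((2 : ℕ) : ZMod (p^r)) = (2 : ZMod (p^r)) := by norm_cast
    rw [← h2]
    refine isUnit_cast hp ?_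
    intro h
    have := Nat.le_of_dvd (by norm_num) h
    omega
  · have h3 : ((3 : ℕ) : ZMod (p^r)) = (3 : ZMod (p^r)) := by norm_cast
    rw [← h3]
    refine isUnit_cast hp ?_
    intro h
    have := Nat.le_of_dvd (by norm_num) h
    omega

end GStarAux2
open Finset
open scoped Classical

namespace GStarAux3

lemma periodic_shift {M : Type*} (n : ℕ) (g : ℕ → M) (hg : ∀ i, g (n + i) = g i) :
    ∀ m i, g (m * n + i) = g i := by
  intro m
  induction m with
  | zero => simp
  | succ m ih =>
    intro i
    have : (m + 1) * n + i = n + (m * n + i) := by ring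
    rw [this, hg, ih]

lemma sum_blocks {M : Type*} [AddCommMonoid M] (n : ℕ) (g : ℕ → M)
    (hg : ∀ i, g (n + i) = g i) (h0 : ∑ j ∈ range n, g j = 0) (m : ℕ) :
    ∑ j ∈ range (m * n), g j = 0 := by
  induction m with
  | zero => simp
  | succ m ih =>
    have h1 : (m + 1) * n = m * n + n := by ring
    rw [h1, Finset.range_eq_Ico,
      ← Finset.sum_Ico_consecutive g (Nat.zero_le (m * n)) (Nat.le_add_right _ n)]
    rw [← Finset.range_eq_Ico] at *
    rw [ih, zero_add, Finset.sum_Ico_eq_sum_range]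
    simp only [Nat.add_sub_cancel_left]
    calc ∑ i ∈ range n, g (m * n + i) = ∑ i ∈ range n, g i :=
      Finset.sum_congr rfl (fun i _ => periodic_shift n g hg m i)
      _ = 0 := h0

lemma sum_inv_sq_big (p m r : ℕ) (hp : p.Prime) (hp3 : 3 < p) (hr : 1 ≤ r) :
    ∑ j ∈ (range (m * p^r)).filter (fun j => ¬ p ∣ j), ((j : ZMod (p^r))⁻¹) ^ 2 = 0 := by
  rw [Finset.sum_filter]
  refine sum_blocks (p^r) (fun j => if ¬ p ∣ j then ((j : ZMod (p^r))⁻¹) ^ 2 else 0) ?_ ?_ m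
  · intro i
    have hpp : p ∣ p ^ r := dvd_pow_self p (by omega)
    have hdvd : (p ∣ p^r + i) ↔ p ∣ i :=
      ⟨fun h => (Nat.dvd_add_right hpp).mp h, fun h => Dvd.dvd.add hpp h⟩
    have hcast : ((p^r + i : ℕ) : ZMod (p^r)) = (i : ZMod (p^r)) := by
      rw [Nat.cast_add, ZMod.natCast_self, zero_add]
    simp only [hdvd, hcast]
  · rw [← Finset.sum_filter]
    exact GStarAux2.sum_core p r hp hp3 hr

lemma filter_Icc_eq (p n : ℕ) (hn : p ∣ n) :
    (Finset.Icc 1 n).filter (fun i => ¬ p ∣ i) = (range n).filter (fun i => ¬ p ∣ i) := by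
  ext j
  simp only [mem_filter, mem_Icc, mem_range]
  constructor
  · rintro ⟨⟨h1, h2⟩, h3⟩
    have hne : j ≠ n := fun h => h3 (h ▸ hn)
    exact ⟨by omega, h3⟩
  · rintro ⟨h1, h3⟩
    have hne : j ≠ 0 := fun h => h3 (h ▸ dvd_zero p)
    exact ⟨⟨by omega, by omega⟩, h3⟩

end GStarAux3
open Finset
open scoped Classical

namespace GStarAux4

@[to_additive]
lemma pair_prod {M : Type*} [CommMonoid M] (p k : ℕ) (hp : p.Prime) (hp3 : 3 < p)
    (hk : p ∣ k) (f : ℕ → M) :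
    ∏ i ∈ (Finset.Icc 1 k).filter (fun i => ¬ p ∣ i), f i
      = ∏ i ∈ ((Finset.Icc 1 k).filter (fun i => ¬ p ∣ i)).filter (fun i => 2*i < k),
          (f i * f (k - i)) := by
  set S := (Finset.Icc 1 k).filter (fun i => ¬ p ∣ i) with hS
  set S₁ := S.filter (fun i => 2*i < k) with hS1
  set S₂ := S.filter (fun i => k < 2*i) with hS2
  have hmem : ∀ i ∈ S, 1 ≤ i ∧ i ≤ k ∧ ¬ p ∣ i := by
    intro i hi
    rw [hS, mem_filter, mem_Icc] at hi
    exact ⟨hi.1.1, hi.1.2, hi.2⟩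
  have hne : ∀ i ∈ S, 2 * i ≠ k := by
    intro i hi h
    have h2 : p ∣ 2 * i := h ▸ hk
    rcases (Nat.Prime.dvd_mul hp).mp h2 with h' | h'
    · have := Nat.le_of_dvd (by norm_num) h'; omega
    · exact (hmem i hi).2.2 h'
  have hsplit : S = S₁ ∪ S₂ := by
    ext i
    constructor
    · intro hi
      have hne' := hne i hi
      rcases Nat.lt_or_ge (2*i) k with h | h
      · exact mem_union.mpr (Or.inl (mem_filter.mpr ⟨hi, h⟩))
      · exact mem_union.mpr (Or.inr (mem_filter.mpr ⟨hi, by omega⟩))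
    · intro hi
      rcases mem_union.mp hi with h | h
      · exact (mem_filter.mp h).1
      · exact (mem_filter.mp h).1
  have hdisj : Disjoint S₁ S₂ := by
    rw [Finset.disjoint_left]
    intro i h1 h2
    rw [hS1, mem_filter] at h1
    rw [hS2, mem_filter] at h2
    omega
  have hsub : ∀ i ∈ S₁, k - i ∈ S₂ ∧ k - (k - i) = i := by
    intro i hi
    rw [hS1, mem_filter] at hi
    obtain ⟨hiS, hlt⟩ := hi
    obtain ⟨h1, h2, h3⟩ := hmem i hiS
    have hki1 : 1 ≤ k - i := by omega
    have hki2 : k - i ≤ k := by omega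
    have hnd : ¬ p ∣ (k - i) := by
      intro h
      have : p ∣ i := by
        have := Nat.dvd_sub hk h
        rwa [Nat.sub_sub_self h2] at this
      exact h3 this
    constructor
    · rw [hS2, mem_filter, hS, mem_filter, mem_Icc]
      exact ⟨⟨⟨hki1, hki2⟩, hnd⟩, by omega⟩
    · omega
  have hsub2 : ∀ i ∈ S₂, k - i ∈ S₁ ∧ k - (k - i) = i := by
    intro i hi
    rw [hS2, mem_filter] at hi
    obtain ⟨hiS, hlt⟩ := hi
    obtain ⟨h1, h2, h3⟩ := hmem i hiS
    have hki1 : 1 ≤ k - i := by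
      rcases Nat.lt_or_ge i k with h | h
      · omega
      · have : i = k := by omega
        exact absurd (this ▸ hk) h3
    have hnd : ¬ p ∣ (k - i) := by
      intro h
      have : p ∣ i := by
        have := Nat.dvd_sub hk h
        rwa [Nat.sub_sub_self h2] at this
      exact h3 this
    constructor
    · rw [hS1, mem_filter, hS, mem_filter, mem_Icc]
      exact ⟨⟨⟨hki1, by omega⟩, hnd⟩, by omega⟩
    · omega
  have h2prod : ∏ i ∈ S₂, f i = ∏ i ∈ S₁, f (k - i) := by
    refine (Finset.prod_nbij' (fun i => k - i) (fun i => k - i) ?_ ?_ ?_ ?_ ?_).symm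
    · intro a ha; exact (hsub a ha).1
    · intro a ha; exact (hsub2 a ha).1
    · intro a ha; exact (hsub a ha).2
    · intro a ha; exact (hsub2 a ha).2
    · intro a _; rfl
  rw [hsplit, Finset.prod_union hdisj, h2prod, ← Finset.prod_mul_distrib]

end GStarAux4
open Finset
open scoped Classical

namespace GStarAux5



lemma prod_add_c {R : Type*} [CommRing R] (c : R) (hc : c * c = 0) (u : ℕ → R)
    (s : Finset ℕ) :
    ∏ j ∈ s, (u j + c) = ∏ j ∈ s, u j + c * ∑ j ∈ s, ∏ i ∈ s.erase j, u i := by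
  induction s using Finset.induction_on with
  | empty => simp
  | insert a s ha ih =>
    rw [Finset.prod_insert ha, ih, Finset.sum_insert ha, Finset.erase_insert ha,
      Finset.prod_insert ha]
    have herase : ∑ j ∈ s, ∏ i ∈ (insert a s).erase j, u i
        = u a * ∑ j ∈ s, ∏ i ∈ s.erase j, u i := by
      rw [Finset.mul_sum]
      refine Finset.sum_congr rfl ?_
      intro j hj
      have hja : a ≠ j := fun h => ha (h ▸ hj)
      rw [Finset.erase_insert_of_ne hja,
        Finset.prod_insert (fun h => ha (Finset.mem_of_mem_erase h))]
    rw [herase]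
    linear_combination (∑ j ∈ s, ∏ i ∈ s.erase j, u i) * hc
end GStarAux5
open Finset
open scoped Classical

namespace GStarAux6

lemma dvd_of_cast_zero (p a b : ℕ) (hp : p.Prime) (hab : a ≤ b) (x : ZMod (p^b))
    (h : (ZMod.castHom (pow_dvd_pow p hab) (ZMod (p^a)) x) = 0) :
    ∃ d : ZMod (p^b), x = (p : ZMod (p^b))^a * d := by
  haveI : NeZero (p^a) := ⟨pow_ne_zero _ hp.pos.ne'⟩
  haveI : NeZero (p^b) := ⟨pow_ne_zero _ hp.pos.ne'⟩
  have hx : ((x.val : ℕ) : ZMod (p^a)) = 0 := by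
    rw [ZMod.castHom_apply] at h
    rw [ZMod.natCast_val]
    exact h
  have hdvd : p^a ∣ x.val := (ZMod.natCast_eq_zero_iff _ _).mp hx
  obtain ⟨t, ht⟩ := hdvd
  refine ⟨(t : ZMod (p^b)), ?_⟩
  have : x = ((x.val : ℕ) : ZMod (p^b)) := by rw [ZMod.natCast_val, ZMod.cast_id]
  rw [this, ht]
  push_cast
  ring

lemma castHom_inv (p a b : ℕ) (hp : p.Prime) (hab : a ≤ b) (x : ZMod (p^b))
    (hx : IsUnit x) :
    (ZMod.castHom (pow_dvd_pow p hab) (ZMod (p^a)) x⁻¹)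
      = (ZMod.castHom (pow_dvd_pow p hab) (ZMod (p^a)) x)⁻¹ := by
  symm
  apply GStarAux.inv_unique
  rw [← map_mul, ZMod.mul_inv_of_unit x hx, map_one]

end GStarAux6
open Finset
open scoped Classical

namespace GStarAux7

lemma two_isUnit (p r : ℕ) (hp : p.Prime) (hp3 : 3 < p) : IsUnit (2 : ZMod (p^r)) := by
  have h2 : ((2 : ℕ) : ZMod (p^r)) = (2 : ZMod (p^r)) := by norm_cast
  rw [← h2]
  refine GStarAux2.isUnit_cast hp ?_
  intro h
  have := Nat.le_of_dvd (by norm_num) h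
  omega

lemma sum_pair_inv (p m r : ℕ) (hp : p.Prime) (hp3 : 3 < p) (hm : 1 ≤ m) (hr : 1 ≤ r) :
    ∑ i ∈ ((Finset.Icc 1 (m*p^r)).filter (fun i => ¬ p ∣ i)).filter
        (fun i => 2*i < m*p^r),
      ((i * (m*p^r - i) : ℕ) : ZMod (p^r))⁻¹ = 0 := by
  haveI : NeZero (p^r) := ⟨pow_ne_zero _ hp.pos.ne'⟩
  set k := m * p^r with hk
  have hpk : p ∣ k := Dvd.dvd.mul_left (dvd_pow_self p (by omega)) m
  have hkcast : ((k : ℕ) : ZMod (p^r)) = 0 := by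
    rw [hk, Nat.cast_mul, ZMod.natCast_self, mul_zero]
  set S := (Finset.Icc 1 k).filter (fun i => ¬ p ∣ i) with hS
  set S₁ := S.filter (fun i => 2*i < k) with hS1
  have hmem : ∀ i ∈ S₁, 1 ≤ i ∧ i ≤ k ∧ ¬ p ∣ i := by
    intro i hi
    rw [hS1, mem_filter, hS, mem_filter, mem_Icc] at hi
    exact ⟨hi.1.1.1, hi.1.1.2, hi.1.2⟩
  have hsubcast : ∀ i, i ≤ k → ((k - i : ℕ) : ZMod (p^r)) = -(i : ZMod (p^r)) := by
    intro i hik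
    rw [Nat.cast_sub hik, hkcast, zero_sub]
  -- each term equals -((i)⁻¹)^2
  have hterm : ∀ i ∈ S₁, ((i * (k - i) : ℕ) : ZMod (p^r))⁻¹
      = -(((i : ZMod (p^r))⁻¹)^2) := by
    intro i hi
    obtain ⟨h1, h2, h3⟩ := hmem i hi
    have hiu : IsUnit (i : ZMod (p^r)) := GStarAux2.isUnit_cast hp h3
    have hii := ZMod.mul_inv_of_unit _ hiu
    apply GStarAux.inv_unique
    rw [Nat.cast_mul, hsubcast i h2]
    calc (i : ZMod (p^r)) * (-(i:ZMod (p^r))) * -(((i : ZMod (p^r))⁻¹)^2)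
        = ((i:ZMod (p^r)) * (i:ZMod (p^r))⁻¹)^2 := by ring
      _ = 1 := by rw [hii, one_pow]
  rw [Finset.sum_congr rfl hterm, Finset.sum_neg_distrib, neg_eq_zero]
  have hpair := GStarAux4.pair_sum p k hp hp3 hpk (fun i => ((i : ZMod (p^r))⁻¹)^2)
  have hcongr : ∀ i ∈ S₁, (((i:ℕ) : ZMod (p^r))⁻¹)^2 + (((k - i : ℕ) : ZMod (p^r))⁻¹)^2
      = 2 * (((i:ℕ) : ZMod (p^r))⁻¹)^2 := by
    intro i hi
    obtain ⟨h1, h2, h3⟩ := hmem i hi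
    have hiu : IsUnit (i : ZMod (p^r)) := GStarAux2.isUnit_cast hp h3
    have hii := ZMod.mul_inv_of_unit _ hiu
    have hneg : ((k - i : ℕ) : ZMod (p^r))⁻¹ = -((i : ZMod (p^r))⁻¹) := by
      rw [hsubcast i h2]
      apply GStarAux.inv_unique
      calc -(i:ZMod (p^r)) * -((i:ZMod (p^r))⁻¹) = (i:ZMod (p^r)) * (i:ZMod (p^r))⁻¹ := by ring
        _ = 1 := hii
    rw [hneg]
    ring
  have hzero : ∑ i ∈ S, (((i:ℕ) : ZMod (p^r))⁻¹)^2 = 0 := by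
    rw [hS, GStarAux3.filter_Icc_eq p k hpk, hk]
    exact GStarAux3.sum_inv_sq_big p m r hp hp3 hr
  have h2sum : 2 * ∑ i ∈ S₁, (((i:ℕ) : ZMod (p^r))⁻¹)^2 = 0 := by
    rw [Finset.mul_sum]
    calc ∑ i ∈ S₁, 2 * (((i:ℕ) : ZMod (p^r))⁻¹)^2
        = ∑ i ∈ S₁, ((((i:ℕ) : ZMod (p^r))⁻¹)^2 + (((k - i : ℕ) : ZMod (p^r))⁻¹)^2) :=
          (Finset.sum_congr rfl hcongr).symm
      _ = ∑ i ∈ S, (((i:ℕ) : ZMod (p^r))⁻¹)^2 := hpair.symm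
      _ = 0 := hzero
  have h2u := two_isUnit p r hp hp3
  have h2i : (2 : ZMod (p^r))⁻¹ * 2 = 1 := by
    rw [mul_comm]; exact ZMod.mul_inv_of_unit _ h2u
  calc ∑ i ∈ S₁, (((i:ℕ) : ZMod (p^r))⁻¹)^2
      = (2⁻¹ * 2) * ∑ i ∈ S₁, (((i:ℕ) : ZMod (p^r))⁻¹)^2 := by rw [h2i, one_mul]
    _ = 2⁻¹ * (2 * ∑ i ∈ S₁, (((i:ℕ) : ZMod (p^r))⁻¹)^2) := by ring
    _ = 0 := by rw [h2sum, mul_zero]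

end GStarAux7
open Finset
open scoped Classical

namespace GStarAux8

lemma main_cong (p m r : ℕ) (hp : p.Prime) (hp3 : 3 < p) (hm : 1 ≤ m) (hr : 1 ≤ r) :
    (∏ i ∈ (Finset.Icc 1 (m*p^r)).filter (fun i => ¬ p ∣ i),
        ((i : ZMod (p^(3*r))) - 2*((m*p^r : ℕ) : ZMod (p^(3*r)))))
      = ∏ i ∈ (Finset.Icc 1 (m*p^r)).filter (fun i => ¬ p ∣ i), (i : ZMod (p^(3*r))) := by
  set R := ZMod (p^(3*r)) with hR
  set k := m * p^r with hk
  have hpk : p ∣ k := Dvd.dvd.mul_left (dvd_pow_self p (by omega)) m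
  set q : R := (p : R)^r with hq
  have hq3 : q^3 = 0 := by
    rw [hq, ← pow_mul, mul_comm r 3, ← Nat.cast_pow, ZMod.natCast_self]
  have hkR : ((k : ℕ) : R) = (m : R) * q := by
    rw [hk, hq]; push_cast; simp only [R, Nat.cast_mul, Nat.cast_pow]
  set c : R := 2 * ((k:ℕ) : R)^2 with hc_def
  have hc : c * c = 0 := by
    rw [hc_def, hkR]
    linear_combination (4*(m:R)^4*q) * hq3
  set u : ℕ → R := fun i => ((i * (k - i) : ℕ) : R) with hu
  set S := (Finset.Icc 1 k).filter (fun i => ¬ p ∣ i) with hS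
  set S₁ := S.filter (fun i => 2*i < k) with hS1
  have hmem : ∀ i ∈ S₁, 1 ≤ i ∧ i ≤ k ∧ ¬ p ∣ i := by
    intro i hi
    rw [hS1, mem_filter, hS, mem_filter, mem_Icc] at hi
    exact ⟨hi.1.1.1, hi.1.1.2, hi.1.2⟩
  have hndvd : ∀ i ∈ S₁, ¬ p ∣ (i * (k - i)) := by
    intro i hi
    obtain ⟨h1, h2, h3⟩ := hmem i hi
    intro h
    rcases (Nat.Prime.dvd_mul hp).mp h with h' | h'
    · exact h3 h'
    · have : p ∣ i := by
        have := Nat.dvd_sub hpk h'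
        rwa [Nat.sub_sub_self h2] at this
      exact h3 this
  have huu : ∀ i ∈ S₁, IsUnit (u i) := by
    intro i hi
    exact GStarAux2.isUnit_cast hp (hndvd i hi)
  -- pairing for A
  have hA := GStarAux4.pair_prod p k hp hp3 hpk
    (fun i => (i : R) - 2*((k:ℕ) : R))
  have hB := GStarAux4.pair_prod p k hp hp3 hpk (fun i => (i : R))
  have hAfac : ∀ i ∈ S₁,
      ((i : R) - 2*((k:ℕ):R)) * (((k - i : ℕ) : R) - 2*((k:ℕ):R)) = u i + c := by
    intro i hi
    obtain ⟨h1, h2, h3⟩ := hmem i hi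
    rw [hu, hc_def]
    simp only
    push_cast [Nat.cast_sub h2]
    simp only [R, Nat.cast_mul, Nat.cast_sub h2]
    ring
  have hBfac : ∀ i ∈ S₁, (i : R) * ((k - i : ℕ) : R) = u i := by
    intro i hi
    obtain ⟨h1, h2, h3⟩ := hmem i hi
    rw [hu]
    simp only
    push_cast [Nat.cast_sub h2]
    simp only [R, Nat.cast_mul, Nat.cast_sub h2]
    try ring
  -- sum of inverses divisible by p^r
  have hinv_sum : ∃ d : R, ∑ j ∈ S₁, (u j)⁻¹ = q * d := by
    have h3r : r ≤ 3*r := by omega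
    have hcast0 : (ZMod.castHom (pow_dvd_pow p h3r) (ZMod (p^r)) (∑ j ∈ S₁, (u j)⁻¹)) = 0 := by
      rw [map_sum]
      have : ∀ j ∈ S₁, (ZMod.castHom (pow_dvd_pow p h3r) (ZMod (p^r)) ((u j)⁻¹))
          = ((j * (k - j) : ℕ) : ZMod (p^r))⁻¹ := by
        intro j hj
        rw [GStarAux6.castHom_inv p r (3*r) hp h3r _ (huu j hj)]
        rw [hu]
        simp only
        rw [map_natCast]
      rw [Finset.sum_congr rfl this]
      exact GStarAux7.sum_pair_inv p m r hp hp3 hm hr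
    obtain ⟨d, hd⟩ := GStarAux6.dvd_of_cast_zero p r (3*r) hp h3r (∑ j ∈ S₁, (u j)⁻¹) hcast0
    exact ⟨d, by rw [hq]; exact hd⟩
  -- expansion
  have hexp := GStarAux5.prod_add_c c hc u S₁
  have herase : ∑ j ∈ S₁, ∏ i ∈ S₁.erase j, u i
      = (∏ i ∈ S₁, u i) * ∑ j ∈ S₁, (u j)⁻¹ := by
    rw [Finset.mul_sum]
    refine Finset.sum_congr rfl ?_
    intro j hj
    have hmul := Finset.mul_prod_erase S₁ u hj
    have hju := huu j hj
    have hji : (u j)⁻¹ * u j = 1 := by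
      rw [mul_comm]; exact ZMod.mul_inv_of_unit _ hju
    calc ∏ i ∈ S₁.erase j, u i = ((u j)⁻¹ * u j) * ∏ i ∈ S₁.erase j, u i := by
          rw [hji, one_mul]
      _ = (u j)⁻¹ * (u j * ∏ i ∈ S₁.erase j, u i) := by ring
      _ = (∏ i ∈ S₁, u i) * (u j)⁻¹ := by rw [hmul]; ring
  obtain ⟨d, hd⟩ := hinv_sum
  have hzero : c * ∑ j ∈ S₁, ∏ i ∈ S₁.erase j, u i = 0 := by
    rw [herase, hd, hc_def, hkR]
    linear_combination (2*(m:R)^2*(∏ i ∈ S₁, u i)*d) * hq3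
  calc ∏ i ∈ S, ((i : R) - 2*((k:ℕ):R))
      = ∏ i ∈ S₁, (((i : R) - 2*((k:ℕ):R)) * (((k - i : ℕ) : R) - 2*((k:ℕ):R))) := hA
    _ = ∏ i ∈ S₁, (u i + c) := Finset.prod_congr rfl hAfac
    _ = ∏ i ∈ S₁, u i + c * ∑ j ∈ S₁, ∏ i ∈ S₁.erase j, u i := hexp
    _ = ∏ i ∈ S₁, u i := by rw [hzero, add_zero]
    _ = ∏ i ∈ S₁, ((i : R) * ((k - i : ℕ) : R)) := (Finset.prod_congr rfl hBfac).symm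
    _ = ∏ i ∈ S, (i : R) := hB.symm

end GStarAux8

end GStarAuxSection

theorem g_star_sub_one_padic (p : ℕ) (hp : p.Prime) (hp3 : 3 < p) (m r : ℕ)
    (hm : 1 ≤ m) (hr : 1 ≤ r) :
    padicNorm p
        ((∏ i ∈ (Finset.Icc 1 (m * p ^ r)).filter (fun i => ¬ p ∣ i),
            (1 - (2 * m * p ^ r : ℚ) / (i : ℚ))) - 1) ≤
      (p : ℚ) ^ (-(3 * r : ℤ)) := by
  haveI : Fact p.Prime := ⟨hp⟩
  haveI : NeZero (p^(3*r)) := ⟨pow_ne_zero _ hp.pos.ne'⟩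
  set S := (Finset.Icc 1 (m * p ^ r)).filter (fun i => ¬ p ∣ i) with hS
  have hSmem : ∀ i ∈ S, 1 ≤ i ∧ ¬ p ∣ i := by
    intro i hi
    rw [hS, Finset.mem_filter, Finset.mem_Icc] at hi
    exact ⟨hi.1.1, hi.2⟩
  have hprod : ∏ i ∈ S, (1 - (2 * m * p ^ r : ℚ) / (i : ℚ))
      = (∏ i ∈ S, ((i : ℚ) - 2 * m * p^r)) / (∏ i ∈ S, (i : ℚ)) := by
    rw [← Finset.prod_div_distrib]
    refine Finset.prod_congr rfl ?_
    intro i hi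
    have hi0 : (i : ℚ) ≠ 0 := Nat.cast_ne_zero.mpr (by have := (hSmem i hi).1; omega)
    field_simp
  set A : ℤ := ∏ i ∈ S, ((i : ℤ) - 2 * m * p^r) with hA
  set B : ℤ := ∏ i ∈ S, (i : ℤ) with hB
  have hAc : ((A : ℤ) : ℚ) = ∏ i ∈ S, ((i : ℚ) - 2 * m * p^r) := by
    rw [hA]; push_cast; rfl
  have hBc : ((B : ℤ) : ℚ) = ∏ i ∈ S, (i : ℚ) := by rw [hB]; push_cast; rfl
  have hpZ : Prime (p : ℤ) := Nat.prime_iff_prime_int.mp hp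
  have hpB : ¬ (p : ℤ) ∣ B := by
    intro h
    rw [hB] at h
    obtain ⟨i, hiS, hdvd⟩ := hpZ.exists_mem_finset_dvd h
    exact (hSmem i hiS).2 (Int.natCast_dvd_natCast.mp hdvd)
  have hB0 : ((B : ℤ) : ℚ) ≠ 0 := by
    intro h
    have hB00 : B = 0 := by exact_mod_cast h
    rw [hB00] at hpB
    exact hpB (dvd_zero _)
  -- the key divisibility
  have hdvdAB : ((p : ℤ))^(3*r) ∣ (A - B) := by
    have hzero : ((A - B : ℤ) : ZMod (p^(3*r))) = 0 := by
      push_cast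
      rw [sub_eq_zero, hA, hB]
      push_cast
      have key := GStarAux8.main_cong p m r hp hp3 hm hr
      calc ∏ i ∈ S, ((i : ZMod (p^(3*r))) - 2 * (m : ZMod (p^(3*r))) * (p : ZMod (p^(3*r)))^r)
          = ∏ i ∈ S, ((i : ZMod (p^(3*r))) - 2*((m*p^r : ℕ) : ZMod (p^(3*r)))) := by
            refine Finset.prod_congr rfl ?_
            intro i _
            push_cast
            ring
        _ = ∏ i ∈ S, (i : ZMod (p^(3*r))) := key
    have hdvd' := (ZMod.intCast_zmod_eq_zero_iff_dvd (A - B) (p^(3*r))).mp hzero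
    exact_mod_cast hdvd'
  -- rewrite the goal
  have hqrw : (∏ i ∈ S, (1 - (2 * m * p ^ r : ℚ) / (i : ℚ))) - 1
      = ((A - B : ℤ) : ℚ) / ((B : ℤ) : ℚ) := by
    rw [hprod, ← hAc, ← hBc]
    field_simp
    rw [Int.cast_sub]
  rw [hqrw, padicNorm.div, padicNorm.int_eq_one_iff B |>.mpr hpB, div_one]
  by_cases hAB : A - B = 0
  · rw [hAB]
    norm_num [padicNorm.zero]
    have hp0 : (0:ℚ) < (p:ℚ) := by exact_mod_cast hp.pos
    exact (zpow_pos hp0 _).le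
  · have hne : ((A - B : ℤ) : ℚ) ≠ 0 := Int.cast_ne_zero.mpr hAB
    rw [padicNorm.eq_zpow_of_nonzero hne]
    have hval : (3*r : ℕ) ≤ padicValInt p (A - B) := by
      rcases (padicValInt_dvd_iff (3*r) (A-B)).mp hdvdAB with h | h
      · exact absurd h hAB
      · exact h
    rw [padicValRat.of_int]
    apply zpow_le_zpow_right₀
    · exact_mod_cast hp.one_lt.le
    · have h1 : ((3*r : ℕ) : ℤ) ≤ (padicValInt p (A - B) : ℤ) := by exact_mod_cast hval
      push_cast at h1 ⊢
      omega
end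

section
/- Let p > 3 be prime, A ≥ 3, B ≥ 1 naturals, and m, n, r, s positive integers with s ≤ r and np^s ≤ mp^r. Then binom(mp^r, np^s)^A · binom(2np^s, np^s)^B ≡ binom(mp^{r-1}, np^{s-1})^A · binom(2np^{s-1}, np^{s-1})^B (mod p^{3r}). -/
open Finset

lemma fact_shift (c : ℕ) : ∀ M : ℕ, (Nat.factorial c) * ∏ k ∈ Finset.Ico 1 (M+1), (c + k) = Nat.factorial (c + M)
  | 0 => by simp
  | (M+1) => by
    rw [Finset.prod_Ico_succ_top (by omega), ← mul_assoc, fact_shift c M]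
    rw [show c + (M+1) = (c + M) + 1 by ring, Nat.factorial_succ]
    ring

lemma filter_dvd_image (p b : ℕ) (hp : 1 ≤ p) :
    (Finset.Ico 1 (b*p+1)).filter (fun k => p ∣ k) = (Finset.Ico 1 (b+1)).image (fun j => j * p) := by
  ext k
  simp only [Finset.mem_filter, Finset.mem_Ico, Finset.mem_image]
  constructor
  · rintro ⟨⟨h1, h2⟩, j, rfl⟩
    exact ⟨j, ⟨by nlinarith, by nlinarith⟩, (mul_comm j p)⟩
  · rintro ⟨j, ⟨h1, h2⟩, rfl⟩
    exact ⟨⟨by nlinarith, by nlinarith⟩, j, (mul_comm j p)⟩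

lemma prod_split (p b c : ℕ) (hp : 1 ≤ p) :
    ∏ k ∈ Finset.Ico 1 (b*p+1), (c*p + k)
    = p^b * (∏ j ∈ Finset.Ico 1 (b+1), (c + j)) *
      ∏ k ∈ (Finset.Ico 1 (b*p+1)).filter (fun k => ¬ p ∣ k), (c*p + k) := by
  rw [← Finset.prod_filter_mul_prod_filter_not (Finset.Ico 1 (b*p+1)) (fun k => p ∣ k)]
  congr 1
  rw [filter_dvd_image p b hp,
    Finset.prod_image (by intros x _ y _ h; exact Nat.eq_of_mul_eq_mul_right hp h)]
  have : ∀ j ∈ Finset.Ico 1 (b+1), c*p + j*p = (c+j)*p := by intros; ring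
  rw [Finset.prod_congr rfl this, Finset.prod_mul_distrib, Finset.prod_const]
  have hcard : (Finset.Ico 1 (b+1)).card = b := by rw [Nat.card_Ico]; omega
  rw [hcard]; ring

lemma choose_prod_eq (p : ℕ) (hp : 1 ≤ p) (b c : ℕ) :
    Nat.choose ((b+c)*p) (b*p) * ∏ k ∈ (Finset.Ico 1 (b*p+1)).filter (fun k => ¬ p ∣ k), k
    = Nat.choose (b+c) b * ∏ k ∈ (Finset.Ico 1 (b*p+1)).filter (fun k => ¬ p ∣ k), (c*p + k) := by
  have h0 : ∀ k, 0*p + k = k := by intro k; ring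
  have h1 : (c*p).factorial * ∏ k ∈ Finset.Ico 1 (b*p+1), (c*p + k) = ((b+c)*p).factorial := by
    rw [fact_shift]; congr 1; ring
  have h6 := prod_split p b c hp
  have h2 : (b*p).factorial = p^b * b.factorial * ∏ k ∈ (Finset.Ico 1 (b*p+1)).filter (fun k => ¬ p ∣ k), k := by
    have e0 : (∏ k ∈ Finset.Ico 1 (b*p+1), k) = (b*p).factorial := Finset.prod_Ico_id_eq_factorial _
    have e1 := prod_split p b 0 hp
    simp only [h0, zero_add] at e1
    rw [← e0, e1, Finset.prod_Ico_id_eq_factorial]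
  have h3 : c.factorial * ∏ j ∈ Finset.Ico 1 (b+1), (c+j) = (b+c).factorial := by
    rw [fact_shift]; congr 1; ring
  have h4 : Nat.choose ((b+c)*p) (b*p) * (b*p).factorial * (c*p).factorial = ((b+c)*p).factorial := by
    have hle : b*p ≤ (b+c)*p := Nat.mul_le_mul_right _ (by omega)
    have := Nat.choose_mul_factorial_mul_factorial hle
    rwa [show (b+c)*p - b*p = c*p by rw [Nat.add_mul]; omega] at this
  have h5 : Nat.choose (b+c) b * b.factorial * c.factorial = (b+c).factorial := by
    have := Nat.choose_mul_factorial_mul_factorial (show b ≤ b+c by omega)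
    rwa [show b+c-b = c by omega] at this
  have hpos : 0 < p^b * b.factorial * c.factorial * (c*p).factorial :=
    Nat.mul_pos (Nat.mul_pos (Nat.mul_pos (Nat.pow_pos hp) (Nat.factorial_pos _)) (Nat.factorial_pos _)) (Nat.factorial_pos _)
  apply Nat.eq_of_mul_eq_mul_right hpos
  set X := Nat.choose ((b+c)*p) (b*p) with hX
  set Y := Nat.choose (b+c) b with hY
  set P0 := ∏ k ∈ (Finset.Ico 1 (b*p+1)).filter (fun k => ¬ p ∣ k), k with hP0v
  set Pc := ∏ k ∈ (Finset.Ico 1 (b*p+1)).filter (fun k => ¬ p ∣ k), (c*p + k) with hPcv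
  set F := ∏ k ∈ Finset.Ico 1 (b*p+1), (c*p + k) with hF
  set W := ∏ j ∈ Finset.Ico 1 (b+1), (c+j) with hW
  zify at h1 h2 h3 h4 h5 h6 ⊢
  linear_combination (-(X : ℤ) * c.factorial * (c*p).factorial) * h2
    + (c.factorial : ℤ) * h4 - (c.factorial : ℤ) * h1
    + ((c.factorial : ℤ) * (c*p).factorial) * h6
    + ((c*p).factorial : ℤ) * p^b * Pc * h3
    - ((c*p).factorial : ℤ) * p^b * Pc * h5

section pairing
variable {M : Type*} [CommMonoid M] {N : Type*} [AddCommMonoid N]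

lemma mem_pair_shift {p b k : ℕ} (hp : p.Prime) (h2 : p ≠ 2)
    (hk : k ∈ ((Finset.Ico 1 (b*p+1)).filter (fun k => ¬ p ∣ k)).filter (fun k => ¬ 2*k < b*p)) :
    b*p - k ∈ ((Finset.Ico 1 (b*p+1)).filter (fun k => ¬ p ∣ k)).filter (fun k => 2*k < b*p) ∧
      b*p - (b*p - k) = k := by
  simp only [Finset.mem_filter, Finset.mem_Ico] at hk ⊢
  obtain ⟨⟨⟨hk1, hk2⟩, hkd⟩, hk3⟩ := hk
  have hbp : p ∣ b*p := ⟨b, mul_comm b p⟩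
  have hne : k ≠ b*p := by rintro rfl; exact hkd hbp
  have hne2 : 2*k ≠ b*p := by
    intro h
    rcases (Nat.Prime.dvd_mul hp).1 (h ▸ hbp) with h' | h'
    · exact h2 (((Nat.prime_dvd_prime_iff_eq hp Nat.prime_two).1 h'))
    · exact hkd h'
  have hklt : k < b*p := by omega
  refine ⟨⟨⟨⟨by omega, by omega⟩, ?_⟩, by omega⟩, by omega⟩
  intro hd
  exact hkd (by have := Nat.dvd_sub hbp hd; rwa [show b*p - (b*p-k) = k by omega] at this)

lemma mem_pair_shift' {p b k : ℕ} (hp : p.Prime)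
    (hk : k ∈ ((Finset.Ico 1 (b*p+1)).filter (fun k => ¬ p ∣ k)).filter (fun k => 2*k < b*p)) :
    b*p - k ∈ ((Finset.Ico 1 (b*p+1)).filter (fun k => ¬ p ∣ k)).filter (fun k => ¬ 2*k < b*p) ∧
      b*p - (b*p - k) = k := by
  simp only [Finset.mem_filter, Finset.mem_Ico] at hk ⊢
  obtain ⟨⟨⟨hk1, hk2⟩, hkd⟩, hk3⟩ := hk
  have hbp : p ∣ b*p := ⟨b, mul_comm b p⟩
  refine ⟨⟨⟨⟨by omega, by omega⟩, ?_⟩, by omega⟩, by omega⟩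
  intro hd
  exact hkd (by have := Nat.dvd_sub hbp hd; rwa [show b*p - (b*p-k) = k by omega] at this)

lemma pair_prod (p b : ℕ) (hp : p.Prime) (h2 : p ≠ 2) (f : ℕ → M) :
    ∏ k ∈ (Finset.Ico 1 (b*p+1)).filter (fun k => ¬ p ∣ k), f k
    = ∏ k ∈ ((Finset.Ico 1 (b*p+1)).filter (fun k => ¬ p ∣ k)).filter (fun k => 2*k < b*p),
        (f k * f (b*p - k)) := by
  have hswap : ∏ k ∈ ((Finset.Ico 1 (b*p+1)).filter (fun k => ¬ p ∣ k)).filter (fun k => ¬ 2*k < b*p), f k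
      = ∏ k ∈ ((Finset.Ico 1 (b*p+1)).filter (fun k => ¬ p ∣ k)).filter (fun k => 2*k < b*p), f (b*p - k) :=
    Finset.prod_nbij' (fun k => b*p - k) (fun k => b*p - k)
      (fun k hk => (mem_pair_shift hp h2 hk).1) (fun k hk => (mem_pair_shift' hp hk).1)
      (fun k hk => (mem_pair_shift hp h2 hk).2) (fun k hk => (mem_pair_shift' hp hk).2)
      (fun k hk => congrArg f ((mem_pair_shift hp h2 hk).2).symm)
  symm
  rw [Finset.prod_mul_distrib, ← hswap,
    ← Finset.prod_union (Finset.disjoint_filter_filter_not _ _ _),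
    Finset.filter_union_filter_not_eq]

lemma pair_sum (p b : ℕ) (hp : p.Prime) (h2 : p ≠ 2) (f : ℕ → N) :
    ∑ k ∈ (Finset.Ico 1 (b*p+1)).filter (fun k => ¬ p ∣ k), f k
    = ∑ k ∈ ((Finset.Ico 1 (b*p+1)).filter (fun k => ¬ p ∣ k)).filter (fun k => 2*k < b*p),
        (f k + f (b*p - k)) := by
  have hswap : ∑ k ∈ ((Finset.Ico 1 (b*p+1)).filter (fun k => ¬ p ∣ k)).filter (fun k => ¬ 2*k < b*p), f k
      = ∑ k ∈ ((Finset.Ico 1 (b*p+1)).filter (fun k => ¬ p ∣ k)).filter (fun k => 2*k < b*p), f (b*p - k) :=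
    Finset.sum_nbij' (fun k => b*p - k) (fun k => b*p - k)
      (fun k hk => (mem_pair_shift hp h2 hk).1) (fun k hk => (mem_pair_shift' hp hk).1)
      (fun k hk => (mem_pair_shift hp h2 hk).2) (fun k hk => (mem_pair_shift' hp hk).2)
      (fun k hk => congrArg f ((mem_pair_shift hp h2 hk).2).symm)
  symm
  rw [Finset.sum_add_distrib, ← hswap,
    ← Finset.sum_union (Finset.disjoint_filter_filter_not _ _ _),
    Finset.filter_union_filter_not_eq]

end pairing

lemma prod_add_sq_zero {R : Type*} [CommRing R] (d : R) (hd : d*d = 0) (u : ℕ → R) (S : Finset ℕ) :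
    ∏ i ∈ S, (u i + d) = (∏ i ∈ S, u i) + d * ∑ i ∈ S, ∏ j ∈ S.erase i, u j := by
  induction S using Finset.induction_on with
  | empty => simp
  | @insert a S ha ih =>
    rw [Finset.prod_insert ha, ih, Finset.prod_insert ha, Finset.sum_insert ha,
      Finset.erase_insert ha]
    have hstep : ∀ i ∈ S, ∏ j ∈ (insert a S).erase i, u j = u a * ∏ j ∈ S.erase i, u j := by
      intro i hi
      rw [Finset.erase_insert_of_ne (by rintro rfl; exact ha hi),
        Finset.prod_insert (fun h => ha (Finset.mem_of_mem_erase h))]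
    rw [Finset.sum_congr rfl hstep, ← Finset.mul_sum]
    linear_combination (∑ i ∈ S, ∏ j ∈ S.erase i, u j) * hd

lemma units_sum_inv_sq_zero (p t : ℕ) [NeZero (p^t)] (hp : p.Prime) (hp3 : 3 < p) :
    ∑ x : (ZMod (p^t))ˣ, ((x⁻¹ : (ZMod (p^t))ˣ) : ZMod (p^t))^2 = 0 := by
  have hc2 : Nat.Coprime 2 (p^t) :=
    Nat.Coprime.pow_right _ ((Nat.coprime_primes Nat.prime_two hp).2 (by omega))
  have hc3 : Nat.Coprime 3 (p^t) :=
    Nat.Coprime.pow_right _ ((Nat.coprime_primes Nat.prime_three hp).2 (by omega))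
  set R := ZMod (p^t) with hR
  set u2 : Rˣ := ZMod.unitOfCoprime 2 hc2 with hu2
  set u3 : Rˣ := ZMod.unitOfCoprime 3 hc3 with hu3
  set S := ∑ x : Rˣ, ((x⁻¹ : Rˣ) : R)^2 with hSdef
  have h2v : (u2 : R) = 2 := by
    rw [hu2, ZMod.coe_unitOfCoprime]; norm_num
  have h3v : (u3 : R) = 3 := by
    rw [hu3, ZMod.coe_unitOfCoprime]; norm_num
  have key : S = ((u2⁻¹ : Rˣ) : R)^2 * S := by
    have heq := Fintype.sum_equiv (Equiv.mulLeft u2)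
      (fun x : Rˣ => (((u2*x)⁻¹ : Rˣ) : R)^2) (fun x : Rˣ => ((x⁻¹ : Rˣ) : R)^2)
      (fun x => rfl)
    conv_lhs => rw [hSdef, ← heq]
    rw [hSdef, Finset.mul_sum]
    apply Finset.sum_congr rfl
    intro x _
    show (((u2*x)⁻¹ : Rˣ) : R)^2 = ((u2⁻¹ : Rˣ) : R)^2 * ((x⁻¹ : Rˣ) : R)^2
    rw [mul_inv_rev, Units.val_mul]
    ring
  have h4 : ((u2 : R))^2 * ((u2⁻¹ : Rˣ) : R)^2 = 1 := by
    rw [← mul_pow, Units.mul_inv, one_pow]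
  have e1 : ((u2 : R))^2 * S = S := by
    nth_rewrite 1 [key]
    rw [← mul_assoc, h4, one_mul]
  have h3S : (3 : R) * S = 0 := by
    have e2 : (3 : R) * S = ((u2 : R))^2 * S - S := by rw [h2v]; ring
    rw [e2, e1, sub_self]
  calc S = ((u3⁻¹ : Rˣ) : R) * ((u3 : R) * S) := by
        rw [← mul_assoc, Units.inv_mul, one_mul]
    _ = 0 := by rw [h3v, h3S, mul_zero]

lemma range_sum_inv_sq_zero (p t : ℕ) (hp : p.Prime) (hp3 : 3 < p) (ht : 1 ≤ t) :
    ∑ k ∈ (Finset.range (p^t)).filter (fun k => ¬ p ∣ k), (((k : ZMod (p^t)))⁻¹)^2 = 0 := by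
  haveI : NeZero (p^t) := ⟨pow_ne_zero t hp.ne_zero⟩
  have hcop : ∀ k ∈ (Finset.range (p^t)).filter (fun k => ¬ p ∣ k), Nat.Coprime k (p^t) := by
    intro k hk
    simp only [Finset.mem_filter, Finset.mem_range] at hk
    exact Nat.Coprime.pow_right _ (Nat.Coprime.symm ((Nat.Prime.coprime_iff_not_dvd hp).2 hk.2))
  rw [show (0 : ZMod (p^t)) = ∑ x : (ZMod (p^t))ˣ, ((x⁻¹ : (ZMod (p^t))ˣ) : ZMod (p^t))^2 from
    (units_sum_inv_sq_zero p t hp hp3).symm]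
  refine Finset.sum_bij' (fun k hk => ZMod.unitOfCoprime k (hcop k hk))
    (fun (u : (ZMod (p^t))ˣ) _ => (u : ZMod (p^t)).val) (fun k hk => Finset.mem_univ _)
    ?_ ?_ ?_ ?_
  · intro u _
    simp only [Finset.mem_filter, Finset.mem_range]
    refine ⟨ZMod.val_lt _, fun hdvd => ?_⟩
    have hcu := ZMod.val_coe_unit_coprime u
    have hdg : p ∣ Nat.gcd ((u : ZMod (p^t)).val) (p^t) :=
      Nat.dvd_gcd hdvd (dvd_pow_self p (by omega))
    rw [hcu] at hdg
    have := Nat.le_of_dvd one_pos hdg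
    have := hp.two_le
    omega
  · intro k hk
    simp only [Finset.mem_filter, Finset.mem_range] at hk
    simp only [ZMod.coe_unitOfCoprime]
    exact ZMod.val_cast_of_lt hk.1
  · intro u _
    ext
    simp only [ZMod.coe_unitOfCoprime]
    exact ZMod.natCast_rightInverse _
  · intro k hk
    rw [← ZMod.coe_unitOfCoprime k (hcop k hk), ZMod.inv_coe_unit]

lemma blocks_sum_inv_sq_zero (p t : ℕ) (hp : p.Prime) (hp3 : 3 < p) (ht : 1 ≤ t) :
    ∀ T : ℕ, ∑ k ∈ (Finset.range (T * p^t)).filter (fun k => ¬ p ∣ k),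
      (((k : ZMod (p^t)))⁻¹)^2 = 0
  | 0 => by simp
  | (T+1) => by
    have h1 := blocks_sum_inv_sq_zero p t hp hp3 ht T
    have h2 := range_sum_inv_sq_zero p t hp hp3 ht
    rw [Finset.sum_filter] at h1 h2 ⊢
    rw [show (T+1) * p^t = T * p^t + p^t by ring, Finset.sum_range_add, h1, zero_add]
    conv_rhs => rw [← h2]
    refine Finset.sum_congr rfl fun k _ => ?_
    have hdvd : p ∣ T * p^t := Dvd.dvd.mul_left (dvd_pow_self p (by omega)) T
    have hiff : (¬ p ∣ T * p^t + k) ↔ (¬ p ∣ k) := by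
      constructor
      · intro h hk; exact h (Nat.dvd_add hdvd hk)
      · intro h hk; exact h ((Nat.dvd_add_right hdvd).1 hk)
    have hcast : ((T * p^t + k : ℕ) : ZMod (p^t)) = (k : ZMod (p^t)) := by
      rw [Nat.cast_add, (ZMod.natCast_eq_zero_iff (T * p^t) (p^t)).2 ⟨T, mul_comm T (p^t)⟩,
        zero_add]
    rw [hcast]
    by_cases h : p ∣ k
    · rw [if_neg (by simpa [hiff] using h), if_neg (by simpa using h)]
    · rw [if_pos (hiff.2 h), if_pos h]

lemma zmod_inv_eq_of_mul_eq_one {n : ℕ} (a b : ZMod n) (h : a * b = 1) : a⁻¹ = b := by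
  have ha : IsUnit a := IsUnit.of_mul_eq_one b h
  calc a⁻¹ = a⁻¹ * (a * b) := by rw [h, mul_one]
    _ = (a * a⁻¹) * b := by ring
    _ = b := by rw [ZMod.mul_inv_of_unit a ha, one_mul]

lemma cast_unit_of_not_dvd {p M k : ℕ} (hp : p.Prime) (h : ¬ p ∣ k) :
    IsUnit ((k : ℕ) : ZMod (p^M)) := by
  rw [ZMod.isUnit_iff_coprime]
  exact Nat.Coprime.pow_right M (((Nat.Prime.coprime_iff_not_dvd hp).2 h).symm)

lemma pair_mul_identity (c p b k w : ℕ) (hsum : k + w = b*p) :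
    (c*p + k) * (c*p + w) = k*w + (b+c)*c*p^2 := by
  zify
  zify at hsum
  linear_combination (c : ℤ) * p * hsum

lemma jacobsthal (p : ℕ) (hp : p.Prime) (hp3 : 3 < p) (b c α β γ : ℕ)
    (hadvd : p^α ∣ (b+c)) (hbdvd : p^β ∣ b) (hcdvd : p^γ ∣ c)
    (hcond : β ≤ 1 + α + γ) :
    Nat.choose ((b+c)*p) (b*p) ≡ Nat.choose (b+c) b [MOD p^(3+α+β+γ)] := by
  have hp1 : 1 ≤ p := hp.one_lt.le
  have hp2 : p ≠ 2 := by omega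
  set N := 3+α+β+γ with hN
  set R := ZMod (p^N) with hR
  set R' := ZMod (p^(1+β)) with hR'
  set K := (Finset.Ico 1 (b*p+1)).filter (fun k => ¬ p ∣ k) with hK
  set K1 := K.filter (fun k => 2*k < b*p) with hK1
  have hmemK1 : ∀ k ∈ K1, 1 ≤ k ∧ k ≤ b*p ∧ ¬ p ∣ k ∧ ¬ p ∣ (b*p - k) := by
    intro k hk
    rw [hK1, Finset.mem_filter, hK, Finset.mem_filter, Finset.mem_Ico] at hk
    obtain ⟨⟨⟨h1, h2⟩, hd⟩, h3⟩ := hk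
    refine ⟨h1, by omega, hd, fun hdvd => hd ?_⟩
    have hbp : p ∣ b*p := ⟨b, mul_comm b p⟩
    have := Nat.dvd_sub hbp hdvd
    rwa [show b*p - (b*p - k) = k by omega] at this
  have hbpd : (p:ℕ)^(1+β) ∣ b*p := by
    rw [add_comm, pow_succ]
    exact Nat.mul_dvd_mul hbdvd dvd_rfl
  -- sum over all of K of inverse squares vanishes in R'
  have hsumK : ∑ k ∈ K, (((k : R'))⁻¹)^2 = 0 := by
    have hTb : (b / p^β) * p^(1+β) = b*p := by
      rw [add_comm 1 β, pow_succ, ← mul_assoc, Nat.div_mul_cancel hbdvd]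
    have hfin : K = (Finset.range ((b / p^β) * p^(1+β))).filter (fun k => ¬ p ∣ k) := by
      rw [hTb, hK]
      ext k
      simp only [Finset.mem_filter, Finset.mem_Ico, Finset.mem_range]
      constructor
      · rintro ⟨⟨h1, h2⟩, hd⟩
        have : k ≠ b*p := by rintro rfl; exact hd ⟨b, mul_comm b p⟩
        exact ⟨by omega, hd⟩
      · rintro ⟨h1, hd⟩
        have : k ≠ 0 := by rintro rfl; exact hd (dvd_zero p)
        exact ⟨⟨by omega, by omega⟩, hd⟩
    rw [hfin]
    exact blocks_sum_inv_sq_zero p (1+β) hp hp3 (by omega) _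
  -- sum over K1 of inverse squares vanishes in R'
  have hsumK1 : ∑ k ∈ K1, (((k : R'))⁻¹)^2 = 0 := by
    have hpair := pair_sum p b hp hp2 (fun k => (((k : R'))⁻¹)^2)
    rw [← hK, ← hK1] at hpair
    have hterm : ∀ k ∈ K1, (((b*p - k : ℕ) : R'))⁻¹^2 = (((k : R'))⁻¹)^2 := by
      intro k hk
      obtain ⟨h1, h2, hd, hd'⟩ := hmemK1 k hk
      have hcast : ((b*p - k : ℕ) : R') = - (k : R') := by
        rw [Nat.cast_sub h2, (ZMod.natCast_eq_zero_iff (b*p) (p^(1+β))).2 hbpd]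
        ring
      have hxu : IsUnit ((k:ℕ) : R') := cast_unit_of_not_dvd hp hd
      have hinv : (-(k : R'))⁻¹ = -(((k : R'))⁻¹) := by
        apply zmod_inv_eq_of_mul_eq_one
        rw [neg_mul_neg, ZMod.mul_inv_of_unit _ hxu]
      rw [hcast, hinv]
      ring
    have h2S : ∑ k ∈ K, (((k : R'))⁻¹)^2 = 2 * ∑ k ∈ K1, (((k : R'))⁻¹)^2 := by
      rw [hpair, Finset.mul_sum]
      refine Finset.sum_congr rfl fun k hk => ?_
      rw [hterm k hk]
      ring
    have h2u : Nat.Coprime 2 (p^(1+β)) :=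
      Nat.Coprime.pow_right _ ((Nat.coprime_primes Nat.prime_two hp).2 (by omega))
    have hz : (2 : R') * ∑ k ∈ K1, (((k : R'))⁻¹)^2 = 0 := by rw [← h2S, hsumK]
    have := Units.mul_right_eq_zero (u := ZMod.unitOfCoprime 2 h2u)
      (a := ∑ k ∈ K1, (((k : R'))⁻¹)^2)
    rw [ZMod.coe_unitOfCoprime] at this
    rw [← this]
    exact_mod_cast hz
  -- names for the three nat-level quantities
  set X := Nat.choose ((b+c)*p) (b*p) with hX
  set Y := Nat.choose (b+c) b with hY
  set P0nat := ∏ k ∈ K, k with hP0nat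
  set Pcnat := ∏ k ∈ K, (c*p + k) with hPcnat
  set dnat := (b+c)*c*p^2 with hdnat
  set Enat := ∑ k ∈ K1, ∏ j ∈ K1.erase k, (j*(b*p-j)) with hEnat
  -- d is square zero in R
  have hdd : ((dnat : ℕ) : R) * ((dnat : ℕ) : R) = 0 := by
    rw [← Nat.cast_mul, ZMod.natCast_eq_zero_iff]
    have h1 : p^(2+α+γ) ∣ dnat := by
      rw [hdnat, show (2:ℕ)+α+γ = α+γ+2 by omega, pow_add, pow_add]
      exact Nat.mul_dvd_mul (Nat.mul_dvd_mul hadvd hcdvd) dvd_rfl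
    calc (p:ℕ)^N ∣ p^(2+α+γ) * p^(2+α+γ) := by
          rw [← pow_add]; exact pow_dvd_pow p (by omega)
      _ ∣ dnat * dnat := Nat.mul_dvd_mul h1 h1
  -- expansion of the paired product in R
  have hexp := prod_add_sq_zero ((dnat : ℕ) : R) hdd (fun j => ((j*(b*p-j) : ℕ) : R)) K1
  -- P0 in R equals the K1-product A
  have hP0R : ((P0nat : ℕ) : R) = ∏ k ∈ K1, ((k*(b*p-k) : ℕ) : R) := by
    rw [hP0nat, Nat.cast_prod, pair_prod p b hp hp2 (fun k => ((k:ℕ) : R)), ← hK, ← hK1]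
    exact Finset.prod_congr rfl fun k hk => by rw [← Nat.cast_mul]
  -- Pc in R equals the expanded form
  have hPcR : ((Pcnat : ℕ) : R)
      = (∏ k ∈ K1, ((k*(b*p-k) : ℕ) : R))
        + ((dnat : ℕ) : R) * ∑ k ∈ K1, ∏ j ∈ K1.erase k, ((j*(b*p-j) : ℕ) : R) := by
    rw [hPcnat, Nat.cast_prod, pair_prod p b hp hp2 (fun k => ((c*p + k : ℕ) : R)), ← hK, ← hK1]
    rw [show (∏ k ∈ K1, (((c*p + k : ℕ) : R) * ((c*p + (b*p - k) : ℕ) : R)))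
        = ∏ k ∈ K1, (((k*(b*p-k) : ℕ) : R) + ((dnat : ℕ) : R)) from
      Finset.prod_congr rfl fun k hk => by
        obtain ⟨h1, h2, hd, hd'⟩ := hmemK1 k hk
        rw [← Nat.cast_mul, pair_mul_identity c p b k (b*p - k) (by omega), hdnat, Nat.cast_add]]
    exact hexp
  -- the sum Enat vanishes mod p^(1+β)
  have hS' : ((Enat : ℕ) : R') = 0 := by
    rw [hEnat, Nat.cast_sum]
    have hcastprod : ∀ k ∈ K1, ((∏ j ∈ K1.erase k, (j*(b*p-j)) : ℕ) : R')
        = ∏ j ∈ K1.erase k, ((j*(b*p-j) : ℕ) : R') := fun k _ => Nat.cast_prod _ _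
    rw [Finset.sum_congr rfl hcastprod]
    have hvk : ∀ k ∈ K1, ((k*(b*p-k) : ℕ) : R') * (-((((k:ℕ) : R'))⁻¹)^2) = 1 := by
      intro k hk
      obtain ⟨h1, h2, hd, hd'⟩ := hmemK1 k hk
      have hv : ((k*(b*p-k) : ℕ) : R') = -(((k:ℕ) : R'))^2 := by
        rw [Nat.cast_mul, Nat.cast_sub h2,
          (ZMod.natCast_eq_zero_iff (b*p) (p^(1+β))).2 hbpd]
        ring
      have hxu := cast_unit_of_not_dvd (M := 1+β) hp hd
      have hmi := ZMod.mul_inv_of_unit _ hxu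
      calc ((k*(b*p-k) : ℕ) : R') * (-((((k:ℕ) : R'))⁻¹)^2)
          = (((k:ℕ) : R') * (((k:ℕ) : R'))⁻¹)^2 := by rw [hv]; ring
        _ = 1 := by rw [hmi]; norm_num
    have hterm : ∀ k ∈ K1, (∏ j ∈ K1.erase k, ((j*(b*p-j) : ℕ) : R'))
        = (∏ j ∈ K1, ((j*(b*p-j) : ℕ) : R')) * (-((((k:ℕ) : R'))⁻¹)^2) := by
      intro k hk
      have hprod := Finset.prod_erase_mul K1 (fun j => ((j*(b*p-j) : ℕ) : R')) hk
      calc (∏ j ∈ K1.erase k, ((j*(b*p-j) : ℕ) : R'))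
          = (∏ j ∈ K1.erase k, ((j*(b*p-j) : ℕ) : R'))
            * (((k*(b*p-k) : ℕ) : R') * (-((((k:ℕ) : R'))⁻¹)^2)) := by rw [hvk k hk, mul_one]
        _ = ((∏ j ∈ K1.erase k, ((j*(b*p-j) : ℕ) : R')) * ((k*(b*p-k) : ℕ) : R'))
            * (-((((k:ℕ) : R'))⁻¹)^2) := by ring
        _ = (∏ j ∈ K1, ((j*(b*p-j) : ℕ) : R')) * (-((((k:ℕ) : R'))⁻¹)^2) := by rw [hprod]
    rw [Finset.sum_congr rfl hterm, ← Finset.mul_sum]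
    have hneg : (∑ k ∈ K1, -((((k:ℕ) : R'))⁻¹)^2) = -∑ k ∈ K1, ((((k:ℕ) : R'))⁻¹)^2 := by
      rw [Finset.sum_neg_distrib]
    rw [hneg, hsumK1, neg_zero, mul_zero]
  -- hence d * E = 0 in R
  have hdE : ((dnat : ℕ) : R) * ((Enat : ℕ) : R) = 0 := by
    rw [← Nat.cast_mul, ZMod.natCast_eq_zero_iff]
    have h1 : p^(2+α+γ) ∣ dnat := by
      rw [hdnat, show (2:ℕ)+α+γ = α+γ+2 by omega, pow_add, pow_add]
      exact Nat.mul_dvd_mul (Nat.mul_dvd_mul hadvd hcdvd) dvd_rfl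
    have h2 : p^(1+β) ∣ Enat := (ZMod.natCast_eq_zero_iff _ _).1 hS'
    calc (p:ℕ)^N ∣ p^(2+α+γ) * p^(1+β) := by rw [← pow_add]; exact pow_dvd_pow p (by omega)
      _ ∣ dnat * Enat := Nat.mul_dvd_mul h1 h2
  -- conclude Pc = P0 in R
  have hER : (∑ k ∈ K1, ∏ j ∈ K1.erase k, ((j*(b*p-j) : ℕ) : R)) = ((Enat : ℕ) : R) := by
    rw [hEnat, Nat.cast_sum]
    exact Finset.sum_congr rfl fun k _ => (Nat.cast_prod _ _).symm
  have hPceqP0 : ((Pcnat : ℕ) : R) = ((P0nat : ℕ) : R) := by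
    rw [hPcR, hER, hdE, add_zero, hP0R]
  -- the main identity, cast to R
  have hid := choose_prod_eq p hp1 b c
  rw [← hP0nat, ← hPcnat, ← hX, ← hY] at hid
  have hidR : ((X : ℕ) : R) * ((P0nat : ℕ) : R) = ((Y : ℕ) : R) * ((P0nat : ℕ) : R) := by
    have := congrArg (fun z : ℕ => ((z : ℕ) : R)) hid
    rw [Nat.cast_mul, Nat.cast_mul] at this
    rw [this, hPceqP0]
  have hP0unit : IsUnit ((P0nat : ℕ) : R) := by
    rw [hP0nat, Nat.cast_prod]
    refine Finset.prod_induction _ IsUnit (fun a b ha hb => ha.mul hb) isUnit_one ?_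
    intro k hk
    rw [hK, Finset.mem_filter] at hk
    exact cast_unit_of_not_dvd hp hk.2
  exact (ZMod.natCast_eq_natCast_iff _ _ _).1 (IsUnit.mul_right_cancel hP0unit hidR)

lemma pow_dvd_choose_of_dvd (p : ℕ) (hp : p.Prime) {Nn Kk ρ σ n' : ℕ}
    (hK1 : 1 ≤ Kk) (hKN : Kk ≤ Nn) (hNd : p^ρ ∣ Nn)
    (hKeq : Kk = p^σ * n') (hnd : ¬ p ∣ n') :
    p^(ρ - σ) ∣ Nat.choose Nn Kk := by
  rcases le_or_gt ρ σ with h | h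
  · rw [show ρ - σ = 0 by omega, pow_zero]; exact one_dvd _
  · obtain ⟨N1, rfl⟩ : ∃ N1, Nn = N1 + 1 := ⟨Nn - 1, by omega⟩
    obtain ⟨K1', rfl⟩ : ∃ K1', Kk = K1' + 1 := ⟨Kk - 1, by omega⟩
    have hidng := Nat.add_one_mul_choose_eq N1 K1'
    -- (N1+1) * choose N1 K1' = choose (N1+1) (K1'+1) * (K1'+1)
    have hdvd : p^ρ ∣ Nat.choose (N1+1) (K1'+1) * (K1'+1) := by
      rw [← hidng]
      exact Dvd.dvd.mul_right hNd _
    rw [show p^ρ = p^(ρ-σ) * p^σ by rw [← pow_add]; congr 1; omega] at hdvd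
    have hps : 0 < p^σ := Nat.pow_pos hp.pos
    have hdvd2 : p^(ρ-σ) * p^σ ∣ (Nat.choose (N1+1) (K1'+1) * n') * p^σ := by
      rw [show (Nat.choose (N1+1) (K1'+1) * n') * p^σ
        = Nat.choose (N1+1) (K1'+1) * (p^σ * n') by ring, ← hKeq]
      exact hdvd
    have h2 : p^(ρ-σ) ∣ Nat.choose (N1+1) (K1'+1) * n' :=
      (Nat.mul_dvd_mul_iff_right hps).1 hdvd2
    have hcop : Nat.Coprime (p^(ρ-σ)) n' :=
      Nat.Coprime.pow_left _ ((Nat.Prime.coprime_iff_not_dvd hp).2 hnd)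
    exact hcop.dvd_of_dvd_mul_right h2

lemma dvd_monomial {x y D : ℤ} (i j : ℕ) (hx : D ∣ x) (hy : D ∣ y) (hij : 2 ≤ i + j) :
    D^2 ∣ x^i * y^j := by
  rcases i with _ | _ | i
  · have h2 : D^2 ∣ y^j := dvd_trans (by rw [sq, sq]; exact mul_dvd_mul hy hy)
      (pow_dvd_pow y (by omega))
    simpa using h2
  · have h2 : D^2 ∣ x * y^j := by
      rw [sq]
      exact mul_dvd_mul hx (dvd_pow hy (by omega))
    simpa using h2
  · exact dvd_mul_of_dvd_left (dvd_trans (by rw [sq, sq]; exact mul_dvd_mul hx hx)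
      (pow_dvd_pow x (by omega))) _

theorem summand_congruence_A_ge_three (p : ℕ) (hp : p.Prime) (hp3 : 3 < p)
    (A B m n r s : ℕ) (hA : 3 ≤ A) (hB : 1 ≤ B) (hm : 1 ≤ m) (hn : 1 ≤ n)
    (hs : 1 ≤ s) (hsr : s ≤ r) (hle : n * p ^ s ≤ m * p ^ r) :
    (Nat.choose (m * p ^ r) (n * p ^ s)) ^ A * (Nat.choose (2 * (n * p ^ s)) (n * p ^ s)) ^ B ≡
      (Nat.choose (m * p ^ (r - 1)) (n * p ^ (s - 1))) ^ A *
        (Nat.choose (2 * (n * p ^ (s - 1))) (n * p ^ (s - 1))) ^ B [MOD p ^ (3 * r)] := by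
  have hp1 : 1 ≤ p := hp.one_lt.le
  have hr : 1 ≤ r := le_trans hs hsr
  set e := n.factorization p with he
  set f := m.factorization p with hf
  set σ := s + e with hσ
  set ρ := r + f with hρ
  set n' := n / p^e with hn'
  have hnsplit : p^e * n' = n := Nat.ordProj_mul_ordCompl_eq_self n p
  have hnd : ¬ p ∣ n' := Nat.not_dvd_ordCompl hp (by omega)
  have hfd : p^f ∣ m := Nat.ordProj_dvd m p
  have hXKeq : n * p^s = p^σ * n' := by rw [hσ, pow_add, ← hnsplit]; ring
  have hXKeq' : n * p^(s-1) = p^(σ-1) * n' := by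
    rw [show σ-1 = (s-1) + e by omega, pow_add, ← hnsplit]; ring
  have hble : n * p^(s-1) ≤ m * p^(r-1) := by
    have h1 : n * p^(s-1) * p = n * p^s := by
      rw [mul_assoc, ← pow_succ, Nat.sub_add_cancel hs]
    have h2 : m * p^(r-1) * p = m * p^r := by
      rw [mul_assoc, ← pow_succ, Nat.sub_add_cancel hr]
    have h3 := hle
    rw [← h1, ← h2] at h3
    exact Nat.le_of_mul_le_mul_right h3 hp.pos
  set c := m * p^(r-1) - n * p^(s-1) with hc
  have hbc : n*p^(s-1) + c = m*p^(r-1) := by omega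
  have hdb : p^(σ-1) ∣ n * p^(s-1) := ⟨n', hXKeq'⟩
  have hda : p^(ρ-1) ∣ m * p^(r-1) := by
    rw [show ρ-1 = f + (r-1) by omega, pow_add]
    exact Nat.mul_dvd_mul hfd dvd_rfl
  -- Jacobsthal congruence for the X = binom(mp^r, np^s) part
  have hjX := jacobsthal p hp hp3 (n*p^(s-1)) c (ρ-1) (min σ (2*ρ) - 1) (min σ ρ - 1)
    (by rw [hbc]; exact hda)
    (dvd_trans (pow_dvd_pow p (by omega)) hdb)
    (Nat.dvd_sub (dvd_trans (pow_dvd_pow p (by omega)) hda)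
      (dvd_trans (pow_dvd_pow p (by omega)) hdb))
    (by omega)
  rw [hbc, show m*p^(r-1)*p = m*p^r from by rw [mul_assoc, ← pow_succ, Nat.sub_add_cancel hr],
    show n*p^(s-1)*p = n*p^s from by rw [mul_assoc, ← pow_succ, Nat.sub_add_cancel hs]] at hjX
  -- Jacobsthal congruence for the Y = binom(2np^s, np^s) part
  have hjY := jacobsthal p hp hp3 (n*p^(s-1)) (n*p^(s-1)) (σ-1) (σ-1) (σ-1)
    (Nat.dvd_add hdb hdb) hdb hdb (by omega)
  rw [show (n*p^(s-1) + n*p^(s-1))*p = 2*(n*p^s) from by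
      rw [← two_mul, mul_assoc, mul_assoc, ← pow_succ, Nat.sub_add_cancel hs],
    show n*p^(s-1)*p = n*p^s from by rw [mul_assoc, ← pow_succ, Nat.sub_add_cancel hs],
    show n*p^(s-1) + n*p^(s-1) = 2*(n*p^(s-1)) from by ring] at hjY
  -- valuation bounds
  have hvX : p^(ρ-σ) ∣ Nat.choose (m*p^r) (n*p^s) :=
    pow_dvd_choose_of_dvd p hp (Nat.mul_pos hn (pow_pos hp.pos _)) hle
      (by rw [hρ, add_comm, pow_add]; exact Nat.mul_dvd_mul hfd dvd_rfl) hXKeq hnd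
  have hvX' : p^(ρ-σ) ∣ Nat.choose (m*p^(r-1)) (n*p^(s-1)) := by
    have h4 := pow_dvd_choose_of_dvd p hp (Nat.mul_pos hn (pow_pos hp.pos _)) hble
      hda hXKeq' hnd
    rwa [show (ρ-1)-(σ-1) = ρ-σ by omega] at h4
  -- pass to the integers
  rw [Nat.modEq_iff_dvd]
  push_cast
  set ZX : ℤ := (Nat.choose (m*p^r) (n*p^s) : ℤ) with hZX
  set ZX' : ℤ := (Nat.choose (m*p^(r-1)) (n*p^(s-1)) : ℤ) with hZX'
  set ZY : ℤ := (Nat.choose (2*(n*p^s)) (n*p^s) : ℤ) with hZY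
  set ZY' : ℤ := (Nat.choose (2*(n*p^(s-1))) (n*p^(s-1)) : ℤ) with hZY'
  have h1 : ((p:ℤ))^(3 + (ρ-1) + (min σ (2*ρ) - 1) + (min σ ρ - 1)) ∣ ZX' - ZX := by
    have h5 := (Nat.modEq_iff_dvd).1 hjX
    push_cast at h5
    exact h5
  have h2 : ((p:ℤ))^(3 + (σ-1) + (σ-1) + (σ-1)) ∣ ZY' - ZY := by
    have h5 := (Nat.modEq_iff_dvd).1 hjY
    push_cast at h5
    exact h5
  have h3 : ((p:ℤ))^(ρ-σ) ∣ ZX := by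
    rw [hZX]
    exact_mod_cast Int.natCast_dvd_natCast.2 hvX
  have h3' : ((p:ℤ))^(ρ-σ) ∣ ZX' := by
    rw [hZX']
    exact_mod_cast Int.natCast_dvd_natCast.2 hvX'
  rw [show ZX'^A * ZY'^B - ZX^A * ZY^B
      = ZX'^A * (ZY'^B - ZY^B) + (ZX'^A - ZX^A) * ZY^B from by ring]
  apply dvd_add
  · -- first term
    have hd1 : ((p:ℤ))^((ρ-σ)*3) ∣ ZX'^3 := by
      rw [pow_mul]
      exact pow_dvd_pow_of_dvd h3' 3
    have hd2 : ((p:ℤ))^(3 + (σ-1) + (σ-1) + (σ-1)) ∣ ZY'^B - ZY^B := by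
      have hmod : ZY ≡ ZY' [ZMOD ((p:ℤ))^(3 + (σ-1) + (σ-1) + (σ-1))] := Int.modEq_iff_dvd.2 h2
      exact Int.modEq_iff_dvd.1 (hmod.pow B)
    calc ((p:ℤ))^(3*r) ∣ ((p:ℤ))^((ρ-σ)*3) * ((p:ℤ))^(3 + (σ-1) + (σ-1) + (σ-1)) := by
          rw [← pow_add]; exact pow_dvd_pow _ (by omega)
      _ ∣ ZX'^3 * (ZY'^B - ZY^B) := mul_dvd_mul hd1 hd2
      _ ∣ ZX'^A * (ZY'^B - ZY^B) := by
          rw [show ZX'^A = ZX'^3 * ZX'^(A-3) from by rw [← pow_add]; congr 1; omega,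
            show ZX'^3 * ZX'^(A-3) * (ZY'^B - ZY^B)
              = ZX'^3 * (ZY'^B - ZY^B) * ZX'^(A-3) from by ring]
          exact dvd_mul_right _ _
  · -- second term
    have hgeom := geom_sum₂_mul ZX' ZX A
    have hgd : ((p:ℤ))^((ρ-σ)*2) ∣ ∑ i ∈ Finset.range A, ZX'^i * ZX^(A-1-i) := by
      rw [pow_mul]
      apply Finset.dvd_sum
      intro i hi
      simp only [Finset.mem_range] at hi
      exact dvd_monomial _ _ h3' h3 (by omega)
    have hd3 : ((p:ℤ))^((ρ-σ)*2) * ((p:ℤ))^(3 + (ρ-1) + (min σ (2*ρ) - 1) + (min σ ρ - 1))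
        ∣ ZX'^A - ZX^A := by
      rw [← hgeom]
      exact mul_dvd_mul hgd h1
    calc ((p:ℤ))^(3*r)
        ∣ ((p:ℤ))^((ρ-σ)*2) * ((p:ℤ))^(3 + (ρ-1) + (min σ (2*ρ) - 1) + (min σ ρ - 1)) := by
          rw [← pow_add]; exact pow_dvd_pow _ (by omega)
      _ ∣ ZX'^A - ZX^A := hd3
      _ ∣ (ZX'^A - ZX^A) * ZY^B := dvd_mul_right _ _
end

section
/- Let p > 3 be prime, B ≥ 1 natural, and m, n, r, s positive integers with s ≤ r and np^s ≤ mp^r. Then binom(mp^r, np^s)^2 · binom(2np^s, np^s)^B ≡ binom(mp^{r-1}, np^{s-1})^2 · binom(2np^{s-1}, np^{s-1})^B (mod p^{2r}). -/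
open Polynomial Finset Nat

namespace SCAux

lemma coeff_comp_C_mul_X' {R : Type*} [CommRing R] (f : R[X]) (w : R) (t : ℕ) :
    (f.comp (C w * X)).coeff t = w ^ t * f.coeff t := by
  induction f using Polynomial.induction_on' with
  | add p q hp hq => simp [add_comp, hp, hq, mul_add]
  | monomial n a =>
    simp only [monomial_comp, coeff_monomial]
    rw [mul_pow, ← C_pow]
    rw [show C a * (C (w ^ n) * X ^ n) = C (a * w ^ n) * X ^ n by
      rw [← mul_assoc, ← C_mul]]
    rw [coeff_C_mul, coeff_X_pow]
    by_cases h : t = n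
    · subst h; simp [mul_comm]
    · rw [if_neg (fun ht : n = t => h ht.symm)]; simp [h]

lemma eval_expand3' {R : Type*} [CommRing R] (f : R[X]) (c : R) :
    f.eval c = f.coeff 0 + c * (f.coeff 1 + c * (f.coeff 2 + c * (f.divX.divX.divX.eval c))) := by
  have h : ∀ g : R[X], g.eval c = g.coeff 0 + c * g.divX.eval c := by
    intro g
    conv_lhs => rw [← Polynomial.divX_mul_X_add g]
    simp only [eval_add, eval_mul, eval_X, eval_C]
    ring
  rw [h f, h f.divX, h f.divX.divX, coeff_divX, coeff_divX, coeff_divX]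

section
variable (p k : ℕ)

def Rset : Finset ℕ := (Finset.range (p^k)).filter (fun i => ¬ p ∣ i)

variable {p k}
variable (hp : p.Prime) (hk : 1 ≤ k)
include hp

lemma mem_Rset' {i : ℕ} : i ∈ Rset p k ↔ i < p^k ∧ ¬ p ∣ i := by
  simp [Rset]

include hk in
lemma Rset_inv' {i : ℕ} (hi : i ∈ Rset p k) : p^k - i ∈ Rset p k ∧ p^k - (p^k - i) = i := by
  rw [mem_Rset' hp] at hi ⊢
  have hq : p ∣ p ^ k := dvd_pow_self p (by omega)
  obtain ⟨c, hc⟩ := hq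
  have h0 : i ≠ 0 := by rintro rfl; exact hi.2 (dvd_zero p)
  have h1 : i < p ^ k := hi.1
  refine ⟨⟨by omega, fun hd => hi.2 ?_⟩, by omega⟩
  obtain ⟨d, hd⟩ := hd
  exact ⟨c - d, by rw [Nat.mul_sub]; omega⟩

lemma coprime_of_mem_Rset' {i : ℕ} (hi : i ∈ Rset p k) : i.Coprime (p^k) := by
  rw [mem_Rset' hp] at hi
  exact Nat.Coprime.pow_right _ (Nat.coprime_comm.mp ((Nat.Prime.coprime_iff_not_dvd hp).mpr hi.2))

include hk in
lemma prod_Rset_eq_units' [NeZero (p^k)] {M : Type*} [CommMonoid M] (f : ZMod (p^k) → M) :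
    ∏ i ∈ Rset p k, f (i : ZMod (p^k)) = ∏ u : (ZMod (p^k))ˣ, f u := by
  refine Finset.prod_bij (fun i hi => ZMod.unitOfCoprime i (coprime_of_mem_Rset' hp hi)) 
    (fun a ha => Finset.mem_univ _) ?_ ?_ ?_
  · intro a ha b hb hab
    have := congrArg (fun u : (ZMod (p^k))ˣ => (u : ZMod (p^k))) hab
    simp only [ZMod.coe_unitOfCoprime] at this
    have ha' := (mem_Rset' hp).mp ha
    have hb' := (mem_Rset' hp).mp hb
    have : ((a : ZMod (p^k))).val = ((b : ZMod (p^k))).val := by rw [this]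
    rwa [ZMod.val_cast_of_lt ha'.1, ZMod.val_cast_of_lt hb'.1] at this
  · intro u _
    refine ⟨(u : ZMod (p^k)).val, ?_, ?_⟩
    · rw [mem_Rset' hp]
      refine ⟨ZMod.val_lt _, fun hdvd => ?_⟩
      have hcop := ZMod.val_coe_unit_coprime u
      have hpk : p ∣ p ^ k := dvd_pow_self p (by omega)
      have : p ∣ Nat.gcd ((u : ZMod (p^k)).val) (p^k) := Nat.dvd_gcd hdvd hpk
      rw [hcop] at this
      have := Nat.le_of_dvd one_pos this
      have := hp.two_le
      omega
    · apply Units.ext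
      simp [ZMod.coe_unitOfCoprime, ZMod.natCast_val, ZMod.cast_id]
  · intro a ha
    simp [ZMod.coe_unitOfCoprime]
end

section
variable {p k : ℕ}
variable (hp : p.Prime) (hk : 1 ≤ k)
include hp hk

lemma card_Rset' : (Rset p k).card = Nat.totient (p^k) := by
  rw [Nat.totient, Rset]
  congr 1
  apply Finset.filter_congr
  intro i hi
  rw [Nat.coprime_comm, Nat.coprime_pow_right_iff (by omega : 0 < k), Nat.coprime_comm,
    Nat.Prime.coprime_iff_not_dvd hp]

lemma even_card_Rset' (hp5 : 5 ≤ p) : Even (Rset p k).card := by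
  rw [card_Rset' hp hk]
  apply Nat.totient_even
  have : p ≤ p ^ k := Nat.le_self_pow (by omega) p
  omega
end

noncomputable def Qpoly (p k : ℕ) : ℤ[X] := ∏ i ∈ Rset p k, (X + C (i:ℤ))
noncomputable def Npoly (p k : ℕ) : ℤ[X] := ∏ i ∈ Rset p k, (X - C (i:ℤ))

section
variable {p k : ℕ}
variable (hp : p.Prime) (hk : 1 ≤ k) (hp5 : 5 ≤ p)


include hp hk hp5 in
lemma neg_comp : (Npoly p k).comp (C (-1) * X) = Qpoly p k := by
  rw [Npoly, Polynomial.prod_comp]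
  have : ∀ i ∈ Rset p k, (X - C (i:ℤ)).comp (C (-1) * X) = (C (-1)) * (X + C (i:ℤ)) := by
    intro i _
    simp [sub_comp, mul_add]
    ring
  rw [Finset.prod_congr rfl this, Finset.prod_mul_distrib, Finset.prod_const, ← C_pow]
  obtain ⟨c, hc⟩ := even_card_Rset' hp hk hp5
  rw [hc, ← two_mul, pow_mul]
  norm_num [Qpoly]

include hp hk hp5 in
lemma coeff_QN (t : ℕ) : (Qpoly p k).coeff t = (-1)^t * (Npoly p k).coeff t := by
  rw [← neg_comp hp hk hp5, coeff_comp_C_mul_X']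

include hp hk in
lemma FE : (Npoly p k).comp (X + C ((p^k : ℕ):ℤ)) = Qpoly p k := by
  rw [Npoly, Polynomial.prod_comp, Qpoly]
  have step : ∀ i ∈ Rset p k, (X - C (i:ℤ)).comp (X + C ((p^k : ℕ):ℤ))
      = X + C (((p^k - i : ℕ)):ℤ) := by
    intro i hi
    have hi' := (mem_Rset' hp).mp hi
    rw [sub_comp, X_comp, C_comp]
    rw [Nat.cast_sub hi'.1.le, C_sub]
    push_cast
    ring
  rw [Finset.prod_congr rfl step]
  refine Finset.prod_nbij' (fun i => p^k - i) (fun i => p^k - i) ?_ ?_ ?_ ?_ ?_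
  · exact fun a ha => (Rset_inv' hp hk ha).1
  · exact fun a ha => (Rset_inv' hp hk ha).1
  · exact fun a ha => (Rset_inv' hp hk ha).2
  · exact fun a ha => (Rset_inv' hp hk ha).2
  · intro a ha
    rfl

include hp hk hp5 in
lemma coeff_two_dvd' : ((p^k : ℕ) : ℤ) ∣ (Qpoly p k).coeff 2 := by
  have hq1 : 1 < p ^ k := by
    have : p ≤ p ^ k := Nat.le_self_pow (by omega) p
    have := hp.two_le; omega
  haveI : NeZero (p^k) := ⟨by omega⟩
  set q := p^k with hq
  set Qb : (ZMod q)[X] := (Qpoly p k).map (Int.castRingHom (ZMod q)) with hQb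
  have hmap : Qb = ∏ i ∈ Rset p k, (X + C ((i : ℕ) : ZMod q)) := by
    rw [hQb, Qpoly, Polynomial.map_prod]
    refine Finset.prod_congr rfl fun i _ => ?_
    simp
  have h2cop : Nat.Coprime 2 q := Nat.Coprime.pow_right k
      ((Nat.coprime_primes Nat.prime_two hp).mpr (by omega))
  have h3cop : Nat.Coprime 3 q := Nat.Coprime.pow_right k
      ((Nat.coprime_primes Nat.prime_three hp).mpr (by omega))
  set u2 : (ZMod q)ˣ := ZMod.unitOfCoprime 2 h2cop with hu2
  have hu2c : (u2 : ZMod q) = (2 : ZMod q) := by simp [hu2]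
  have hcardu : Fintype.card (ZMod q)ˣ = (Rset p k).card := by
    rw [card_Rset' hp hk, ← ZMod.card_units_eq_totient]
  have hscale : Qb.comp (C (2 : ZMod q) * X) = C ((2:ZMod q)^(Rset p k).card) * Qb := by
    rw [hmap, Polynomial.prod_comp]
    have e1 : ∀ i ∈ Rset p k, (X + C ((i:ℕ) : ZMod q)).comp (C (2 : ZMod q) * X)
        = C (2 : ZMod q) * X + C ((i:ℕ) : ZMod q) := by intro i _; simp
    rw [Finset.prod_congr rfl e1]
    rw [prod_Rset_eq_units' hp hk (M := (ZMod q)[X]) (fun z => C (2 : ZMod q) * X + C z)]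
    rw [prod_Rset_eq_units' hp hk (M := (ZMod q)[X]) (fun z => X + C z)]
    calc ∏ u : (ZMod q)ˣ, (C (2:ZMod q) * X + C (u : ZMod q))
        = ∏ u : (ZMod q)ˣ, (C (2:ZMod q) * X + C ((u2 * u : (ZMod q)ˣ) : ZMod q)) := by
          exact (Equiv.prod_comp (Equiv.mulLeft u2)
            (fun u => C (2:ZMod q) * X + C ((u : (ZMod q)ˣ) : ZMod q))).symm
      _ = ∏ u : (ZMod q)ˣ, (C (2:ZMod q) * (X + C (u : ZMod q))) := by
          refine Finset.prod_congr rfl fun u _ => ?_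
          rw [Units.val_mul, hu2c, C_mul, mul_add]
      _ = C ((2:ZMod q)^(Rset p k).card) * ∏ u : (ZMod q)ˣ, (X + C (u : ZMod q)) := by
          rw [Finset.prod_mul_distrib, Finset.prod_const, ← C_pow, Finset.card_univ, hcardu]
  have hco := congrArg (fun f => f.coeff 2) hscale
  simp only [coeff_comp_C_mul_X', coeff_C_mul] at hco
  have hcard : (2:ZMod q)^(Rset p k).card = 1 := by
    have h1 := ZMod.pow_totient u2
    rw [← card_Rset' hp hk] at h1
    have h2 := congrArg (fun u : (ZMod q)ˣ => (u : ZMod q)) h1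
    simpa [hu2c] using h2
  rw [hcard, one_mul] at hco
  have h3 : (3 : ZMod q) * Qb.coeff 2 = 0 := by linear_combination hco
  have hunit3 : IsUnit (3 : ZMod q) := by
    have := (ZMod.isUnit_iff_coprime 3 q).mpr h3cop
    simpa using this
  have hc0 : Qb.coeff 2 = 0 := by
    obtain ⟨v, hv⟩ := hunit3.exists_left_inv
    calc Qb.coeff 2 = v * ((3 : ZMod q) * Qb.coeff 2) := by rw [← mul_assoc, hv, one_mul]
    _ = 0 := by rw [h3, mul_zero]
  have hfin : ((Qpoly p k).coeff 2 : ZMod q) = 0 := by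
    rw [hQb] at hc0
    rwa [Polynomial.coeff_map] at hc0
  exact_mod_cast (ZMod.intCast_zmod_eq_zero_iff_dvd _ q).mp (by exact_mod_cast hfin)

include hp hk hp5 in
lemma coeff_one_dvd' : (((p^k : ℕ) : ℤ))^2 ∣ (Qpoly p k).coeff 1 := by
  set q : ℤ := ((p^k : ℕ) : ℤ) with hqdef
  have hFE := FE hp hk (p := p) (k := k)
  have htay : (Qpoly p k).coeff 1 = (Polynomial.derivative (Npoly p k)).eval q := by
    rw [← hFE, ← Polynomial.taylor_apply, Polynomial.taylor_coeff_one]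
  set d := Polynomial.derivative (Npoly p k) with hd
  have hexp := eval_expand3' d q
  have hd0 : d.coeff 0 = (Npoly p k).coeff 1 := by
    rw [hd, Polynomial.coeff_derivative]; push_cast; ring
  have hd1 : d.coeff 1 = (Npoly p k).coeff 2 * 2 := by
    rw [hd, Polynomial.coeff_derivative]; push_cast; ring
  have hq1 : (Qpoly p k).coeff 1 = -((Npoly p k).coeff 1) := by
    rw [coeff_QN hp hk hp5]; ring
  have hq2 : (Qpoly p k).coeff 2 = (Npoly p k).coeff 2 := by
    rw [coeff_QN hp hk hp5]; ring
  obtain ⟨y, hy⟩ : q ∣ (Npoly p k).coeff 2 := by rw [← hq2]; exact coeff_two_dvd' hp hk hp5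
  have key : q^2 ∣ 2 * (Npoly p k).coeff 1 := by
    refine ⟨-(2 * y + (d.coeff 2 + q * d.divX.divX.divX.eval q)), ?_⟩
    have : -((Npoly p k).coeff 1) = (Npoly p k).coeff 1
        + q * ((Npoly p k).coeff 2 * 2 + q * (d.coeff 2 + q * (d.divX.divX.divX.eval q))) := by
      rw [← hq1, htay, hexp, hd0, hd1]
    rw [hy] at this
    linear_combination -this
  have hcop : IsCoprime (q^2) (2:ℤ) := by
    have : Nat.Coprime ((p^k)^2) 2 :=
      Nat.Coprime.pow_left _ (Nat.Coprime.pow_left _ ((Nat.coprime_primes hp Nat.prime_two).mpr (by omega)))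
    have h2 := Nat.isCoprime_iff_coprime.mpr this
    rw [hqdef]
    push_cast at h2 ⊢
    exact h2
  have := hcop.dvd_of_dvd_mul_left key
  rw [hq1]
  exact this.neg_right

def Dprod (p k : ℕ) : ℕ := ∏ i ∈ Rset p k, i

def Wp (p k a : ℕ) : ℕ := ∏ j ∈ Finset.range a, ∏ i ∈ Rset p k, (j * p^k + i)

include hp hk hp5 in
lemma block_cong' (j : ℕ) :
    ((p^(3*k) : ℕ) : ℤ) ∣ (∏ i ∈ Rset p k, ((j * p^k + i : ℕ) : ℤ)) - ((Dprod p k : ℕ) : ℤ) := by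
  set q : ℤ := ((p^k : ℕ) : ℤ) with hqdef
  set c : ℤ := (j : ℤ) * q with hcdef
  have hprod : (∏ i ∈ Rset p k, ((j * p^k + i : ℕ) : ℤ)) = (Qpoly p k).eval c := by
    rw [Qpoly, Polynomial.eval_prod]
    refine Finset.prod_congr rfl fun i _ => ?_
    rw [Polynomial.eval_add, Polynomial.eval_X, Polynomial.eval_C, hcdef, hqdef]
    push_cast
    ring
  have hq0 : (Qpoly p k).coeff 0 = ((Dprod p k : ℕ) : ℤ) := by
    rw [Polynomial.coeff_zero_eq_eval_zero, Qpoly, Polynomial.eval_prod, Dprod, Nat.cast_prod]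
    refine Finset.prod_congr rfl fun i _ => by simp
  obtain ⟨y1, hy1⟩ := coeff_one_dvd' hp hk hp5 (p := p) (k := k)
  obtain ⟨y2, hy2⟩ := coeff_two_dvd' hp hk hp5 (p := p) (k := k)
  have hexp := eval_expand3' (Qpoly p k) c
  rw [hprod]
  refine ⟨(j:ℤ) * y1 + (j:ℤ)^2 * y2 + (j:ℤ)^3 * (Qpoly p k).divX.divX.divX.eval c, ?_⟩
  have hq3 : ((p^(3*k) : ℕ) : ℤ) = q^3 := by
    rw [hqdef]; push_cast; rw [← pow_mul]; ring_nf
  rw [hexp, hq0, hy1, hy2, hq3, hcdef]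
  ring

include hp hk hp5 in
lemma Wp_cong' (a : ℕ) : Wp p k a ≡ (Dprod p k)^a [MOD p^(3*k)] := by
  induction a with
  | zero => rfl
  | succ a ih =>
    rw [Wp, Finset.prod_range_succ, pow_succ, ← Wp]
    refine Nat.ModEq.mul ih ?_
    have hdvd := block_cong' hp hk hp5 (p := p) (k := k) a
    rw [Nat.modEq_iff_dvd]
    have heq : ((Dprod p k : ℤ)) - (↑(∏ i ∈ Rset p k, (a * p ^ k + i)) : ℤ)
        = -((∏ i ∈ Rset p k, ((a * p^k + i : ℕ) : ℤ)) - ((Dprod p k : ℕ) : ℤ)) := by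
      push_cast
      ring
    rw [heq]
    exact dvd_neg.mpr hdvd

include hp hk in
lemma not_dvd_Wp' (a : ℕ) : Nat.Coprime p (Wp p k a) := by
  apply Nat.Coprime.prod_right
  intro j _
  apply Nat.Coprime.prod_right
  intro i hi
  have hi' : ¬ p ∣ i := by
    have := (Finset.mem_filter.mp hi).2
    exact this
  refine (Nat.Prime.coprime_iff_not_dvd hp).mpr fun hd => hi' ?_
  have hq : p ∣ j * p ^ k := Dvd.dvd.mul_left (dvd_pow_self p (by omega)) j
  exact (Nat.dvd_add_right hq).mp hd

end

lemma factorial_eq_prod_Ioc (N : ℕ) : N.factorial = ∏ i ∈ Ioc 0 N, i := by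
  rw [← Finset.prod_Ico_id_eq_factorial N]
  congr 1

lemma factorial_add_prod (N M : ℕ) : (N + M).factorial = N.factorial * ∏ i ∈ Ioc N (N + M), i := by
  rw [factorial_eq_prod_Ioc, factorial_eq_prod_Ioc]
  exact (Finset.prod_Ioc_consecutive _ (Nat.zero_le N) (Nat.le_add_right N M)).symm


section
variable {p k : ℕ} (hp : p.Prime) (hk : 1 ≤ k)
include hp hk

lemma fact_id' (a : ℕ) : (a * p^k).factorial
    = Wp p k a * p^(a * p^(k-1)) * (a * p^(k-1)).factorial := by
  have hp0 : 0 < p := hp.pos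
  set q' : ℕ := p^(k-1) with hq'def
  have hq : p^k = p * q' := by
    rw [hq'def, ← _root_.pow_succ']
    congr 1
    omega
  induction a with
  | zero => simp [Wp]
  | succ a ih =>
    have h1 : (a+1) * p^k = a*p^k + p^k := by ring
    have hIH := ih
    -- part 1 : non-multiples
    have part1 : ∏ i ∈ (Ioc (a*p^k) (a*p^k + p^k)).filter (fun i => ¬ p ∣ i), i
        = ∏ i' ∈ Rset p k, (a * p^k + i') := by
      refine Finset.prod_nbij' (fun i => i - a*p^k) (fun i' => a*p^k + i') ?_ ?_ ?_ ?_ ?_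
      · intro i hi
        try dsimp only
        rw [Finset.mem_filter, Finset.mem_Ioc] at hi
        rw [Rset, Finset.mem_filter, Finset.mem_range]
        obtain ⟨⟨hlo, hhi⟩, hnd⟩ := hi
        have hpk : p ∣ p^k := dvd_pow_self p (by omega)
        constructor
        · -- i - a*p^k < p^k
          rcases Nat.lt_or_ge (i - a*p^k) (p^k) with h | h
          · exact h
          · exfalso
            have : i = a*p^k + p^k := by omega
            apply hnd
            rw [this]
            exact Nat.dvd_add (Dvd.dvd.mul_left hpk a) hpk
        · intro hd
          apply hnd
          have : i = a*p^k + (i - a*p^k) := by omega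
          rw [this]
          exact Nat.dvd_add (Dvd.dvd.mul_left hpk a) hd
      · intro i' hi'
        try dsimp only
        rw [Rset, Finset.mem_filter, Finset.mem_range] at hi'
        rw [Finset.mem_filter, Finset.mem_Ioc]
        have hpk : p ∣ p^k := dvd_pow_self p (by omega)
        have h0 : i' ≠ 0 := fun h => hi'.2 (h ▸ dvd_zero p)
        refine ⟨⟨by omega, by omega⟩, fun hd => hi'.2 ?_⟩
        have := Nat.dvd_sub hd (Dvd.dvd.mul_left hpk a)
        simpa using this
      · intro i hi; (try dsimp only); rw [Finset.mem_filter, Finset.mem_Ioc] at hi; omega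
      · intro i' _; (try dsimp only); omega
      · intro i hi; (try dsimp only); rw [Finset.mem_filter, Finset.mem_Ioc] at hi; omega
    -- part 2 : multiples
    have part2 : ∏ i ∈ (Ioc (a*p^k) (a*p^k + p^k)).filter (fun i => p ∣ i), i
        = p^(q') * ∏ t ∈ Ioc (a*q') (a*q' + q'), t := by
      have e1 : ∏ i ∈ (Ioc (a*p^k) (a*p^k + p^k)).filter (fun i => p ∣ i), i
          = ∏ t ∈ Ioc (a*q') (a*q' + q'), (p * t) := by
        refine Finset.prod_nbij' (fun i => i / p) (fun t => p * t) ?_ ?_ ?_ ?_ ?_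
        · intro i hi
          rw [Finset.mem_filter, Finset.mem_Ioc] at hi
          obtain ⟨⟨hlo, hhi⟩, t, rfl⟩ := hi
          try dsimp only
          rw [Nat.mul_div_cancel_left _ hp0, Finset.mem_Ioc]
          rw [hq] at hlo hhi
          constructor
          · have : p * (a * q') < p * t := by
              calc p * (a*q') = a * (p * q') := by ring
              _ < p * t := hlo
            exact Nat.lt_of_mul_lt_mul_left this
          · have : p * t ≤ p * (a * q' + q') := by
              calc p * t ≤ a * (p * q') + p * q' := hhi
              _ = p * (a * q' + q') := by ring
            exact Nat.le_of_mul_le_mul_left this hp0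
        · intro t ht
          try dsimp only
          rw [Finset.mem_Ioc] at ht
          rw [Finset.mem_filter, Finset.mem_Ioc, hq]
          refine ⟨⟨?_, ?_⟩, Dvd.intro t rfl⟩
          · calc a * (p * q') = p * (a * q') := by ring
            _ < p * t := by
              have := ht.1
              exact Nat.mul_lt_mul_of_le_of_lt (le_refl p) this hp0
          · calc p * t ≤ p * (a * q' + q') := Nat.mul_le_mul_left p ht.2
            _ = a * (p * q') + p * q' := by ring
        · intro i hi
          try dsimp only
          rw [Finset.mem_filter] at hi
          exact Nat.mul_div_cancel' hi.2
        · intro t _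
          try dsimp only
          exact Nat.mul_div_cancel_left _ hp0
        · intro i hi
          try dsimp only
          rw [Finset.mem_filter] at hi
          exact (Nat.mul_div_cancel' hi.2).symm
      rw [e1, Finset.prod_mul_distrib, Finset.prod_const, Nat.card_Ioc]
      congr 2
      omega
    -- combine
    rw [h1, factorial_add_prod (a*p^k) (p^k)]
    rw [← Finset.prod_filter_mul_prod_filter_not (Ioc (a*p^k) (a*p^k + p^k)) (fun i => p ∣ i)
      (fun i => i)]
    have hW : Wp p k (a+1) = Wp p k a * ∏ i ∈ Rset p k, (a * p^k + i) := by
      rw [Wp, Finset.prod_range_succ, ← Wp]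
    have hfact' : ((a+1) * q').factorial = (a*q').factorial * ∏ t ∈ Ioc (a*q') (a*q'+q'), t := by
      rw [show (a+1)*q' = a*q' + q' by ring, factorial_add_prod]
    have hpow : p^((a+1) * q') = p^(a*q') * p^(q') := by
      rw [← pow_add]
      congr 1
      ring
    simp only [id] at *
    rw [part2, part1, hIH, hW, hfact', hpow]
    ring
end

section
variable {p k : ℕ} (hp : p.Prime) (hk : 1 ≤ k) (hp5 : 5 ≤ p)


include hp hk hp5 in
lemma jac' (b c : ℕ) :
    ((p : ℤ))^(3*k + (Nat.choose ((b+c) * p^(k-1)) (b * p^(k-1))).factorization p) ∣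
      ((Nat.choose ((b+c) * p^k) (b * p^k) : ℤ)
        - (Nat.choose ((b+c) * p^(k-1)) (b * p^(k-1)) : ℤ)) := by
  set G := Nat.choose ((b+c) * p^k) (b * p^k) with hG
  set g := Nat.choose ((b+c) * p^(k-1)) (b * p^(k-1)) with hg
  set t := g.factorization p with ht
  have hp0 : 0 < p := hp.pos
  -- the master equation  G * (Wp b * Wp c) = g * Wp (b+c)
  have hsub : (b+c) * p^k - b * p^k = c * p^k := by rw [Nat.add_mul]; omega
  have hsub' : (b+c) * p^(k-1) - b * p^(k-1) = c * p^(k-1) := by rw [Nat.add_mul]; omega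
  have hle : b * p^k ≤ (b+c) * p^k := Nat.mul_le_mul_right _ (by omega)
  have hle' : b * p^(k-1) ≤ (b+c) * p^(k-1) := Nat.mul_le_mul_right _ (by omega)
  have e1 : G * (b * p^k).factorial * (c * p^k).factorial = ((b+c) * p^k).factorial := by
    rw [hG, ← hsub]
    exact Nat.choose_mul_factorial_mul_factorial hle
  have e2 : g * (b * p^(k-1)).factorial * (c * p^(k-1)).factorial
      = ((b+c) * p^(k-1)).factorial := by
    rw [hg, ← hsub']
    exact Nat.choose_mul_factorial_mul_factorial hle'
  have master : G * (Wp p k b * Wp p k c) = g * Wp p k (b+c) := by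
    have E := e1
    rw [fact_id' hp hk b, fact_id' hp hk c, fact_id' hp hk (b+c), ← e2] at E
    have hpowadd : p ^ ((b+c) * p^(k-1)) = p ^ (b * p^(k-1)) * p ^ (c * p^(k-1)) := by
      rw [← pow_add]; congr 1; ring
    rw [hpowadd] at E
    -- cancel the common positive factor  p^(b q') * p^(c q') * (b q')! * (c q')!
    have hc : G * (Wp p k b * Wp p k c)
        * (p ^ (b * p^(k-1)) * p ^ (c * p^(k-1)) * ((b * p^(k-1)).factorial * (c * p^(k-1)).factorial))
        = g * Wp p k (b+c)
        * (p ^ (b * p^(k-1)) * p ^ (c * p^(k-1)) * ((b * p^(k-1)).factorial * (c * p^(k-1)).factorial)) := by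
      calc G * (Wp p k b * Wp p k c)
          * (p ^ (b * p^(k-1)) * p ^ (c * p^(k-1)) * ((b * p^(k-1)).factorial * (c * p^(k-1)).factorial))
          = G * (Wp p k b * p ^ (b * p^(k-1)) * (b * p^(k-1)).factorial)
            * (Wp p k c * p ^ (c * p^(k-1)) * (c * p^(k-1)).factorial) := by ring
        _ = g * Wp p k (b+c)
          * (p ^ (b * p^(k-1)) * p ^ (c * p^(k-1)) * ((b * p^(k-1)).factorial * (c * p^(k-1)).factorial)) := by
            rw [E]; ring
    exact Nat.eq_of_mul_eq_mul_right (by positivity) hc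
  -- W-difference divisible by p^(3k)
  have hWdiff : ((p:ℤ))^(3*k) ∣ (Wp p k (b+c) : ℤ) - (Wp p k b * Wp p k c : ℕ) := by
    have h1 := Wp_cong' hp hk hp5 (p := p) (k := k) (b+c)
    have h2 : (Wp p k b * Wp p k c) ≡ (Dprod p k)^(b+c) [MOD p^(3*k)] := by
      rw [pow_add]
      exact Nat.ModEq.mul (Wp_cong' hp hk hp5 b) (Wp_cong' hp hk hp5 c)
    have h3 := h1.trans h2.symm
    have h4 := (Nat.modEq_iff_dvd).mp h3
    have h5 : ((p:ℤ))^(3*k) ∣ ((Wp p k b * Wp p k c : ℕ) : ℤ) - (Wp p k (b+c) : ℤ) := by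
      exact_mod_cast h4
    rw [show (Wp p k (b+c) : ℤ) - ((Wp p k b * Wp p k c : ℕ) : ℤ)
      = -(((Wp p k b * Wp p k c : ℕ) : ℤ) - (Wp p k (b+c) : ℤ)) by ring]
    exact dvd_neg.mpr h5
  have hpt : (p:ℕ)^t ∣ g := Nat.ordProj_dvd g p
  have masterZ : (G:ℤ) * ((Wp p k b * Wp p k c : ℕ) : ℤ) = (g:ℤ) * (Wp p k (b+c) : ℤ) := by
    exact_mod_cast congrArg (fun x : ℕ => (x : ℤ)) master
  have key : ((p : ℤ))^(3*k + t) ∣ ((Wp p k b * Wp p k c : ℕ) : ℤ) * ((G:ℤ) - (g:ℤ)) := by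
    have halg : ((Wp p k b * Wp p k c : ℕ) : ℤ) * ((G:ℤ) - (g:ℤ))
        = (g:ℤ) * ((Wp p k (b+c) : ℤ) - ((Wp p k b * Wp p k c : ℕ) : ℤ)) := by
      linear_combination masterZ
    rw [halg, pow_add, mul_comm ((p:ℤ)^(3*k)) ((p:ℤ)^t)]
    refine mul_dvd_mul ?_ hWdiff
    exact_mod_cast Int.natCast_dvd_natCast.mpr hpt
  have hcopN : Nat.Coprime (p^(3*k+t)) (Wp p k b * Wp p k c) :=
    Nat.Coprime.pow_left _ (Nat.Coprime.mul_right (not_dvd_Wp' hp hk b) (not_dvd_Wp' hp hk c))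
  have hcop : IsCoprime (((p : ℤ))^(3*k + t)) ((Wp p k b * Wp p k c : ℕ) : ℤ) := by
    have := Nat.isCoprime_iff_coprime.mpr hcopN
    push_cast at this
    exact this
  exact hcop.dvd_of_dvd_mul_left key
end


end SCAux

open SCAux in
theorem summand_congruence_A_eq_two (p : ℕ) (hp : p.Prime) (hp3 : 3 < p)
    (B m n r s : ℕ) (hB : 1 ≤ B) (hm : 1 ≤ m) (hn : 1 ≤ n)
    (hs : 1 ≤ s) (hsr : s ≤ r) (hle : n * p ^ s ≤ m * p ^ r) :
    (Nat.choose (m * p ^ r) (n * p ^ s)) ^ 2 * (Nat.choose (2 * (n * p ^ s)) (n * p ^ s)) ^ B ≡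
      (Nat.choose (m * p ^ (r - 1)) (n * p ^ (s - 1))) ^ 2 *
        (Nat.choose (2 * (n * p ^ (s - 1))) (n * p ^ (s - 1))) ^ B [MOD p ^ (2 * r)] := by
  have hp5 : 5 ≤ p := by
    by_contra h
    push_neg at h
    interval_cases p
    · exact absurd hp (by decide)
  set a' := n.factorization p with ha'
  set b' := m.factorization p with hb'
  set n₀ := n / p ^ a' with hn₀
  set m₀ := m / p ^ b' with hm₀
  have hnfac : p ^ a' * n₀ = n := Nat.ordProj_mul_ordCompl_eq_self n p
  have hmfac : p ^ b' * m₀ = m := Nat.ordProj_mul_ordCompl_eq_self m p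
  have hn0cop : ¬ p ∣ n₀ := Nat.not_dvd_ordCompl hp (by omega)
  set S := s + a' with hS
  set A := r + b' with hA
  have hS1 : 1 ≤ S := by omega
  have hA1 : 1 ≤ A := by omega
  -- basic rewriting facts
  have hps : n * p ^ s = n₀ * p ^ S := by
    rw [← hnfac, hS, pow_add]; ring
  have hps' : n * p ^ (s-1) = n₀ * p ^ (S-1) := by
    rw [← hnfac, show S - 1 = (s-1) + a' by omega, pow_add]; ring
  have hpr : m * p ^ r = m₀ * p ^ A := by
    rw [← hmfac, hA, pow_add]; ring
  have hpr' : m * p ^ (r-1) = m₀ * p ^ (A-1) := by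
    rw [← hmfac, show A - 1 = (r-1) + b' by omega, pow_add]; ring
  set kX := min A S with hkX
  have hkX1 : 1 ≤ kX := by omega
  -- abbreviations for the four binomial coefficients
  set X := Nat.choose (m * p ^ r) (n * p ^ s) with hX
  set X' := Nat.choose (m * p ^ (r-1)) (n * p ^ (s-1)) with hX'
  set Y := Nat.choose (2 * (n * p ^ s)) (n * p ^ s) with hY
  set Y' := Nat.choose (2 * (n * p ^ (s-1))) (n * p ^ (s-1)) with hY'
  set t := X'.factorization p with ht
  set u := Y'.factorization p with hu
  -- Y congruence from jac with k = S, b = c = n₀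
  have hYjac := jac' hp hS1 hp5 n₀ n₀
  have hYid1 : (n₀ + n₀) * p ^ S = 2 * (n * p ^ s) := by rw [hps]; ring
  have hYid2 : (n₀ + n₀) * p ^ (S-1) = 2 * (n * p ^ (s-1)) := by rw [hps']; ring
  have hYid3 : n₀ * p ^ S = n * p ^ s := hps.symm
  have hYid4 : n₀ * p ^ (S-1) = n * p ^ (s-1) := hps'.symm
  rw [hYid1, hYid2, hYid3, hYid4, ← hY, ← hY', ← hu] at hYjac
  -- X congruence from jac with k = kX
  have hble : n₀ * p ^ (S - kX) ≤ m₀ * p ^ (A - kX) := by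
    have h1 : n₀ * p ^ (S - kX) * p ^ kX = n₀ * p ^ S := by
      rw [mul_assoc, ← pow_add, show S - kX + kX = S by omega]
    have h2 : m₀ * p ^ (A - kX) * p ^ kX = m₀ * p ^ A := by
      rw [mul_assoc, ← pow_add, show A - kX + kX = A by omega]
    have h3 : n₀ * p ^ S ≤ m₀ * p ^ A := by rw [← hps, ← hpr]; exact hle
    have := h3
    rw [← h1, ← h2] at this
    exact Nat.le_of_mul_le_mul_right this (by positivity)
  have hXjac := jac' hp hkX1 hp5 (n₀ * p ^ (S - kX)) (m₀ * p ^ (A - kX) - n₀ * p ^ (S - kX))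
  have hbc : n₀ * p ^ (S - kX) + (m₀ * p ^ (A - kX) - n₀ * p ^ (S - kX)) = m₀ * p ^ (A - kX) := by
    omega
  have hXid1 : (n₀ * p ^ (S - kX) + (m₀ * p ^ (A - kX) - n₀ * p ^ (S - kX))) * p ^ kX
      = m * p ^ r := by
    rw [hbc, hpr, mul_assoc, ← pow_add, show A - kX + kX = A by omega]
  have hXid2 : n₀ * p ^ (S - kX) * p ^ kX = n * p ^ s := by
    rw [hps, mul_assoc, ← pow_add, show S - kX + kX = S by omega]
  have hXid3 : (n₀ * p ^ (S - kX) + (m₀ * p ^ (A - kX) - n₀ * p ^ (S - kX))) * p ^ (kX - 1)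
      = m * p ^ (r-1) := by
    rw [hbc, hpr', mul_assoc, ← pow_add, show A - kX + (kX - 1) = A - 1 by omega]
  have hXid4 : n₀ * p ^ (S - kX) * p ^ (kX - 1) = n * p ^ (s-1) := by
    rw [hps', mul_assoc, ← pow_add, show S - kX + (kX - 1) = S - 1 by omega]
  rw [hXid1, hXid2, hXid3, hXid4, ← hX, ← hX', ← ht] at hXjac
  -- lower bound on t
  have hX'pos : 0 < X' := by
    rw [hX']
    apply Nat.choose_pos
    have h1 : n * p ^ (s-1) * p ≤ m * p ^ (r-1) * p := by
      rw [mul_assoc, mul_assoc, ← pow_succ, ← pow_succ,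
        show s - 1 + 1 = s by omega, show r - 1 + 1 = r by omega]
      exact hle
    exact Nat.le_of_mul_le_mul_right h1 (by omega)
  have htb : A ≤ t + S := by
    rcases le_or_gt A S with h | h
    · omega
    · -- A > S : use  N * choose (N-1) (K-1) = choose N K * K
      set K := n * p ^ (s-1) with hK
      set N := m * p ^ (r-1) with hN
      have hK1 : 1 ≤ K := by
        have : 0 < n * p ^ (s-1) := by positivity
        omega
      have hKN : K ≤ N := by
        have h1 : K * p ≤ N * p := by
          rw [hK, hN, mul_assoc, mul_assoc, ← pow_succ, ← pow_succ,
            show s - 1 + 1 = s by omega, show r - 1 + 1 = r by omega]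
          exact hle
        exact Nat.le_of_mul_le_mul_right h1 (by omega)
      have hid : N * Nat.choose (N-1) (K-1) = X' * K := by
        have h0 := Nat.add_one_mul_choose_eq (N-1) (K-1)
        try simp only [Nat.succ_eq_add_one] at h0
        have hKN1 : 1 ≤ N := by omega
        rw [show N - 1 + 1 = N by omega, show K - 1 + 1 = K by omega] at h0
        exact h0
      have hdvd1 : p ^ (A-1) ∣ X' * K := by
        rw [← hid]
        refine Dvd.dvd.mul_right ?_ _
        rw [hpr']
        exact ⟨m₀, mul_comm _ _⟩
      obtain ⟨w, hw⟩ := hdvd1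
      have hKval : X' * K = X' * n₀ * p ^ (S-1) := by rw [hps']; ring
      have hA1S : p ^ (A-1) = p ^ (A-S) * p ^ (S-1) := by
        rw [← pow_add]; congr 1; omega
      have hcancel : X' * n₀ = p ^ (A-S) * w := by
        have heq : X' * n₀ * p ^ (S-1) = p ^ (A-S) * w * p ^ (S-1) := by
          rw [← hKval, hw, hA1S]; ring
        exact Nat.eq_of_mul_eq_mul_right (by positivity) heq
      have hdvd2 : p ^ (A-S) ∣ X' := by
        refine Nat.Coprime.dvd_of_dvd_mul_right
          (Nat.Coprime.pow_left _ ((Nat.Prime.coprime_iff_not_dvd hp).mpr hn0cop)) ?_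
        exact ⟨w, hcancel⟩
      have := (Nat.Prime.pow_dvd_iff_le_factorization hp (by omega : X' ≠ 0)).mp hdvd2
      rw [← ht] at this
      omega
  -- final divisibility assembly over ℤ
  have hX'tz : ((p:ℤ))^t ∣ (X' : ℤ) := by
    have := Nat.ordProj_dvd X' p
    rw [← ht] at this
    exact_mod_cast Int.natCast_dvd_natCast.mpr this
  have hXtz : ((p:ℤ))^t ∣ (X : ℤ) := by
    have h1 : ((p:ℤ))^t ∣ (X:ℤ) - (X':ℤ) := dvd_trans (pow_dvd_pow _ (by omega)) hXjac
    have h2 := dvd_add h1 hX'tz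
    simpa using h2
  have hI1 : 2*r ≤ 3*kX + t + t := by omega
  have hI2 : 2*r ≤ t + t + (3*S + u) := by omega
  have d1 : ((p:ℤ))^(2*r) ∣ ((X:ℤ) - X') * ((X:ℤ) + X') * ((Y:ℤ))^B := by
    have hd1' : ((p:ℤ))^(3*kX+t) * ((p:ℤ))^t ∣ ((X:ℤ) - X') * ((X:ℤ) + X') :=
      mul_dvd_mul hXjac (dvd_add hXtz hX'tz)
    have hd1'' : ((p:ℤ))^(2*r) ∣ ((p:ℤ))^(3*kX+t) * ((p:ℤ))^t := by
      rw [← pow_add]; exact pow_dvd_pow _ (by omega)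
    exact dvd_mul_of_dvd_left (hd1''.trans hd1') _
  have d2 : ((p:ℤ))^(2*r) ∣ ((X':ℤ) * X') * (((Y:ℤ))^B - ((Y':ℤ))^B) := by
    have hY'B : ((p:ℤ))^(3*S+u) ∣ ((Y:ℤ))^B - ((Y':ℤ))^B :=
      dvd_trans hYjac (sub_dvd_pow_sub_pow _ _ B)
    have hX'2 : ((p:ℤ))^t * ((p:ℤ))^t ∣ (X':ℤ) * X' := mul_dvd_mul hX'tz hX'tz
    have hcomb : ((p:ℤ))^t * ((p:ℤ))^t * ((p:ℤ))^(3*S+u) ∣ ((X':ℤ) * X') * (((Y:ℤ))^B - ((Y':ℤ))^B) :=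
      mul_dvd_mul hX'2 hY'B
    refine dvd_trans ?_ hcomb
    rw [← pow_add, ← pow_add]
    exact pow_dvd_pow _ (by omega)
  rw [Nat.modEq_iff_dvd]
  push_cast
  have hfinal : ((X':ℤ))^2 * ((Y':ℤ))^B - ((X:ℤ))^2 * ((Y:ℤ))^B
      = -(((X:ℤ) - X') * ((X:ℤ) + X') * ((Y:ℤ))^B + ((X':ℤ) * X') * (((Y:ℤ))^B - ((Y':ℤ))^B)) := by
    ring
  rw [hfinal]
  exact dvd_neg.mpr (dvd_add d1 d2)
end

section
/- Let p > 3 be prime and A ≥ 3. Then Σ_{0 ≤ k ≤ mp^r, p ∤ k} binom(mp^r, k)^A · binom(2k,k)^B ≡ 0 (mod p^{3r}) for any positive integers m, r and natural B. -/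
lemma pow_dvd_choose_of_not_dvd (p r n k : ℕ) (hp : p.Prime) (hk : ¬ p ∣ k)
    (hkn : k ≤ n) (hn : p ^ r ∣ n) : p ^ r ∣ Nat.choose n k := by
  have hk0 : k ≠ 0 := by rintro rfl; exact hk (dvd_zero p)
  have hn0 : n ≠ 0 := by omega
  obtain ⟨n, rfl⟩ := Nat.exists_eq_succ_of_ne_zero hn0
  obtain ⟨k, rfl⟩ := Nat.exists_eq_succ_of_ne_zero hk0
  have key := Nat.add_one_mul_choose_eq n k
  have hdvd : p ^ r ∣ Nat.choose (n + 1) (k + 1) * (k + 1) := by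
    rw [← key]; exact hn.mul_right _
  have hcop : Nat.Coprime (p ^ r) (k + 1) :=
    (Nat.Prime.coprime_iff_not_dvd hp |>.mpr hk).pow_left r
  exact hcop.dvd_of_dvd_mul_right hdvd

theorem sum_not_div_vanishes (p : ℕ) (hp : p.Prime) (hp3 : 3 < p)
    (A B m r : ℕ) (hA : 3 ≤ A) (hm : 1 ≤ m) (hr : 1 ≤ r) :
    p ^ (3 * r) ∣
      ∑ k ∈ (Finset.range (m * p ^ r + 1)).filter (fun k => ¬ p ∣ k),
        (Nat.choose (m * p ^ r) k) ^ A * (Nat.choose (2 * k) k) ^ B := by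
  apply Finset.dvd_sum
  intro k hk
  simp only [Finset.mem_filter, Finset.mem_range] at hk
  obtain ⟨hklt, hkp⟩ := hk
  have h1 : p ^ r ∣ Nat.choose (m * p ^ r) k :=
    pow_dvd_choose_of_not_dvd p r _ k hp hkp (by omega) (dvd_mul_left _ _)
  have h2 : p ^ (3 * r) ∣ (Nat.choose (m * p ^ r) k) ^ A := by
    calc p ^ (3 * r) = (p ^ r) ^ 3 := by ring
    _ ∣ (Nat.choose (m * p ^ r) k) ^ 3 := pow_dvd_pow_of_dvd h1 3
    _ ∣ (Nat.choose (m * p ^ r) k) ^ A := pow_dvd_pow _ hA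
  exact h2.mul_right _
end
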